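/- arXiv:1510.00003 — 9 statements merged into one kernel-verified Lean document; each statement's English description precedes it below -/
import Mathlib

section
/- The function g has no local maximum point at which it is finite: there is no point x₀ ∈ ℝ with g(x₀) < ∞ such that g(x) ≤ g(x₀) for all x in some open neighborhood of x₀. -/
open MeasureTheory

/-- The function `g(x) = ∫ (s²+1)/(x−s)² dρ(s)`, valued in `[0,∞]`; the integrand is `+∞`
at `s = x` (since in `ENNReal`, division of a nonzero quantity by `0` yields `∞`). -/
noncomputable def gFn (ρ : Measure ℝ) (x : ℝ) : ENNReal :=
  ∫⁻ s, ENNReal.ofReal (s ^ 2 + 1) / ENNReal.ofReal ((x - s) ^ 2) ∂ρ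



/-- Lower bound for the singular integral over a small interval adjacent to `s`. -/
lemma lint_lb_aux {a b s η : ℝ} (hη : 0 < η) (hab : a < b) (hba : b - a = η)
    (hsub : ∀ τ ∈ Set.Ioo a b, (τ - s) ^ 2 ≤ η ^ 2) :
    ENNReal.ofReal η⁻¹ ≤ ∫⁻ τ in Set.Ioo a b, (ENNReal.ofReal ((τ - s) ^ 2))⁻¹ := by
  have h1 : ENNReal.ofReal η⁻¹ = (ENNReal.ofReal (η ^ 2))⁻¹ * ENNReal.ofReal η := by
    rw [← ENNReal.div_eq_inv_mul, ← ENNReal.ofReal_div_of_pos (by positivity)]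
    congr 1
    rw [sq]
    field_simp
  have h2 : (ENNReal.ofReal (η ^ 2))⁻¹ * ENNReal.ofReal η
      = ∫⁻ _ in Set.Ioo a b, (ENNReal.ofReal (η ^ 2))⁻¹ := by
    rw [setLIntegral_const, Real.volume_Ioo, hba]
  rw [h1, h2]
  refine setLIntegral_mono' measurableSet_Ioo fun τ hτ => ?_
  exact ENNReal.inv_le_inv.2 (ENNReal.ofReal_le_ofReal (hsub τ hτ))

/-- The integral of `1/(τ-s)²` over an interval whose closure contains `s` diverges. -/
lemma lint_inv_sq_top {a b s : ℝ} (hab : a < b) (hs : s ∈ Set.Icc a b) :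
    ∫⁻ τ in Set.Ioo a b, (ENNReal.ofReal ((τ - s) ^ 2))⁻¹ = ⊤ := by
  apply ENNReal.eq_top_of_forall_nnreal_le
  intro r
  have hr : ∀ η : ℝ, 0 < η → η ≤ ((r : ℝ) + 1)⁻¹ → (r : ENNReal) ≤ ENNReal.ofReal η⁻¹ := by
    intro η hη hle
    rw [← ENNReal.ofReal_coe_nnreal]
    apply ENNReal.ofReal_le_ofReal
    have h1 : ((r : ℝ) + 1) ≤ η⁻¹ := by
      rw [← inv_inv ((r : ℝ) + 1)]
      exact inv_anti₀ hη hle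
    linarith
  rcases lt_or_eq_of_le hs.2 with hsb | hsb
  · -- s < b : use the interval (s, s+η)
    set η : ℝ := min (b - s) ((r : ℝ) + 1)⁻¹ with hηdef
    have hη : 0 < η := lt_min (by linarith) (by positivity)
    have hmono : ∫⁻ τ in Set.Ioo s (s + η), (ENNReal.ofReal ((τ - s) ^ 2))⁻¹
        ≤ ∫⁻ τ in Set.Ioo a b, (ENNReal.ofReal ((τ - s) ^ 2))⁻¹ := by
      apply lintegral_mono_set
      intro τ hτ
      have h2 := min_le_left (b - s) ((r : ℝ) + 1)⁻¹
      exact ⟨lt_of_le_of_lt hs.1 hτ.1, by have := hτ.2; simp only [hηdef] at this ⊢; linarith⟩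
    refine le_trans (hr η hη (min_le_right _ _)) (le_trans ?_ hmono)
    apply lint_lb_aux hη (by linarith) (by ring)
    intro τ hτ
    nlinarith [hτ.1, hτ.2]
  · -- s = b : use the interval (s-η, s)
    have hsa : a < s := hsb ▸ hab
    set η : ℝ := min (s - a) ((r : ℝ) + 1)⁻¹ with hηdef
    have hη : 0 < η := lt_min (by linarith) (by positivity)
    have hmono : ∫⁻ τ in Set.Ioo (s - η) s, (ENNReal.ofReal ((τ - s) ^ 2))⁻¹
        ≤ ∫⁻ τ in Set.Ioo a b, (ENNReal.ofReal ((τ - s) ^ 2))⁻¹ := by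
      apply lintegral_mono_set
      intro τ hτ
      have h2 := min_le_left (s - a) ((r : ℝ) + 1)⁻¹
      refine ⟨by have := hτ.1; simp only [hηdef] at this ⊢; linarith, ?_⟩
      have := hτ.2; linarith [hsb ▸ this]
    refine le_trans (hr η hη (min_le_right _ _)) (le_trans ?_ hmono)
    apply lint_lb_aux hη (by linarith) (by ring)
    intro τ hτ
    nlinarith [hτ.1, hτ.2]

/-- Exact value of the integral of `1/(τ-s)²` over an interval avoiding `s`. -/
lemma lint_inv_sq_off {a b s : ℝ} (hab : a < b) (hs : s < a ∨ b < s) :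
    ∫⁻ τ in Set.Ioo a b, (ENNReal.ofReal ((τ - s) ^ 2))⁻¹
      = ENNReal.ofReal ((a - s)⁻¹ - (b - s)⁻¹) := by
  have hne : ∀ τ ∈ Set.Icc a b, (τ - s) ≠ 0 := by
    intro τ hτ
    rcases hs with h | h
    · have := hτ.1; intro hc; nlinarith
    · have := hτ.2; intro hc; nlinarith
  have hcong : ∫⁻ τ in Set.Ioo a b, (ENNReal.ofReal ((τ - s) ^ 2))⁻¹
      = ∫⁻ τ in Set.Ioo a b, ENNReal.ofReal (((τ - s) ^ 2)⁻¹) := by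
    refine setLIntegral_congr_fun measurableSet_Ioo (fun τ hτ => ?_)
    rw [ENNReal.ofReal_inv_of_pos]
    have := hne τ (Set.Ioo_subset_Icc_self hτ)
    positivity
  rw [hcong]
  have hint : IntegrableOn (fun τ => ((τ - s) ^ 2)⁻¹) (Set.Ioo a b) volume := by
    apply IntegrableOn.mono_set _ Set.Ioo_subset_Icc_self
    apply ContinuousOn.integrableOn_Icc
    apply ContinuousOn.inv₀
    · fun_prop
    · intro τ hτ
      have := hne τ hτ
      positivity
  rw [← ofReal_integral_eq_lintegral_ofReal hint
    (Filter.Eventually.of_forall fun τ => by positivity)]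
  congr 1
  have h1 : ∫ τ in Set.Ioo a b, ((τ - s) ^ 2)⁻¹ = ∫ τ in a..b, ((τ - s) ^ 2)⁻¹ := by
    rw [intervalIntegral.integral_of_le hab.le, integral_Ioc_eq_integral_Ioo]
  rw [h1]
  have h2 : ∀ x : ℝ, ((x - s) ^ 2)⁻¹ = (x - s) ^ (-2 : ℤ) := by
    intro x
    rw [zpow_neg, zpow_two, sq]
  simp_rw [h2]
  rw [intervalIntegral.integral_comp_sub_right (fun x => x ^ (-2 : ℤ)) s]
  rw [integral_zpow]
  · norm_num
    ring
  · right
    constructor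
    · norm_num
    · rw [Set.uIcc_of_le (by linarith)]
      intro hc
      rcases hs with h | h
      · have := hc.1; simp at this; linarith
      · have := hc.2; simp at this; linarith


/-- `g` has no local maximum point at which it is finite. -/
theorem g_no_finite_local_max (ρ : Measure ℝ) [IsFiniteMeasure ρ] (hρ : ρ ≠ 0)
    (K : Set ℝ) (hK : IsCompact K) (hρK : ρ Kᶜ = 0) :
    ¬ ∃ x₀ : ℝ, gFn ρ x₀ < ⊤ ∧
      ∃ U : Set ℝ, IsOpen U ∧ x₀ ∈ U ∧ ∀ x ∈ U, gFn ρ x ≤ gFn ρ x₀ := by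
  rintro ⟨x₀, hfin, U, hU, hxU, hmax⟩
  obtain ⟨ε, hε, hball⟩ := Metric.isOpen_iff.1 hU x₀ hxU
  set t : ℝ := ε / 2 with ht_def
  have ht : 0 < t := by positivity
  set a : ℝ := x₀ - t with ha_def
  set b : ℝ := x₀ + t with hb_def
  have hab : a < b := by simp [ha_def, hb_def]; linarith
  have hsub : Set.Ioo a b ⊆ U := by
    intro x hx
    apply hball
    rw [Real.ball_eq_Ioo]
    exact ⟨by have := hx.1; simp only [ha_def] at this; simp; linarith,
      by have := hx.2; simp only [hb_def] at this; simp; linarith⟩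
  set F : ℝ → ℝ → ENNReal := fun τ s =>
    ENNReal.ofReal (s ^ 2 + 1) / ENNReal.ofReal ((τ - s) ^ 2) with hF_def
  have hFmeas : Measurable (Function.uncurry F) := by
    apply Measurable.div
    · fun_prop
    · fun_prop
  have hFs : ∀ x, Measurable (fun s => F x s) := by
    intro x
    apply Measurable.div <;> fun_prop
  -- upper bound
  have h1 : ∫⁻ τ in Set.Ioo a b, gFn ρ τ ≤ ENNReal.ofReal (b - a) * gFn ρ x₀ := by
    calc ∫⁻ τ in Set.Ioo a b, gFn ρ τ
        ≤ ∫⁻ _ in Set.Ioo a b, gFn ρ x₀ :=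
          setLIntegral_mono' measurableSet_Ioo fun τ hτ => hmax τ (hsub hτ)
      _ = ENNReal.ofReal (b - a) * gFn ρ x₀ := by
          rw [setLIntegral_const, Real.volume_Ioo, mul_comm]
  -- Tonelli
  have h2 : ∫⁻ τ in Set.Ioo a b, gFn ρ τ
      = ∫⁻ s, (∫⁻ τ in Set.Ioo a b, F τ s) ∂ρ := by
    exact lintegral_lintegral_swap hFmeas.aemeasurable
  -- strict lower bound
  have h3 : ENNReal.ofReal (b - a) * gFn ρ x₀
      < ∫⁻ s, (∫⁻ τ in Set.Ioo a b, F τ s) ∂ρ := by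
    have hLHS : ENNReal.ofReal (b - a) * gFn ρ x₀
        = ∫⁻ s, ENNReal.ofReal (b - a) * F x₀ s ∂ρ := by
      rw [lintegral_const_mul _ (hFs x₀)]
      rfl
    rw [hLHS]
    apply lintegral_strict_mono hρ
    · exact (hFmeas.lintegral_prod_left).aemeasurable
    · rw [← hLHS]
      exact ENNReal.mul_ne_top ENNReal.ofReal_ne_top hfin.ne
    · have hae : ∀ᵐ s ∂ρ, F x₀ s < ⊤ := by
        apply ae_lt_top (hFs x₀)
        exact hfin.ne
      filter_upwards [hae] with s hs_lt
      -- pointwise strict inequality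
      have hc0 : ENNReal.ofReal (s ^ 2 + 1) ≠ 0 := by
        simp only [ne_eq, ENNReal.ofReal_eq_zero, not_le]
        positivity
      have hu : x₀ - s ≠ 0 := by
        intro h
        rw [hF_def] at hs_lt
        simp only [h] at hs_lt
        rw [show ((0:ℝ))^2 = 0 by norm_num, ENNReal.ofReal_zero,
          ENNReal.div_zero hc0] at hs_lt
        exact absurd hs_lt (lt_irrefl _)
      have hrw : ∫⁻ τ in Set.Ioo a b, F τ s
          = ENNReal.ofReal (s ^ 2 + 1) *
            ∫⁻ τ in Set.Ioo a b, (ENNReal.ofReal ((τ - s) ^ 2))⁻¹ := by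
        simp_rw [hF_def, div_eq_mul_inv]
        rw [lintegral_const_mul]
        fun_prop
      by_cases hmem : s ∈ Set.Icc a b
      · rw [hrw, lint_inv_sq_top hab hmem, ENNReal.mul_top hc0]
        exact lt_of_lt_of_le (ENNReal.mul_lt_top ENNReal.ofReal_lt_top hs_lt) le_top
      · have hs' : s < a ∨ b < s := by
          rw [Set.mem_Icc, not_and_or] at hmem
          rcases hmem with h | h
          · left; exact not_le.1 h
          · right; exact not_le.1 h
        rw [hrw, lint_inv_sq_off hab hs']
        have hLHS2 : ENNReal.ofReal (b - a) * F x₀ s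
            = ENNReal.ofReal (s ^ 2 + 1) * ENNReal.ofReal ((b - a) / (x₀ - s) ^ 2) := by
          rw [hF_def]
          rw [ENNReal.ofReal_div_of_pos (by positivity)]
          simp only [div_eq_mul_inv]
          ring
        rw [hLHS2]
        rw [ENNReal.mul_lt_mul_iff_right hc0 ENNReal.ofReal_ne_top]
        have hu2 : t ^ 2 < (x₀ - s) ^ 2 := by
          rcases hs' with h | h
          · simp only [ha_def] at h; nlinarith
          · simp only [hb_def] at h; nlinarith
        have h3 : a - s = (x₀ - s) - t := by rw [ha_def]; ring
        have h4 : b - s = (x₀ - s) + t := by rw [hb_def]; ring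
        have h5 : b - a = 2 * t := by rw [ha_def, hb_def]; ring
        have hne1 : (x₀ - s) - t ≠ 0 := by intro h; nlinarith
        have hne2 : (x₀ - s) + t ≠ 0 := by intro h; nlinarith
        have hne3 : (x₀ - s) ^ 2 - t ^ 2 ≠ 0 := by nlinarith
        have hfact : (a - s)⁻¹ - (b - s)⁻¹ = (b - a) / ((x₀ - s) ^ 2 - t ^ 2) := by
          rw [h3, h4, h5]
          field_simp
          ring
        rw [hfact]
        apply ENNReal.ofReal_lt_ofReal_iff_of_nonneg
            (div_nonneg (by rw [h5]; linarith) (by positivity)) |>.2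
        apply div_lt_div_of_pos_left
        · rw [h5]; linarith
        · nlinarith
        · nlinarith
  rw [h2] at h1
  exact absurd h1 (not_le.2 h3)
end

section
/- The family {V_t⁺}_{t>1} is continuous in the Hausdorff metric: for every t > 1 and every ε > 0 there exists δ > 0 such that for all r > 1 with |r − t| < δ, the set V_r⁺ is contained in the open ε-thickening {x ∈ ℝ : ∃ y ∈ V_t⁺, |x − y| < ε} of V_t⁺, and V_t⁺ is contained in the open ε-thickening of V_r⁺. -/
open MeasureTheory

/-- The set `V_t⁺ = {x ∈ ℝ : g(x) > 1/(t−1)}`. -/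
def Vplus (ρ : Measure ℝ) (t : ℝ) : Set ℝ :=
  {x : ℝ | ENNReal.ofReal (1 / (t - 1)) < gFn ρ x}

/-- The open `ε`-thickening of a set `A ⊆ ℝ`. -/
def thick (ε : ℝ) (A : Set ℝ) : Set ℝ :=
  {x : ℝ | ∃ y ∈ A, |x - y| < ε}

open Set
open scoped ENNReal

noncomputable def fInt (x s : ℝ) : ENNReal :=
  ENNReal.ofReal (s ^ 2 + 1) / ENNReal.ofReal ((x - s) ^ 2)

lemma div_diverge (s b : ℝ) (hb : 0 < b) :
    ∫⁻ y in Metric.ball s b, (ENNReal.ofReal ((y - s) ^ 2))⁻¹ = ⊤ := by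
  by_contra h
  set C := ∫⁻ y in Metric.ball s b, (ENNReal.ofReal ((y - s) ^ 2))⁻¹ with hC
  set d := min b (1 / (C.toReal + 1)) with hd
  have hCnn : 0 ≤ C.toReal := ENNReal.toReal_nonneg
  have hdpos : 0 < d := lt_min hb (by positivity)
  have hdb : d ≤ b := min_le_left _ _
  have key : ENNReal.ofReal (1 / d) ≤ C := by
    have e1 : ENNReal.ofReal (1 / d) = (ENNReal.ofReal (d ^ 2))⁻¹ * volume (Ioo s (s + d)) := by
      rw [Real.volume_Ioo, add_sub_cancel_left, ← ENNReal.div_eq_inv_mul,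
        ← ENNReal.ofReal_div_of_pos (by positivity)]
      congr 1
      field_simp
    rw [e1]
    calc (ENNReal.ofReal (d ^ 2))⁻¹ * volume (Ioo s (s + d))
        = ∫⁻ _ in Ioo s (s + d), (ENNReal.ofReal (d ^ 2))⁻¹ := (setLIntegral_const _ _).symm
      _ ≤ ∫⁻ y in Ioo s (s + d), (ENNReal.ofReal ((y - s) ^ 2))⁻¹ := by
          refine setLIntegral_mono (by fun_prop) fun y hy => ?_
          apply ENNReal.inv_le_inv'
          apply ENNReal.ofReal_le_ofReal
          nlinarith [hy.1, hy.2]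
      _ ≤ C := by
          apply lintegral_mono_set
          intro y hy
          simp only [Metric.mem_ball, Real.dist_eq]
          rw [abs_of_pos (by linarith [hy.1])]
          linarith [hy.2]
  have hlt : C < ENNReal.ofReal (1 / d) := by
    have h1d : C.toReal + 1 ≤ 1 / d := by
      have : d ≤ 1 / (C.toReal + 1) := min_le_right _ _
      rw [le_div_iff₀ (by positivity)] at this ⊢
      linarith [mul_comm d (C.toReal + 1)]
    calc C = ENNReal.ofReal C.toReal := (ENNReal.ofReal_toReal h).symm
      _ < ENNReal.ofReal (1 / d) := by
          exact (ENNReal.ofReal_lt_ofReal_iff_of_nonneg ENNReal.toReal_nonneg).mpr (by linarith)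
  exact absurd key (not_le.mpr hlt)

lemma fInt_meas2 : Measurable (fun p : ℝ × ℝ => fInt p.1 p.2) := by
  apply Measurable.div
  · exact ENNReal.measurable_ofReal.comp (by fun_prop)
  · exact ENNReal.measurable_ofReal.comp (by fun_prop)

lemma fInt_meas_in_y (s : ℝ) : Measurable (fun y : ℝ => fInt y s) := by
  unfold fInt
  exact (ENNReal.measurable_ofReal.comp (by fun_prop)).div
    (ENNReal.measurable_ofReal.comp (by fun_prop))

lemma mass_zero (ρ : Measure ℝ) [IsFiniteMeasure ρ] (x η C : ℝ) (hη : 0 < η)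
    (hbdd : ∀ y ∈ Metric.ball x η, (∫⁻ s, fInt y s ∂ρ) ≤ ENNReal.ofReal C) :
    ρ (Metric.closedBall x (η / 2)) = 0 := by
  by_contra hm
  have hfin : ∫⁻ y in Metric.ball x η, ∫⁻ s, fInt y s ∂ρ ∂volume < ⊤ := by
    calc ∫⁻ y in Metric.ball x η, ∫⁻ s, fInt y s ∂ρ ∂volume
        ≤ ∫⁻ _ in Metric.ball x η, ENNReal.ofReal C ∂volume :=
          setLIntegral_mono measurable_const fun y hy => hbdd y hy
      _ = ENNReal.ofReal C * volume (Metric.ball x η) := setLIntegral_const _ _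
      _ < ⊤ := ENNReal.mul_lt_top ENNReal.ofReal_lt_top measure_ball_lt_top
  have hswap : ∫⁻ y in Metric.ball x η, ∫⁻ s, fInt y s ∂ρ ∂volume
      = ∫⁻ s, (∫⁻ y in Metric.ball x η, fInt y s ∂volume) ∂ρ := by
    apply lintegral_lintegral_swap
    exact fInt_meas2.aemeasurable
  have hinner : ∀ s ∈ Metric.closedBall x (η / 2),
      (∫⁻ y in Metric.ball x η, fInt y s ∂volume) = ⊤ := by
    intro s hs
    rw [eq_top_iff, ← div_diverge s (η / 2) (by positivity)]
    calc ∫⁻ y in Metric.ball s (η / 2), (ENNReal.ofReal ((y - s) ^ 2))⁻¹ ∂volume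
        ≤ ∫⁻ y in Metric.ball s (η / 2), fInt y s ∂volume := by
          refine setLIntegral_mono (fInt_meas_in_y s) fun y _ => ?_
          rw [fInt, ← one_div]
          refine ENNReal.div_le_div_right ?_ _
          exact ENNReal.one_le_ofReal.mpr (by nlinarith [sq_nonneg s])
      _ ≤ ∫⁻ y in Metric.ball x η, fInt y s ∂volume := by
          apply lintegral_mono_set
          apply Metric.ball_subset_ball'
          have := Metric.mem_closedBall.mp hs
          linarith [dist_comm s x ▸ this]
  have htop : (⊤ : ℝ≥0∞) ≤ ∫⁻ s, (∫⁻ y in Metric.ball x η, fInt y s ∂volume) ∂ρ := by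
    calc (⊤ : ℝ≥0∞) = ⊤ * ρ (Metric.closedBall x (η / 2)) := (ENNReal.top_mul hm).symm
      _ = ∫⁻ _ in Metric.closedBall x (η / 2), ⊤ ∂ρ := (setLIntegral_const _ _).symm
      _ = ∫⁻ s in Metric.closedBall x (η / 2), ∫⁻ y in Metric.ball x η, fInt y s ∂volume ∂ρ := by
          refine setLIntegral_congr_fun measurableSet_closedBall ?_
          exact fun s hs => (hinner s hs).symm
      _ ≤ ∫⁻ s, (∫⁻ y in Metric.ball x η, fInt y s ∂volume) ∂ρ := setLIntegral_le_lintegral _ _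
  rw [hswap] at hfin
  exact absurd (hfin.trans_le htop) (lt_irrefl _)

lemma fInt_meas (x : ℝ) : Measurable (fInt x) := by
  unfold fInt
  exact (ENNReal.measurable_ofReal.comp (by fun_prop)).div
    (ENNReal.measurable_ofReal.comp (by fun_prop))

lemma fInt_eq_ofReal {x s : ℝ} (h : (x - s) ^ 2 ≠ 0) :
    fInt x s = ENNReal.ofReal ((s ^ 2 + 1) / (x - s) ^ 2) := by
  rw [fInt, ENNReal.ofReal_div_of_pos (lt_of_le_of_ne (sq_nonneg _) (Ne.symm h))]

lemma real_ineq (c u a L : ℝ) (hc : 1 ≤ c) (ha : 0 < a) (h1 : 2 * a ≤ |u|) (h2 : |u| ≤ L) :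
    c / u ^ 2 + a ^ 4 / L ^ 6 ≤ (c / (u - a) ^ 2 + c / (u + a) ^ 2) / 2 := by
  have hL : 0 < L := lt_of_lt_of_le (by linarith) (h1.trans h2)
  have hu2 : 4 * a ^ 2 ≤ u ^ 2 := by nlinarith [sq_abs u, abs_nonneg u]
  have huL : u ^ 2 ≤ L ^ 2 := by nlinarith [sq_abs u, abs_nonneg u]
  have hu0 : 0 < u ^ 2 := by nlinarith
  have hm : 0 < (u - a) ^ 2 := by nlinarith [sq_abs u, abs_nonneg u, sq_nonneg (u - a), sq_nonneg (u + a)]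
  have hp : 0 < (u + a) ^ 2 := by nlinarith [sq_abs u, abs_nonneg u, sq_nonneg (u - a), sq_nonneg (u + a)]
  have key : (c / (u - a) ^ 2 + c / (u + a) ^ 2) / 2 - c / u ^ 2
      = c * (3 * u ^ 2 * a ^ 2 - a ^ 4) / (u ^ 2 * ((u - a) ^ 2 * (u + a) ^ 2)) := by
    have hu' : u ≠ 0 := fun h => by rw [h] at hu0; simp at hu0
    have hma : u - a ≠ 0 := fun h => by rw [h] at hm; simp at hm
    have hpa : u + a ≠ 0 := fun h => by rw [h] at hp; simp at hp
    field_simp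
    ring
  have hden : u ^ 2 * ((u - a) ^ 2 * (u + a) ^ 2) ≤ L ^ 6 := by
    have e : (u - a) ^ 2 * (u + a) ^ 2 = (u ^ 2 - a ^ 2) ^ 2 := by ring
    have h3 : (u ^ 2 - a ^ 2) ^ 2 ≤ (L ^ 2) ^ 2 := by nlinarith
    calc u ^ 2 * ((u - a) ^ 2 * (u + a) ^ 2) ≤ L ^ 2 * ((u ^ 2 - a ^ 2) ^ 2) := by
          rw [e]; apply mul_le_mul_of_nonneg_right huL (by positivity)
      _ ≤ L ^ 2 * (L ^ 2) ^ 2 := by nlinarith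
      _ = L ^ 6 := by ring
  have hgap : a ^ 4 / L ^ 6 ≤ c * (3 * u ^ 2 * a ^ 2 - a ^ 4) / (u ^ 2 * ((u - a) ^ 2 * (u + a) ^ 2)) := by
    rw [div_le_div_iff₀ (by positivity) (by positivity)]
    have h12 : 3 * a ^ 2 * (4 * a ^ 2) ≤ 3 * a ^ 2 * u ^ 2 :=
      mul_le_mul_of_nonneg_left hu2 (by positivity)
    have hpos : (0 : ℝ) ≤ 3 * u ^ 2 * a ^ 2 - a ^ 4 := by nlinarith
    have hnum : a ^ 4 ≤ c * (3 * u ^ 2 * a ^ 2 - a ^ 4) := by nlinarith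
    calc a ^ 4 * (u ^ 2 * ((u - a) ^ 2 * (u + a) ^ 2)) ≤ a ^ 4 * L ^ 6 :=
          mul_le_mul_of_nonneg_left hden (by positivity)
      _ ≤ c * (3 * u ^ 2 * a ^ 2 - a ^ 4) * L ^ 6 :=
          mul_le_mul_of_nonneg_right hnum (by positivity)
  linarith

lemma ptwise (x s a L : ℝ) (ha : 0 < a) (h1 : 2 * a ≤ |x - s|) (h2 : |x - s| ≤ L) :
    fInt x s + ENNReal.ofReal (a ^ 4 / L ^ 6) ≤ (fInt (x - a) s + fInt (x + a) s) / 2 := by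
  have habs : 0 < |x - s| := by linarith
  have hd0 : (x - s) ^ 2 ≠ 0 := by
    intro h
    rw [pow_eq_zero_iff (by norm_num)] at h
    simp [h] at habs
  have hdm : (x - a - s) ^ 2 ≠ 0 := by
    intro h
    rw [pow_eq_zero_iff (by norm_num)] at h
    have : |x - s| ≤ a := by
      have e : x - s = (x - a - s) + a := by ring
      rw [e, h]
      simpa using le_of_eq (abs_of_pos ha)
    linarith
  have hdp : (x + a - s) ^ 2 ≠ 0 := by
    intro h
    rw [pow_eq_zero_iff (by norm_num)] at h
    have : |x - s| ≤ a := by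
      have e : x - s = (x + a - s) - a := by ring
      rw [e, h]
      simpa using le_of_eq (abs_of_pos ha)
    linarith
  rw [fInt_eq_ofReal hd0, fInt_eq_ofReal hdm, fInt_eq_ofReal hdp,
    ← ENNReal.ofReal_add (by positivity) (by positivity),
    ← ENNReal.ofReal_add (by positivity) (by positivity),
    show ((2 : ENNReal)) = ENNReal.ofReal 2 from (ENNReal.ofReal_ofNat 2).symm,
    ← ENNReal.ofReal_div_of_pos two_pos]
  apply ENNReal.ofReal_le_ofReal
  have hc : (1 : ℝ) ≤ s ^ 2 + 1 := by nlinarith [sq_nonneg s]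
  have := real_ineq (s ^ 2 + 1) (x - s) a L hc ha h1 h2
  rw [show x - a - s = (x - s) - a from by ring, show x + a - s = (x - s) + a from by ring]
  exact this

lemma gap_integrated (ρ : Measure ℝ) [IsFiniteMeasure ρ] (x a L : ℝ) (ha : 0 < a)
    (hae : ∀ᵐ s ∂ρ, 2 * a ≤ |x - s| ∧ |x - s| ≤ L) :
    (∫⁻ s, fInt x s ∂ρ) + ENNReal.ofReal (a ^ 4 / L ^ 6) * ρ univ
      ≤ ((∫⁻ s, fInt (x - a) s ∂ρ) + (∫⁻ s, fInt (x + a) s ∂ρ)) / 2 := by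
  have lhs : (∫⁻ s, fInt x s ∂ρ) + ENNReal.ofReal (a ^ 4 / L ^ 6) * ρ univ
      = ∫⁻ s, (fInt x s + ENNReal.ofReal (a ^ 4 / L ^ 6)) ∂ρ := by
    rw [lintegral_add_right _ measurable_const, lintegral_const]
  have rhs : ((∫⁻ s, fInt (x - a) s ∂ρ) + (∫⁻ s, fInt (x + a) s ∂ρ)) / 2
      = ∫⁻ s, (fInt (x - a) s + fInt (x + a) s) / 2 ∂ρ := by
    simp_rw [div_eq_mul_inv]
    rw [lintegral_mul_const' _ _ (by simp), lintegral_add_left (fInt_meas _)]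
  rw [lhs, rhs]
  exact lintegral_mono_ae (hae.mono fun s hs => ptwise x s a L ha hs.1 hs.2)

lemma gFn_eq (ρ : Measure ℝ) (x : ℝ) : gFn ρ x = ∫⁻ s, fInt x s ∂ρ := rfl

lemma Vplus_bound (ρ : Measure ℝ) [IsFiniteMeasure ρ] (K : Set ℝ) (hρK : ρ Kᶜ = 0)
    (R : ℝ) (hR : ∀ s ∈ K, |s| ≤ R) (t : ℝ) (ht : 1 < t) :
    ∃ B : ℝ, 0 < B ∧ ∀ r : ℝ, 1 < r → r ≤ t + 1 → Vplus ρ r ⊆ Icc (-B) B := by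
  set P := (ρ univ).toReal with hP
  have hPnn : 0 ≤ P := ENNReal.toReal_nonneg
  set D := t * (R ^ 2 + 1) * P + 1 with hD
  have hD1 : 1 ≤ D := by nlinarith [sq_nonneg R, mul_nonneg (mul_nonneg (le_of_lt (lt_trans one_pos ht)) (by positivity : (0:ℝ) ≤ R ^ 2 + 1)) hPnn]
  refine ⟨|R| + D, by positivity, ?_⟩
  intro r hr hrt x hx
  by_contra hxI
  have hxgt : |R| + D < |x| := by
    simp only [mem_Icc, not_and_or, not_le] at hxI
    rcases hxI with h | h
    · rw [abs_of_neg (by linarith [abs_nonneg R] : x < 0)]; linarith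
    · rw [abs_of_pos (by linarith [abs_nonneg R] : 0 < x)]; linarith
  have haeK : ∀ᵐ s ∂ρ, s ∈ K := by
    rw [Filter.eventually_iff, mem_ae_iff]
    simpa using hρK
  have hg : gFn ρ x ≤ ENNReal.ofReal ((R ^ 2 + 1) / D ^ 2 * P) := by
    rw [gFn_eq]
    calc ∫⁻ s, fInt x s ∂ρ ≤ ∫⁻ _, ENNReal.ofReal ((R ^ 2 + 1) / D ^ 2) ∂ρ := by
          refine lintegral_mono_ae (haeK.mono fun s hs => ?_)
          have hsR : |s| ≤ R := hR s hs
          have hxs : D ≤ |x - s| := by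
            have := abs_sub_abs_le_abs_sub x s
            have hRR : R ≤ |R| := le_abs_self R
            linarith
          have hxs2 : D ^ 2 ≤ (x - s) ^ 2 := by
            rw [← sq_abs (x - s)]
            exact pow_le_pow_left₀ (by linarith) hxs 2
          have hd0 : (x - s) ^ 2 ≠ 0 := by nlinarith
          rw [fInt_eq_ofReal hd0]
          apply ENNReal.ofReal_le_ofReal
          have hs2 : s ^ 2 + 1 ≤ R ^ 2 + 1 := by nlinarith [sq_abs s, sq_abs R, abs_nonneg s]
          calc (s ^ 2 + 1) / (x - s) ^ 2 ≤ (s ^ 2 + 1) / D ^ 2 := by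
                apply div_le_div_of_nonneg_left (by positivity) (by positivity) hxs2
            _ ≤ (R ^ 2 + 1) / D ^ 2 := by
                apply div_le_div_of_nonneg_right hs2 (by positivity)
      _ = ENNReal.ofReal ((R ^ 2 + 1) / D ^ 2) * ρ univ := lintegral_const _
      _ = ENNReal.ofReal ((R ^ 2 + 1) / D ^ 2 * P) := by
          rw [← ENNReal.ofReal_toReal (measure_ne_top ρ univ), ← hP,
            ← ENNReal.ofReal_mul (by positivity)]
  have hlt := lt_of_lt_of_le hx hg
  have := (ENNReal.ofReal_lt_ofReal_iff'.mp hlt).1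
  have hfrac : (R ^ 2 + 1) / D ^ 2 * P < 1 / t := by
    rw [div_mul_eq_mul_div, div_lt_div_iff₀ (by positivity) (by linarith)]
    nlinarith
  have h1t : 1 / t ≤ 1 / (r - 1) :=
    one_div_le_one_div_of_le (by linarith) (by linarith)
  linarith

lemma dirB (ρ : Measure ℝ) [IsFiniteMeasure ρ] (hρ : ρ ≠ 0) (K : Set ℝ)
    (hρK : ρ Kᶜ = 0) (R : ℝ) (hR : ∀ s ∈ K, |s| ≤ R) (hR0 : 0 ≤ R)
    (t : ℝ) (ht : 1 < t) (ε : ℝ) (hε : 0 < ε) :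
    ∃ δ : ℝ, 0 < δ ∧ ∀ r : ℝ, t < r → r < t + δ → Vplus ρ r ⊆ thick ε (Vplus ρ t) := by
  obtain ⟨B, hB, hBsub⟩ := Vplus_bound ρ K hρK R hR t ht
  set ε' := min ε (B + R) with hε'
  have hε'pos : 0 < ε' := lt_min hε (by linarith)
  have hε'le : ε' ≤ ε := min_le_left _ _
  set a := ε' / 4 with ha
  have hapos : 0 < a := by positivity
  set L := B + R with hL
  have hLpos : 0 < L := by rw [hL]; linarith
  set γ := a ^ 4 / L ^ 6 with hγ
  have hγpos : 0 < γ := by positivity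
  set P := (ρ univ).toReal with hP
  have hPpos : 0 < P :=
    ENNReal.toReal_pos (Measure.measure_univ_ne_zero.mpr hρ) (measure_ne_top _ _)
  set κ := γ * P with hκ
  have hκpos : 0 < κ := by positivity
  refine ⟨min 1 (κ * (t - 1) ^ 2), lt_min one_pos (mul_pos hκpos (pow_pos (by linarith) 2)), ?_⟩
  intro r htr hrδ x hxVr
  by_contra hxth
  have hδ1 : min 1 (κ * (t - 1) ^ 2) ≤ 1 := min_le_left _ _
  have hδ2 : min 1 (κ * (t - 1) ^ 2) ≤ κ * (t - 1) ^ 2 := min_le_right _ _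
  have hball : ∀ y : ℝ, |x - y| < ε' → gFn ρ y ≤ ENNReal.ofReal (1 / (t - 1)) := by
    intro y hy
    by_contra hgy
    exact hxth ⟨y, not_le.mp hgy, lt_of_lt_of_le hy hε'le⟩
  have hxB : x ∈ Icc (-B) B := hBsub r (by linarith) (by linarith) hxVr
  have hmass : ρ (Metric.closedBall x (ε' / 2)) = 0 := by
    apply mass_zero ρ x ε' (1 / (t - 1)) hε'pos
    intro y hy
    rw [← gFn_eq]
    apply hball
    rw [Metric.mem_ball, Real.dist_eq] at hy
    rw [abs_sub_comm]
    exact hy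
  have hae : ∀ᵐ s ∂ρ, 2 * a ≤ |x - s| ∧ |x - s| ≤ L := by
    have h1 : ∀ᵐ s ∂ρ, s ∉ Metric.closedBall x (ε' / 2) := by
      rw [Filter.eventually_iff, mem_ae_iff]
      rw [show {s : ℝ | s ∉ Metric.closedBall x (ε' / 2)}ᶜ = Metric.closedBall x (ε' / 2) from
        by ext z; simp]
      exact hmass
    have h2 : ∀ᵐ s ∂ρ, s ∈ K := by
      rw [Filter.eventually_iff, mem_ae_iff]
      simpa using hρK
    filter_upwards [h1, h2] with s hs1 hs2
    constructor
    · have hd : ε' / 2 < dist s x := by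
        by_contra hcon
        exact hs1 (Metric.mem_closedBall.mpr (not_lt.mp hcon))
      rw [Real.dist_eq] at hd
      rw [abs_sub_comm]
      linarith
    · have hsR := hR s hs2
      have hxa : |x| ≤ B := abs_le.mpr ⟨hxB.1, hxB.2⟩
      calc |x - s| ≤ |x - 0| + |0 - s| := abs_sub_le x 0 s
        _ = |x| + |s| := by simp
        _ ≤ B + R := add_le_add hxa hsR
  have hgap := gap_integrated ρ x a L hapos hae
  have hcb : ∀ y : ℝ, |x - y| < ε' → (∫⁻ s, fInt y s ∂ρ) ≤ ENNReal.ofReal (1 / (t - 1)) :=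
    fun y hy => (gFn_eq ρ y) ▸ hball y hy
  have hxm : (∫⁻ s, fInt (x - a) s ∂ρ) ≤ ENNReal.ofReal (1 / (t - 1)) := by
    apply hcb
    rw [show x - (x - a) = a from by ring, abs_of_pos hapos]
    linarith
  have hxp : (∫⁻ s, fInt (x + a) s ∂ρ) ≤ ENNReal.ofReal (1 / (t - 1)) := by
    apply hcb
    rw [show x - (x + a) = -a from by ring, abs_neg, abs_of_pos hapos]
    linarith
  have hRHS : ((∫⁻ s, fInt (x - a) s ∂ρ) + (∫⁻ s, fInt (x + a) s ∂ρ)) / 2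
      ≤ ENNReal.ofReal (1 / (t - 1)) := by
    calc ((∫⁻ s, fInt (x - a) s ∂ρ) + (∫⁻ s, fInt (x + a) s ∂ρ)) / 2
        ≤ (ENNReal.ofReal (1 / (t - 1)) + ENNReal.ofReal (1 / (t - 1))) / 2 :=
          ENNReal.div_le_div_right (add_le_add hxm hxp) _
      _ = ENNReal.ofReal (1 / (t - 1)) := by
          rw [← two_mul, mul_comm, mul_div_assoc, ENNReal.div_self (by norm_num) (by norm_num),
            mul_one]
  have hκle : ENNReal.ofReal κ ≤ ENNReal.ofReal γ * ρ univ := by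
    have huniv : ρ univ = ENNReal.ofReal P := (ENNReal.ofReal_toReal (measure_ne_top ρ univ)).symm
    rw [hκ, ENNReal.ofReal_mul (le_of_lt hγpos), huniv]
  have hsum : gFn ρ x + ENNReal.ofReal κ ≤ ENNReal.ofReal (1 / (t - 1)) := by
    calc gFn ρ x + ENNReal.ofReal κ
        ≤ (∫⁻ s, fInt x s ∂ρ) + ENNReal.ofReal (a ^ 4 / L ^ 6) * ρ univ := by
          rw [gFn_eq]
          exact add_le_add_right (hγ ▸ hκle) _
      _ ≤ ((∫⁻ s, fInt (x - a) s ∂ρ) + (∫⁻ s, fInt (x + a) s ∂ρ)) / 2 := hgap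
      _ ≤ ENNReal.ofReal (1 / (t - 1)) := hRHS
  have hcr : ENNReal.ofReal (1 / (t - 1)) ≤ ENNReal.ofReal (1 / (r - 1)) + ENNReal.ofReal κ := by
    rw [← ENNReal.ofReal_add (one_div_nonneg.mpr (by linarith)) (le_of_lt hκpos)]
    apply ENNReal.ofReal_le_ofReal
    have ht1 : t - 1 ≠ 0 := by linarith
    have hr1 : r - 1 ≠ 0 := by linarith
    have hkey : 1 / (t - 1) - 1 / (r - 1) = (r - t) / ((t - 1) * (r - 1)) := by
      rw [div_sub_div _ _ ht1 hr1]
      congr 1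
      ring
    have hrt : r - t < κ * (t - 1) ^ 2 := by linarith
    have hquot : (r - t) / ((t - 1) * (r - 1)) ≤ κ := by
      rw [div_le_iff₀ (by nlinarith)]
      nlinarith
    linarith
  have final : gFn ρ x ≤ ENNReal.ofReal (1 / (r - 1)) :=
    (ENNReal.add_le_add_iff_right ENNReal.ofReal_ne_top).mp (hsum.trans hcr)
  exact absurd hxVr (not_lt.mpr final)

lemma Vplus_mono (ρ : Measure ℝ) {r t : ℝ} (hr : 1 < r) (hrt : r ≤ t) :
    Vplus ρ r ⊆ Vplus ρ t := by
  intro x hx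
  simp only [Vplus, mem_setOf_eq] at hx ⊢
  refine lt_of_le_of_lt ?_ hx
  have h1 : (0:ℝ) < r - 1 := by linarith
  have h2 : r - 1 ≤ t - 1 := by linarith
  exact ENNReal.ofReal_le_ofReal (one_div_le_one_div_of_le h1 h2)

lemma subset_thick {ε : ℝ} (hε : 0 < ε) (A : Set ℝ) : A ⊆ thick ε A :=
  fun x hx => ⟨x, hx, by simpa using hε⟩

lemma thick_mono {ε ε' : ℝ} (hε : ε ≤ ε') {A B : Set ℝ} (hAB : A ⊆ B) :
    thick ε A ⊆ thick ε' B :=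
  fun _ ⟨y, hy, hxy⟩ => ⟨y, hAB hy, lt_of_lt_of_le hxy hε⟩

lemma thick_open (ε : ℝ) (A : Set ℝ) : IsOpen (thick ε A) := by
  have : thick ε A = ⋃ y ∈ A, Metric.ball y ε := by
    ext x
    simp [thick, Metric.mem_ball, Real.dist_eq]
  rw [this]
  exact isOpen_biUnion fun y _ => Metric.isOpen_ball

lemma exists_lower (ρ : Measure ℝ) {t y : ℝ} (ht : 1 < t) (hy : y ∈ Vplus ρ t) :
    ∃ r : ℝ, 1 < r ∧ r < t ∧ y ∈ Vplus ρ r := by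
  have hy' : ENNReal.ofReal (1 / (t - 1)) < gFn ρ y := hy
  by_cases htop : gFn ρ y = ⊤
  · refine ⟨(1 + t) / 2, by linarith, by linarith, ?_⟩
    show ENNReal.ofReal _ < gFn ρ y
    rw [htop]
    exact ENNReal.ofReal_lt_top
  · have h0 : 0 < 1 / (t - 1) := one_div_pos.mpr (by linarith)
    have hlt : 1 / (t - 1) < (gFn ρ y).toReal :=
      (ENNReal.ofReal_lt_iff_lt_toReal (le_of_lt h0) htop).mp hy'
    set G := (gFn ρ y).toReal with hG
    have hGpos : 0 < G := lt_trans h0 hlt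
    set w := 1 / G with hw
    have hwpos : 0 < w := by positivity
    have hwt : w < t - 1 := by
      rw [hw, div_lt_iff₀ hGpos]
      have := (div_lt_iff₀ (by linarith : (0:ℝ) < t - 1)).mp hlt
      linarith [mul_comm G (t - 1)]
    refine ⟨1 + (w + (t - 1)) / 2, by linarith, by linarith, ?_⟩
    show ENNReal.ofReal (1 / (1 + (w + (t - 1)) / 2 - 1)) < gFn ρ y
    rw [show 1 + (w + (t - 1)) / 2 - 1 = (w + (t - 1)) / 2 from by ring]
    apply (ENNReal.ofReal_lt_iff_lt_toReal (one_div_nonneg.mpr (by linarith)) htop).mpr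
    calc 1 / ((w + (t - 1)) / 2) < 1 / w := one_div_lt_one_div_of_lt hwpos (by linarith)
      _ = G := by rw [hw, one_div_one_div]

lemma dirA (ρ : Measure ℝ) [IsFiniteMeasure ρ] (K : Set ℝ) (hρK : ρ Kᶜ = 0)
    (R : ℝ) (hR : ∀ s ∈ K, |s| ≤ R) (t : ℝ) (ht : 1 < t) (ε : ℝ) (hε : 0 < ε) :
    ∃ δ : ℝ, 0 < δ ∧ ∀ r : ℝ, 1 < r → t - δ < r → r < t →
      Vplus ρ t ⊆ thick ε (Vplus ρ r) := by
  by_cases hV : Vplus ρ t = ∅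
  · exact ⟨1, one_pos, fun r _ _ _ => by rw [hV]; exact empty_subset _⟩
  obtain ⟨B, hB, hBsub⟩ := Vplus_bound ρ K hρK R hR t ht
  have hVB : Vplus ρ t ⊆ Icc (-B) B := hBsub t ht (by linarith)
  set C := closure (Vplus ρ t) with hC
  have hCc : IsCompact C :=
    IsCompact.of_isClosed_subset isCompact_Icc isClosed_closure
      (closure_minimal hVB isClosed_Icc)
  have hcover : C ⊆ ⋃ i : {r : ℝ // 1 < r ∧ r < t}, thick (ε / 2) (Vplus ρ i.1) := by
    intro z hz
    obtain ⟨y, hyV, hyd⟩ := Metric.mem_closure_iff.mp hz (ε / 2) (by positivity)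
    obtain ⟨r, hr1, hrt, hyr⟩ := exists_lower ρ ht hyV
    exact mem_iUnion.mpr ⟨⟨r, hr1, hrt⟩, ⟨y, hyr, by rw [← Real.dist_eq]; exact hyd⟩⟩
  obtain ⟨F, hF⟩ := hCc.elim_finite_subcover
    (fun i : {r : ℝ // 1 < r ∧ r < t} => thick (ε / 2) (Vplus ρ i.1))
    (fun i => thick_open _ _) hcover
  obtain ⟨x₀, hx₀⟩ := nonempty_iff_ne_empty.mpr hV
  obtain ⟨i₀, hi₀F, _⟩ := mem_iUnion₂.mp (hF (subset_closure hx₀))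
  have hFne : F.Nonempty := ⟨i₀, hi₀F⟩
  set rst := F.max' hFne with hrst
  refine ⟨t - rst.1, by linarith [rst.2.2], ?_⟩
  intro r hr1 hrlow hrt x hx
  obtain ⟨i, hiF, hxi⟩ := mem_iUnion₂.mp (hF (subset_closure hx))
  obtain ⟨y, hyV, hxy⟩ := hxi
  refine ⟨y, ?_, by linarith⟩
  have hile : i.1 ≤ rst.1 := Subtype.coe_le_coe.mpr (F.le_max' i hiF)
  exact Vplus_mono ρ i.2.1 (by linarith) hyV

/-- the family `{V_t⁺}_{t>1}` is continuous in the Hausdorff metric. -/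
theorem Vplus_hausdorff_continuous (ρ : Measure ℝ) [IsFiniteMeasure ρ] (hρ : ρ ≠ 0)
    (K : Set ℝ) (hK : IsCompact K) (hρK : ρ Kᶜ = 0) :
    ∀ t : ℝ, 1 < t → ∀ ε : ℝ, 0 < ε → ∃ δ : ℝ, 0 < δ ∧
      ∀ r : ℝ, 1 < r → |r - t| < δ →
        Vplus ρ r ⊆ thick ε (Vplus ρ t) ∧ Vplus ρ t ⊆ thick ε (Vplus ρ r) := by
  intro t ht ε hε
  obtain ⟨R', hR'⟩ := hK.isBounded.subset_closedBall 0
  set R := max R' 0 with hRdef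
  have hR : ∀ s ∈ K, |s| ≤ R := by
    intro s hs
    have := hR' hs
    rw [Metric.mem_closedBall, Real.dist_eq, sub_zero] at this
    exact le_trans this (le_max_left _ _)
  have hR0 : (0 : ℝ) ≤ R := le_max_right _ _
  obtain ⟨δA, hδA, hA⟩ := dirA ρ K hρK R hR t ht ε hε
  obtain ⟨δB, hδB, hB⟩ := dirB ρ hρ K hρK R hR hR0 t ht ε hε
  refine ⟨min δA δB, lt_min hδA hδB, ?_⟩
  intro r hr hdist
  rw [abs_sub_lt_iff] at hdist
  have hd1 : r - t < δB := lt_of_lt_of_le hdist.1 (min_le_right _ _)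
  have hd2 : t - r < δA := lt_of_lt_of_le hdist.2 (min_le_left _ _)
  rcases le_or_gt r t with hle | hgt
  · constructor
    · exact (Vplus_mono ρ hr hle).trans (subset_thick hε _)
    · rcases eq_or_lt_of_le hle with heq | hlt
      · cases heq
        exact subset_thick hε _
      · exact hA r hr (by linarith) hlt
  · constructor
    · exact hB r hgt (by linarith)
    · exact (Vplus_mono ρ ht (le_of_lt hgt)).trans (subset_thick hε _)
end

section
/- If t > 1 and x ∈ V_t⁺ (equivalently f_t(x) > 0), then the infimum defining f_t(x) is attained with equality: ∫_ℝ (s²+1)/((x−s)² + f_t(x)²) dρ(s) = 1/(t−1). -/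
open MeasureTheory Filter Topology

/-- `f_t(x) = inf { y > 0 : ∫ (s²+1)/((x−s)²+y²) dρ(s) ≤ 1/(t−1) }`. -/
noncomputable def fFn (ρ : Measure ℝ) (t : ℝ) (x : ℝ) : ℝ :=
  sInf {y : ℝ | 0 < y ∧ (∫ s, (s ^ 2 + 1) / ((x - s) ^ 2 + y ^ 2) ∂ρ) ≤ 1 / (t - 1)}

section aux
variable (ρ : Measure ℝ) [IsFiniteMeasure ρ] (x : ℝ)

lemma fy_meas (y : ℝ) : Measurable (fun s : ℝ => (s^2+1)/((x-s)^2+y^2)) := by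
  fun_prop

lemma fy_nonneg (y : ℝ) (s : ℝ) : 0 ≤ (s^2+1)/((x-s)^2+y^2) := by positivity

variable {K : Set ℝ} (hρK : ρ Kᶜ = 0) {M : ℝ} (hM : ∀ s ∈ K, s^2+1 ≤ M) (hM1 : 1 ≤ M)

include hρK hM hM1 in
lemma fy_integrable {y : ℝ} (hy : y ≠ 0) :
    Integrable (fun s : ℝ => (s^2+1)/((x-s)^2+y^2)) ρ := by
  apply Integrable.mono' (integrable_const (M / y^2)) (fy_meas x y).aestronglyMeasurable
  filter_upwards [(mem_ae_iff.mpr hρK : ∀ᵐ s ∂ρ, s ∈ K)] with s hs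
  rw [Real.norm_of_nonneg (fy_nonneg x y s)]
  apply div_le_div₀ (by linarith) (hM s hs) (by positivity)
  nlinarith [sq_nonneg (x - s)]

include hρK hM hM1 in
lemma F_antitone {y₁ y₂ : ℝ} (h1 : 0 < y₁) (h12 : y₁ ≤ y₂) :
    (∫ s, (s^2+1)/((x-s)^2+y₂^2) ∂ρ) ≤ ∫ s, (s^2+1)/((x-s)^2+y₁^2) ∂ρ := by
  have h2 : (0:ℝ) < y₂ := lt_of_lt_of_le h1 h12
  apply integral_mono (fy_integrable ρ x hρK hM hM1 h2.ne')
    (fy_integrable ρ x hρK hM hM1 h1.ne')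
  intro s
  apply div_le_div_of_nonneg_left (by positivity) (by positivity)
  nlinarith

include hρK hM hM1 in
lemma F_contAt {y₀ : ℝ} (hy₀ : 0 < y₀) :
    ContinuousAt (fun y => ∫ s, (s^2+1)/((x-s)^2+y^2) ∂ρ) y₀ := by
  apply continuousAt_of_dominated (bound := fun _ => M / (y₀/2)^2)
  · exact Eventually.of_forall fun y => (fy_meas x y).aestronglyMeasurable
  · have h : ∀ᶠ y in 𝓝 y₀, y₀/2 < y := eventually_gt_nhds (by linarith)
    filter_upwards [h] with y hy
    filter_upwards [(mem_ae_iff.mpr hρK : ∀ᵐ s ∂ρ, s ∈ K)] with s hs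
    rw [Real.norm_of_nonneg (fy_nonneg x y s)]
    apply div_le_div₀ (by linarith) (hM s hs) (by positivity)
    nlinarith [sq_nonneg (x - s)]
  · exact integrable_const _
  · refine Eventually.of_forall fun s => ?_
    apply ContinuousAt.div (by fun_prop) (by fun_prop)
    positivity

end aux

/-- for `x ∈ V_t⁺`, the infimum defining `f_t(x)` is attained with equality. -/
theorem f_eq_at_Vplus (ρ : Measure ℝ) [IsFiniteMeasure ρ] (hρ : ρ ≠ 0)
    (K : Set ℝ) (hK : IsCompact K) (hρK : ρ Kᶜ = 0)
    (t : ℝ) (ht : 1 < t) (x : ℝ) (hx : x ∈ Vplus ρ t) :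
    (∫ s, (s ^ 2 + 1) / ((x - s) ^ 2 + (fFn ρ t x) ^ 2) ∂ρ) = 1 / (t - 1) := by
  have ht0 : (0:ℝ) < t - 1 := by linarith
  set c := 1 / (t - 1) with hc
  have hc0 : 0 < c := by positivity
  obtain ⟨C, hC⟩ := hK.exists_bound_of_continuousOn
    (f := fun s : ℝ => s^2+1) (by fun_prop : Continuous fun s : ℝ => s^2+1).continuousOn
  set M := max C 1 with hMdef
  have hM : ∀ s ∈ K, s^2+1 ≤ M := fun s hs =>
    le_trans (le_trans (le_abs_self _) (hC s hs)) (le_max_left _ _)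
  have hM1 : (1:ℝ) ≤ M := le_max_right _ _
  set F : ℝ → ℝ := fun y => ∫ s, (s^2+1)/((x-s)^2+y^2) ∂ρ with hF
  set S : Set ℝ := {y : ℝ | 0 < y ∧ F y ≤ c} with hS
  have hmdef : fFn ρ t x = sInf S := rfl
  -- S is nonempty
  set V := (ρ Set.univ).toReal with hV
  have hV0 : 0 ≤ V := ENNReal.toReal_nonneg
  set y₀ := Real.sqrt (M * V / c) + 1 with hy₀def
  have hy₀pos : 0 < y₀ := by positivity
  have hy₀S : y₀ ∈ S := by
    refine ⟨hy₀pos, ?_⟩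
    have h1 : F y₀ ≤ ∫ _s, (M / y₀^2) ∂ρ := by
      apply integral_mono_ae (fy_integrable ρ x hρK hM hM1 hy₀pos.ne') (integrable_const _)
      filter_upwards [(mem_ae_iff.mpr hρK : ∀ᵐ s ∂ρ, s ∈ K)] with s hs
      apply div_le_div₀ (by linarith) (hM s hs) (by positivity)
      nlinarith [sq_nonneg (x - s)]
    have h2 : (∫ _s, (M / y₀^2) ∂ρ) = M / y₀^2 * V := by
      rw [integral_const, smul_eq_mul, mul_comm]
      rfl
    have h3 : M * V / c ≤ y₀^2 := by
      have h4 := Real.sq_sqrt (show (0:ℝ) ≤ M*V/c by positivity)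
      nlinarith [Real.sqrt_nonneg (M*V/c)]
    have h5 : M / y₀^2 * V ≤ c := by
      rw [div_mul_eq_mul_div, div_le_iff₀ (by positivity)]
      calc M * V = M * V / c * c := by field_simp
        _ ≤ y₀^2 * c := by nlinarith
        _ = c * y₀^2 := by ring
    calc F y₀ ≤ M / y₀^2 * V := h2 ▸ h1
      _ ≤ c := h5
  have hSne : S.Nonempty := ⟨y₀, hy₀S⟩
  have hSbd : BddBelow S := ⟨0, fun y hy => hy.1.le⟩
  -- there is y₁ > 0 with c < F y₁
  have hex : ∃ y₁ : ℝ, 0 < y₁ ∧ c < F y₁ := by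
    by_contra hcon
    push_neg at hcon
    have hglt : ¬ (gFn ρ x ≤ ENNReal.ofReal c) := not_le.mpr hx
    apply hglt
    set φ : ℕ → ℝ → ENNReal :=
      fun n s => ENNReal.ofReal ((s^2+1)/((x-s)^2+(1/((n:ℝ)+1))^2)) with hφ
    have hmeasφ : ∀ n, Measurable (φ n) :=
      fun n => ENNReal.measurable_ofReal.comp (fy_meas x _)
    have hmonoφ : Monotone φ := by
      intro n m hnm s
      apply ENNReal.ofReal_le_ofReal
      apply div_le_div_of_nonneg_left (by positivity) (by positivity)
      have hnm' : ((n:ℝ)+1) ≤ (m:ℝ)+1 := by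
        have := (Nat.cast_le (α := ℝ)).mpr hnm; linarith
      have h1 : (1:ℝ)/((m:ℝ)+1) ≤ 1/((n:ℝ)+1) :=
        one_div_le_one_div_of_le (by positivity) hnm'
      have h2 : (0:ℝ) < 1/((m:ℝ)+1) := by positivity
      nlinarith
    have hpt : ∀ s, ENNReal.ofReal (s^2+1) / ENNReal.ofReal ((x-s)^2) = ⨆ n, φ n s := by
      intro s
      have hmono_s : Monotone (fun n => φ n s) := fun n m h => hmonoφ h s
      refine tendsto_nhds_unique ?_ (tendsto_atTop_iSup hmono_s)
      by_cases hsx : (x - s)^2 = 0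
      · rw [hsx, ENNReal.ofReal_zero,
          ENNReal.div_zero (ne_of_gt (ENNReal.ofReal_pos.mpr (by positivity)))]
        have heq : ∀ n, φ n s = ENNReal.ofReal ((s^2+1) * ((n:ℝ)+1)^2) := by
          intro n
          simp only [hφ]
          congr 1
          rw [hsx]
          field_simp
          ring
        have hre : Tendsto (fun n : ℕ => (s^2+1) * ((n:ℝ)+1)^2) atTop atTop := by
          apply Tendsto.const_mul_atTop (by positivity)
          exact (tendsto_pow_atTop two_ne_zero).comp
            (tendsto_atTop_add_const_right atTop 1 tendsto_natCast_atTop_atTop)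
        refine Tendsto.congr (fun n => (heq n).symm) ?_
        exact ENNReal.tendsto_ofReal_atTop.comp hre
      · have hpos : 0 < (x-s)^2 := lt_of_le_of_ne (sq_nonneg _) (Ne.symm hsx)
        rw [← ENNReal.ofReal_div_of_pos hpos]
        apply ENNReal.tendsto_ofReal
        have hden : Tendsto (fun n : ℕ => (x-s)^2 + (1/((n:ℝ)+1))^2) atTop (𝓝 ((x-s)^2)) := by
          have h0 : Tendsto (fun n : ℕ => (1:ℝ)/((n:ℝ)+1)) atTop (𝓝 0) :=
            tendsto_one_div_add_atTop_nhds_zero_nat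
          have := (tendsto_const_nhds (x := (x-s)^2) (f := atTop (α := ℕ))).add
            ((h0.pow 2))
          simpa using this
        have := (tendsto_const_nhds (x := s^2+1) (f := atTop (α := ℕ))).div hden hsx
        exact this
    calc gFn ρ x = ∫⁻ s, ⨆ n, φ n s ∂ρ := lintegral_congr hpt
      _ = ⨆ n, ∫⁻ s, φ n s ∂ρ := lintegral_iSup hmeasφ hmonoφ
      _ ≤ ENNReal.ofReal c := by
          apply iSup_le
          intro n
          have hn0 : (0:ℝ) < 1/((n:ℝ)+1) := by positivity
          rw [hφ, ← MeasureTheory.ofReal_integral_eq_lintegral_ofReal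
            (fy_integrable ρ x hρK hM hM1 hn0.ne')
            (Eventually.of_forall (fy_nonneg x _))]
          exact ENNReal.ofReal_le_ofReal (hcon _ hn0)
  obtain ⟨y₁, hy₁pos, hy₁F⟩ := hex
  -- m > 0
  set m := sInf S with hm
  have hy₁lb : ∀ y ∈ S, y₁ ≤ y := by
    intro y hy
    by_contra hlt
    push_neg at hlt
    have := F_antitone ρ x hρK hM hM1 hy.1 hlt.le
    exact absurd (le_trans this hy.2) (not_le.mpr hy₁F)
  have hmpos : 0 < m := lt_of_lt_of_le hy₁pos (le_csInf hSne hy₁lb)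
  have hcont : ContinuousAt F m := F_contAt ρ x hρK hM hM1 hmpos
  -- F m ≤ c
  have hle : F m ≤ c := by
    have hseq : Tendsto (fun n : ℕ => m + 1/((n:ℝ)+1)) atTop (𝓝 m) := by
      have h0 : Tendsto (fun n : ℕ => (1:ℝ)/((n:ℝ)+1)) atTop (𝓝 0) :=
        tendsto_one_div_add_atTop_nhds_zero_nat
      simpa using (tendsto_const_nhds (x := m) (f := atTop (α := ℕ))).add h0
    refine le_of_tendsto (hcont.tendsto.comp hseq) (Eventually.of_forall fun n => ?_)
    have hn0 : (0:ℝ) < 1/((n:ℝ)+1) := by positivity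
    obtain ⟨y, hyS, hylt⟩ := (csInf_lt_iff hSbd hSne).mp
      (show sInf S < m + 1/((n:ℝ)+1) by rw [← hm]; linarith)
    calc F (m + 1/((n:ℝ)+1)) ≤ F y := F_antitone ρ x hρK hM hM1 hyS.1 hylt.le
      _ ≤ c := hyS.2
  -- c ≤ F m
  have hge : c ≤ F m := by
    have hseq : Tendsto (fun n : ℕ => m - 1/((n:ℝ)+1)) atTop (𝓝 m) := by
      have h0 : Tendsto (fun n : ℕ => (1:ℝ)/((n:ℝ)+1)) atTop (𝓝 0) :=
        tendsto_one_div_add_atTop_nhds_zero_nat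
      simpa using (tendsto_const_nhds (x := m) (f := atTop (α := ℕ))).sub h0
    have hev : ∀ᶠ n : ℕ in atTop, (1:ℝ)/((n:ℝ)+1) < m := by
      have h0 : Tendsto (fun n : ℕ => (1:ℝ)/((n:ℝ)+1)) atTop (𝓝 0) :=
        tendsto_one_div_add_atTop_nhds_zero_nat
      exact h0.eventually_lt_const hmpos
    refine ge_of_tendsto (hcont.tendsto.comp hseq) ?_
    filter_upwards [hev] with n hn
    have hy0 : 0 < m - 1/((n:ℝ)+1) := by linarith
    have hynotS : m - 1/((n:ℝ)+1) ∉ S := by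
      intro hmem
      have := csInf_le hSbd hmem
      rw [← hm] at this
      have hn0 : (0:ℝ) < 1/((n:ℝ)+1) := by positivity
      linarith
    have : ¬ (F (m - 1/((n:ℝ)+1)) ≤ c) := fun h => hynotS ⟨hy0, h⟩
    exact (not_le.mp this).le
  rw [show (∫ s, (s ^ 2 + 1) / ((x - s) ^ 2 + (fFn ρ t x) ^ 2) ∂ρ) = F m from rfl]
  exact le_antisymm hle hge
end

section
/- For each fixed t > 1, the function f_t : ℝ → [0,∞) is continuous. -/
open MeasureTheory

namespace FContAux

variable {ρ : Measure ℝ} [IsFiniteMeasure ρ] {K : Set ℝ}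

lemma integrable_poly (hK : IsCompact K) (hρK : ρ Kᶜ = 0) :
    Integrable (fun s : ℝ => s ^ 2 + 1) ρ := by
  have h1 : ρ.restrict K = ρ :=
    Measure.restrict_eq_self_of_ae_mem (by
      rw [MeasureTheory.ae_iff]
      exact hρK)
  rw [← h1]
  exact (Continuous.continuousOn (by continuity)).integrableOn_compact hK

lemma integrable_g (hK : IsCompact K) (hρK : ρ Kᶜ = 0) {x y : ℝ} (hy : y ≠ 0) :
    Integrable (fun s : ℝ => (s ^ 2 + 1) / ((x - s) ^ 2 + y ^ 2)) ρ := by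
  have hy2 : (0:ℝ) < y ^ 2 := by positivity
  have hb : Integrable (fun s : ℝ => (s ^ 2 + 1) / y ^ 2) ρ :=
    (integrable_poly hK hρK).div_const _
  refine hb.mono' ?_ ?_
  · refine Continuous.aestronglyMeasurable ?_
    refine Continuous.div (by continuity) (by continuity) fun s => by positivity
  · refine Filter.Eventually.of_forall fun s => ?_
    have hpos : (0:ℝ) < (x - s) ^ 2 + y ^ 2 := by positivity
    rw [Real.norm_eq_abs, abs_of_nonneg (by positivity)]
    exact div_le_div_of_nonneg_left (by positivity) hy2 (le_add_of_nonneg_left (by positivity))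

lemma F_strict_anti (hρ : ρ ≠ 0) (hK : IsCompact K) (hρK : ρ Kᶜ = 0)
    {x y₁ y₂ : ℝ} (h1 : 0 < y₁) (h12 : y₁ < y₂) :
    (∫ s, (s ^ 2 + 1) / ((x - s) ^ 2 + y₂ ^ 2) ∂ρ) <
      ∫ s, (s ^ 2 + 1) / ((x - s) ^ 2 + y₁ ^ 2) ∂ρ := by
  have hi1 := integrable_g hK hρK (x := x) (y := y₁) h1.ne'
  have hi2 := integrable_g hK hρK (x := x) (y := y₂) (h1.trans h12).ne'
  have hpt : ∀ s : ℝ, 0 < (s ^ 2 + 1) / ((x - s) ^ 2 + y₁ ^ 2)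
      - (s ^ 2 + 1) / ((x - s) ^ 2 + y₂ ^ 2) := by
    intro s
    have h2 : (x - s) ^ 2 + y₁ ^ 2 < (x - s) ^ 2 + y₂ ^ 2 := by
      have : y₁ ^ 2 < y₂ ^ 2 := by
        exact pow_lt_pow_left₀ h12 h1.le (by norm_num)
      linarith
    have := div_lt_div_of_pos_left (by positivity : (0:ℝ) < s ^ 2 + 1)
      (by positivity : (0:ℝ) < (x - s) ^ 2 + y₁ ^ 2) h2
    linarith
  have hpos : 0 < ∫ s, ((s ^ 2 + 1) / ((x - s) ^ 2 + y₁ ^ 2)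
      - (s ^ 2 + 1) / ((x - s) ^ 2 + y₂ ^ 2)) ∂ρ := by
    rw [integral_pos_iff_support_of_nonneg (fun s => (hpt s).le) (hi1.sub hi2)]
    have : Function.support (fun s : ℝ => (s ^ 2 + 1) / ((x - s) ^ 2 + y₁ ^ 2)
        - (s ^ 2 + 1) / ((x - s) ^ 2 + y₂ ^ 2)) = Set.univ := by
      ext s; simp [(hpt s).ne']
    rw [this]
    simpa using Measure.measure_univ_pos.mpr hρ
  rw [integral_sub hi1 hi2] at hpos
  linarith

lemma F_cont (hK : IsCompact K) (hρK : ρ Kᶜ = 0) {y : ℝ} (hy : y ≠ 0) :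
    Continuous (fun x => ∫ s, (s ^ 2 + 1) / ((x - s) ^ 2 + y ^ 2) ∂ρ) := by
  have hy2 : (0:ℝ) < y ^ 2 := by positivity
  refine continuous_of_dominated (bound := fun s : ℝ => (s ^ 2 + 1) / y ^ 2)
    (fun x => ?_) (fun x => Filter.Eventually.of_forall fun s => ?_)
    ((integrable_poly hK hρK).div_const _)
    (Filter.Eventually.of_forall fun s => ?_)
  · refine Continuous.aestronglyMeasurable ?_
    refine Continuous.div (by continuity) (by continuity) fun s => by positivity
  · have hpos : (0:ℝ) < (x - s) ^ 2 + y ^ 2 := by positivity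
    rw [Real.norm_eq_abs, abs_of_nonneg (by positivity)]
    exact div_le_div_of_nonneg_left (by positivity) hy2 (le_add_of_nonneg_left (by positivity))
  · refine Continuous.div (by continuity) (by continuity) fun x => by positivity

lemma S_nonempty (hK : IsCompact K) (hρK : ρ Kᶜ = 0) {c : ℝ} (hc : 0 < c) (x : ℝ) :
    ∃ y : ℝ, 0 < y ∧ (∫ s, (s ^ 2 + 1) / ((x - s) ^ 2 + y ^ 2) ∂ρ) ≤ c := by
  set M : ℝ := ∫ s, (s ^ 2 + 1) ∂ρ with hM
  have hM0 : 0 ≤ M := integral_nonneg fun s => by positivity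
  refine ⟨Real.sqrt (M / c) + 1, by positivity, ?_⟩
  set y : ℝ := Real.sqrt (M / c) + 1 with hy
  have hy1 : Real.sqrt (M / c) ≤ y - 1 := by simp [hy]
  have hyp : (0:ℝ) < y := by positivity
  have hy2 : M / c < y ^ 2 := by
    have h1 : Real.sqrt (M / c) < y := by simp [hy]
    have h2 : M / c ≤ Real.sqrt (M / c) ^ 2 := by
      rw [Real.sq_sqrt (by positivity)]
    calc M / c ≤ Real.sqrt (M / c) ^ 2 := h2
      _ < y ^ 2 := by
        exact pow_lt_pow_left₀ h1 (Real.sqrt_nonneg _) (by norm_num)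
  have hMc : M ≤ c * y ^ 2 := by
    have := (div_lt_iff₀ hc).mp hy2
    nlinarith
  have hle : (∫ s, (s ^ 2 + 1) / ((x - s) ^ 2 + y ^ 2) ∂ρ)
      ≤ ∫ s, (s ^ 2 + 1) / y ^ 2 ∂ρ := by
    refine integral_mono_of_nonneg (Filter.Eventually.of_forall fun s => by positivity)
      ((integrable_poly hK hρK).div_const _)
      (Filter.Eventually.of_forall fun s => ?_)
    exact div_le_div_of_nonneg_left (by positivity) (by positivity)
      (le_add_of_nonneg_left (by positivity))
  have : (∫ s, (s ^ 2 + 1) / y ^ 2 ∂ρ) = M / y ^ 2 := by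
    rw [hM, integral_div]
  rw [this] at hle
  refine hle.trans ?_
  rw [div_le_iff₀ (by positivity)]
  linarith

end FContAux

open FContAux in
/-- for each fixed `t > 1`, the function `f_t` is continuous. -/
theorem f_continuous (ρ : Measure ℝ) [IsFiniteMeasure ρ] (hρ : ρ ≠ 0)
    (K : Set ℝ) (hK : IsCompact K) (hρK : ρ Kᶜ = 0)
    (t : ℝ) (ht : 1 < t) :
    Continuous (fFn ρ t) := by
  set c : ℝ := 1 / (t - 1) with hc_def
  have hc : 0 < c := by
    have h1 : 0 < t - 1 := by linarith
    rw [hc_def]; positivity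
  set F : ℝ → ℝ → ℝ := fun x y => ∫ s, (s ^ 2 + 1) / ((x - s) ^ 2 + y ^ 2) ∂ρ with hF
  set S : ℝ → Set ℝ := fun x => {y : ℝ | 0 < y ∧ F x y ≤ c} with hS
  have hfFn : ∀ x, fFn ρ t x = sInf (S x) := fun x => rfl
  have hbdd : ∀ x, BddBelow (S x) := fun x => ⟨0, fun z hz => hz.1.le⟩
  have hne : ∀ x, (S x).Nonempty := fun x => S_nonempty hK hρK hc x
  have hf_nonneg : ∀ x, 0 ≤ fFn ρ t x := by
    intro x
    rw [hfFn]
    exact le_csInf (hne x) fun z hz => hz.1.le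
  -- upper bound lemma: F x y ≤ c with 0 < y implies fFn ≤ y
  have hub : ∀ x y, 0 < y → F x y ≤ c → fFn ρ t x ≤ y := by
    intro x y hy hFy
    rw [hfFn]
    exact csInf_le (hbdd x) ⟨hy, hFy⟩
  -- lower bound lemma: c < F x y with 0 < y implies y ≤ fFn
  have hlb : ∀ x y, 0 < y → c < F x y → y ≤ fFn ρ t x := by
    intro x y hy hFy
    rw [hfFn]
    refine le_csInf (hne x) fun z hz => ?_
    by_contra hzy
    push_neg at hzy
    have := F_strict_anti hρ hK hρK (x := x) hz.1 hzy
    have : c < F x z := lt_of_lt_of_le hFy this.le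
    exact absurd hz.2 (not_le.mpr this)
  rw [continuous_iff_continuousAt]
  intro x₀
  rw [ContinuousAt, Metric.tendsto_nhds]
  intro ε hε
  have hε' : 0 < ε / 2 := by linarith
  -- upper eventual bound
  have hupper : ∀ᶠ x in nhds x₀, fFn ρ t x ≤ fFn ρ t x₀ + ε / 2 := by
    set yp : ℝ := fFn ρ t x₀ + ε / 2 with hyp
    have hyppos : 0 < yp := by
      have := hf_nonneg x₀; rw [hyp]; linarith
    obtain ⟨z, hzS, hzlt⟩ : ∃ z ∈ S x₀, z < yp := by
      refine exists_lt_of_csInf_lt (hne x₀) ?_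
      rw [← hfFn, hyp]; linarith
    have hFlt : F x₀ yp < c :=
      lt_of_lt_of_le (F_strict_anti hρ hK hρK hzS.1 hzlt) hzS.2
    have hcont : ContinuousAt (fun x => F x yp) x₀ :=
      (F_cont hK hρK hyppos.ne').continuousAt
    filter_upwards [Filter.Tendsto.eventually_lt_const hFlt hcont] with x hx
    exact hub x yp hyppos hx.le
  -- lower eventual bound
  have hlower : ∀ᶠ x in nhds x₀, fFn ρ t x₀ - ε / 2 ≤ fFn ρ t x := by
    by_cases hcase : fFn ρ t x₀ - ε / 2 ≤ 0
    · exact Filter.Eventually.of_forall fun x => hcase.trans (hf_nonneg x)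
    · push_neg at hcase
      set ym : ℝ := fFn ρ t x₀ - ε / 2 with hym
      have hympos : 0 < ym := hcase
      have hFgt : c < F x₀ ym := by
        by_contra h
        push_neg at h
        have : fFn ρ t x₀ ≤ ym := hub x₀ ym hympos h
        rw [hym] at this; linarith
      have hcont : ContinuousAt (fun x => F x ym) x₀ :=
        (F_cont hK hρK hympos.ne').continuousAt
      filter_upwards [Filter.Tendsto.eventually_const_lt hFgt hcont] with x hx
      exact hlb x ym hympos hx
  filter_upwards [hupper, hlower] with x h1 h2
  rw [Real.dist_eq, abs_sub_lt_iff]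
  constructor <;> linarith
end

section
/- For every t > 1, c > 0 and ε > 0 there exists δ > 0 such that for every r with t < r < t + δ and every x ∈ ℝ with f_t(x) ≥ c, one has f_t(x) < f_r(x) ≤ (1+ε) f_t(x). -/
open MeasureTheory Filter Topology Set

set_option linter.unusedSectionVars false

noncomputable def Fi (ρ : Measure ℝ) (x y : ℝ) : ℝ :=
  ∫ s, (s ^ 2 + 1) / ((x - s) ^ 2 + y ^ 2) ∂ρ

variable {ρ : Measure ℝ} [IsFiniteMeasure ρ] {M : ℝ}

lemma denom_pos {x s y : ℝ} (hy : y ≠ 0) : 0 < (x - s) ^ 2 + y ^ 2 := by positivity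

lemma integrand_cont {x y : ℝ} (hy : y ≠ 0) :
    Continuous fun s => (s ^ 2 + 1) / ((x - s) ^ 2 + y ^ 2) := by
  apply Continuous.div (by continuity) (by continuity)
  intro s; exact (denom_pos hy).ne'

lemma integrand_bound (hM : ∀ᵐ s ∂ρ, |s| ≤ M) {x y : ℝ} (hy : 0 < y) :
    ∀ᵐ s ∂ρ, ‖(s ^ 2 + 1) / ((x - s) ^ 2 + y ^ 2)‖ ≤ (M ^ 2 + 1) / y ^ 2 := by
  filter_upwards [hM] with s hs
  rw [Real.norm_eq_abs, abs_of_nonneg (by positivity)]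
  apply div_le_div₀ (by positivity) _ (by positivity) (by nlinarith)
  nlinarith [abs_nonneg s, sq_abs s]

lemma integrand_integrable (hM : ∀ᵐ s ∂ρ, |s| ≤ M) {x y : ℝ} (hy : 0 < y) :
    Integrable (fun s => (s ^ 2 + 1) / ((x - s) ^ 2 + y ^ 2)) ρ :=
  (integrable_const ((M ^ 2 + 1) / y ^ 2)).mono'
    (integrand_cont hy.ne').aestronglyMeasurable (integrand_bound hM hy)

lemma F_le (hM : ∀ᵐ s ∂ρ, |s| ≤ M) {x y : ℝ} (hy : 0 < y) :
    Fi ρ x y ≤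
      (M ^ 2 + 1) * (ρ univ).toReal / ((max (|x| - M) 0) ^ 2 + y ^ 2) := by
  have hden : 0 < (max (|x| - M) 0) ^ 2 + y ^ 2 := by positivity
  rw [Fi]
  have h1 : (∫ s, (s ^ 2 + 1) / ((x - s) ^ 2 + y ^ 2) ∂ρ) ≤
      ∫ _, (M ^ 2 + 1) / ((max (|x| - M) 0) ^ 2 + y ^ 2) ∂ρ := by
    refine integral_mono_ae (integrand_integrable hM hy) (integrable_const _) ?_
    filter_upwards [hM] with s hs
    have hxs : max (|x| - M) 0 ≤ |x - s| := by
      rcases max_cases (|x| - M) 0 with ⟨h, _⟩ | ⟨h, _⟩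
      · rw [h]; have := abs_sub_abs_le_abs_sub x s; linarith
      · rw [h]; exact abs_nonneg _
    have hxs2 : (max (|x| - M) 0) ^ 2 ≤ (x - s) ^ 2 := by
      rw [← sq_abs (x - s)]
      exact pow_le_pow_left₀ (le_max_right _ _) hxs 2
    apply div_le_div₀ (by positivity) (by nlinarith [abs_nonneg s, sq_abs s]) hden
      (by nlinarith)
  rw [integral_const, smul_eq_mul] at h1
  calc _ ≤ _ := h1
    _ = _ := by rw [measureReal_def]; ring

lemma F_anti (hM : ∀ᵐ s ∂ρ, |s| ≤ M) {x y₁ y₂ : ℝ} (h1 : 0 < y₁) (h2 : y₁ ≤ y₂) :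
    Fi ρ x y₂ ≤ Fi ρ x y₁ := by
  rw [Fi, Fi]
  refine integral_mono_ae (integrand_integrable hM (h1.trans_le h2))
    (integrand_integrable hM h1) (ae_of_all _ fun s => ?_)
  have d1 : (0:ℝ) < (x - s) ^ 2 + y₁ ^ 2 := denom_pos h1.ne'
  exact div_le_div₀ (by positivity) le_rfl d1 (by nlinarith)

lemma F_contAt_s11 (hM : ∀ᵐ s ∂ρ, |s| ≤ M) {x y₀ : ℝ} (h0 : 0 < y₀) :
    ContinuousAt (Fi ρ x) y₀ := by
  have : Fi ρ x = fun y => ∫ s, (s ^ 2 + 1) / ((x - s) ^ 2 + y ^ 2) ∂ρ := rfl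
  rw [this]
  apply continuousAt_of_dominated (bound := fun _ => (M ^ 2 + 1) / (y₀ / 2) ^ 2)
  · filter_upwards [Ioi_mem_nhds (half_lt_self h0)] with y hy
    have : (0:ℝ) < y := lt_trans (by positivity) hy
    exact (integrand_cont this.ne').aestronglyMeasurable
  · filter_upwards [Ioi_mem_nhds (half_lt_self h0)] with y hy
    have hy' : (0:ℝ) < y := lt_trans (by positivity) hy
    filter_upwards [integrand_bound hM hy'] with s hs
    refine hs.trans (div_le_div₀ (by positivity) le_rfl (by positivity) (by nlinarith [(show y₀ / 2 < y from hy).le] : (y₀/2)^2 ≤ y^2))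
  · exact integrable_const _
  · refine ae_of_all _ fun s => ?_
    exact ContinuousAt.div continuousAt_const
      (by fun_prop) (denom_pos h0.ne').ne'

lemma S_nonempty (hM : ∀ᵐ s ∂ρ, |s| ≤ M) {x a : ℝ} (ha : 0 < a) :
    {y : ℝ | 0 < y ∧ Fi ρ x y ≤ a}.Nonempty := by
  set B := (M ^ 2 + 1) * (ρ univ).toReal with hB
  have hB0 : 0 ≤ B := by positivity
  have hy : (0:ℝ) < Real.sqrt (B / a) + 1 := by positivity
  refine ⟨Real.sqrt (B / a) + 1, hy, ?_⟩
  refine (F_le hM hy).trans ?_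
  rw [div_le_iff₀ (by positivity)]
  have h2 : B / a ≤ (Real.sqrt (B / a) + 1) ^ 2 := by
    nlinarith [Real.sq_sqrt (by positivity : (0:ℝ) ≤ B / a), Real.sqrt_nonneg (B / a)]
  have h3 : B ≤ (Real.sqrt (B / a) + 1) ^ 2 * a := (div_le_iff₀ ha).mp h2
  nlinarith [sq_nonneg (max (|x| - M) 0)]

lemma F_inf_eq (hM : ∀ᵐ s ∂ρ, |s| ≤ M) {x a : ℝ} (ha : 0 < a)
    (hf : 0 < sInf {y : ℝ | 0 < y ∧ Fi ρ x y ≤ a}) :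
    Fi ρ x (sInf {y : ℝ | 0 < y ∧ Fi ρ x y ≤ a}) = a := by
  set S := {y : ℝ | 0 < y ∧ Fi ρ x y ≤ a} with hS
  set f := sInf S with hfdef
  have hbd : BddBelow S := ⟨0, fun y hy => hy.1.le⟩
  have hne : S.Nonempty := S_nonempty hM ha
  have hub : ∀ y, f < y → Fi ρ x y ≤ a := by
    intro y hy
    obtain ⟨z, hzS, hzy⟩ := (csInf_lt_iff hbd hne).mp hy
    exact (F_anti hM hzS.1 hzy.le).trans hzS.2
  have hlb : ∀ y, 0 < y → y < f → a ≤ Fi ρ x y := by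
    intro y hy0 hyf
    by_contra h
    push_neg at h
    exact absurd (csInf_le hbd ⟨hy0, h.le⟩) (not_le.mpr hyf)
  have hcont : ContinuousAt (Fi ρ x) f := F_contAt_s11 hM hf
  have hle : Fi ρ x f ≤ a := by
    refine le_of_tendsto (hcont.tendsto.mono_left (nhdsWithin_le_nhds (s := Ioi f))) ?_
    filter_upwards [self_mem_nhdsWithin] with y hy using hub y hy
  have hge : a ≤ Fi ρ x f := by
    refine ge_of_tendsto (hcont.tendsto.mono_left (nhdsWithin_le_nhds (s := Iio f))) ?_
    filter_upwards [Ioo_mem_nhdsLT_of_mem (⟨hf, le_refl f⟩ : f ∈ Ioc 0 f)] with y hy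
    exact hlb y hy.1 hy.2
  linarith

lemma core_ineq {A f c Y D ε : ℝ} (hε : 0 < ε) (hc : 0 < c) (hA0 : 0 ≤ A)
    (hAD : A ≤ D ^ 2) (hcf : c ≤ f) (hfY : f ≤ Y) :
    A + f ^ 2 ≤ (1 - ((1 + ε) ^ 2 - 1) * c ^ 2 / (D ^ 2 + (1 + ε) ^ 2 * Y ^ 2)) *
      (A + (1 + ε) ^ 2 * f ^ 2) := by
  have hY : 0 < Y := lt_of_lt_of_le hc (hcf.trans hfY)
  have hQ : (0:ℝ) < D ^ 2 + (1 + ε) ^ 2 * Y ^ 2 := by positivity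
  have hcf2 : c ^ 2 ≤ f ^ 2 := pow_le_pow_left₀ hc.le hcf 2
  have hfY2 : f ^ 2 ≤ Y ^ 2 := pow_le_pow_left₀ (hc.le.trans hcf) hfY 2
  have he : (0:ℝ) ≤ (1 + ε) ^ 2 - 1 := by nlinarith
  have T1 : 0 ≤ ((1 + ε) ^ 2 - 1) * (D ^ 2 * f ^ 2 - A * c ^ 2) := by
    apply mul_nonneg he
    nlinarith [mul_le_mul hAD hcf2 (sq_nonneg c) (sq_nonneg D)]
  have T2 : 0 ≤ ((1 + ε) ^ 2 - 1) * ((1 + ε) ^ 2 * f ^ 2) * (Y ^ 2 - f ^ 2) := by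
    apply mul_nonneg (mul_nonneg he (by positivity))
    nlinarith
  have T3 : 0 ≤ ((1 + ε) ^ 2 - 1) * ((1 + ε) ^ 2 * f ^ 2) * (f ^ 2 - c ^ 2) := by
    apply mul_nonneg (mul_nonneg he (by positivity))
    nlinarith
  have key : (A + f ^ 2) * (D ^ 2 + (1 + ε) ^ 2 * Y ^ 2) ≤
      ((D ^ 2 + (1 + ε) ^ 2 * Y ^ 2) - ((1 + ε) ^ 2 - 1) * c ^ 2) *
        (A + (1 + ε) ^ 2 * f ^ 2) := by nlinarith [T1, T2, T3]
  have hrw : (1 - ((1 + ε) ^ 2 - 1) * c ^ 2 / (D ^ 2 + (1 + ε) ^ 2 * Y ^ 2)) *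
      (A + (1 + ε) ^ 2 * f ^ 2) =
      ((D ^ 2 + (1 + ε) ^ 2 * Y ^ 2) - ((1 + ε) ^ 2 - 1) * c ^ 2) *
        (A + (1 + ε) ^ 2 * f ^ 2) / (D ^ 2 + (1 + ε) ^ 2 * Y ^ 2) := by
    field_simp
  rw [hrw, le_div_iff₀ hQ]
  linarith [key]

set_option maxHeartbeats 2000000 in
/-- right continuity in `t`, uniformly on `{f_t ≥ c}`. -/
theorem f_right_continuity (ρ : Measure ℝ) [IsFiniteMeasure ρ] (hρ : ρ ≠ 0)
    (K : Set ℝ) (hK : IsCompact K) (hρK : ρ Kᶜ = 0)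
    (t : ℝ) (ht : 1 < t) (c : ℝ) (hc : 0 < c) (ε : ℝ) (hε : 0 < ε) :
    ∃ δ : ℝ, 0 < δ ∧ ∀ r : ℝ, t < r → r < t + δ → ∀ x : ℝ, c ≤ fFn ρ t x →
      fFn ρ t x < fFn ρ r x ∧ fFn ρ r x ≤ (1 + ε) * fFn ρ t x := by
  obtain ⟨M0, hM0⟩ := hK.isBounded.exists_norm_le
  set M := max M0 0 with hMdef
  have hMnn : (0:ℝ) ≤ M := le_max_right _ _
  have hM : ∀ᵐ s ∂ρ, |s| ≤ M := by
    have hKae : ∀ᵐ s ∂ρ, s ∈ K := by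
      rw [MeasureTheory.ae_iff]; exact hρK
    filter_upwards [hKae] with s hs using le_trans (hM0 s hs) (le_max_left _ _)
  have hρu : 0 < (ρ univ).toReal := ENNReal.toReal_pos
    (by simpa using (Measure.measure_univ_pos (μ := ρ)).mpr hρ) (measure_ne_top _ _)
  set B := (M ^ 2 + 1) * (ρ univ).toReal with hBdef
  have hB : 0 < B := by positivity
  have ht1 : 0 < t - 1 := by linarith
  have hat : 0 < 1 / (t - 1) := by positivity
  set R := M + Real.sqrt ((t - 1) * B) with hRdef
  have hRnn : 0 ≤ R := by positivity
  set Y := max c (Real.sqrt ((t - 1) * B) + 1) with hYdef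
  have hcY : c ≤ Y := le_max_left _ _
  have hY : 0 < Y := lt_of_lt_of_le hc hcY
  set D := R + M with hDdef
  have hDnn : 0 ≤ D := by positivity
  set κ := 1 - ((1 + ε) ^ 2 - 1) * c ^ 2 / (D ^ 2 + (1 + ε) ^ 2 * Y ^ 2) with hκdef
  have hQ : (0:ℝ) < D ^ 2 + (1 + ε) ^ 2 * Y ^ 2 := by positivity
  have hκ1 : κ < 1 := by
    have h1 : 0 < ((1 + ε) ^ 2 - 1) * c ^ 2 / (D ^ 2 + (1 + ε) ^ 2 * Y ^ 2) := by
      apply div_pos _ hQ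
      apply mul_pos (by nlinarith) (by positivity)
    rw [hκdef]; linarith
  have hκ0 : 0 < κ := by
    rw [hκdef, sub_pos, div_lt_one hQ]
    nlinarith [sq_nonneg D, pow_le_pow_left₀ hc.le hcY 2]
  refine ⟨(t - 1) * (1 / κ - 1), by nlinarith [one_lt_one_div hκ0 hκ1], ?_⟩
  intro r htr hrδ x hcf
  have hr1 : 0 < r - 1 := by linarith
  have har : 0 < 1 / (r - 1) := by positivity
  have hrt : 1 / (r - 1) < 1 / (t - 1) := one_div_lt_one_div_of_lt ht1 (by linarith)
  set St := {y : ℝ | 0 < y ∧ Fi ρ x y ≤ 1 / (t - 1)} with hStdef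
  set Sr := {y : ℝ | 0 < y ∧ Fi ρ x y ≤ 1 / (r - 1)} with hSrdef
  have hfS : fFn ρ t x = sInf St := rfl
  have hfSr : fFn ρ r x = sInf Sr := rfl
  set f := fFn ρ t x with hf
  have hf0 : 0 < f := lt_of_lt_of_le hc hcf
  have hbdt : BddBelow St := ⟨0, fun y hy => hy.1.le⟩
  have hbdr : BddBelow Sr := ⟨0, fun y hy => hy.1.le⟩
  have hner : Sr.Nonempty := S_nonempty hM har
  have hsub : Sr ⊆ St := fun y hy => ⟨hy.1, hy.2.trans hrt.le⟩
  have hFf : Fi ρ x f = 1 / (t - 1) := by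
    have h := F_inf_eq hM (x := x) hat (by rw [← hStdef, ← hfS]; exact hf0)
    rw [← hStdef, ← hfS] at h
    exact h
  -- f ≤ Y
  have hfY : f ≤ Y := by
    have hyt : Real.sqrt ((t - 1) * B) + 1 ∈ St := by
      refine ⟨by positivity, ?_⟩
      refine (F_le hM (by positivity)).trans ?_
      rw [← hBdef, div_le_div_iff₀ (by positivity) ht1]
      have h2 : (t - 1) * B ≤ (Real.sqrt ((t - 1) * B) + 1) ^ 2 := by
        nlinarith [Real.sq_sqrt (by positivity : (0:ℝ) ≤ (t - 1) * B),
          Real.sqrt_nonneg ((t - 1) * B)]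
      nlinarith [sq_nonneg (max (|x| - M) 0)]
    calc f = sInf St := hfS
      _ ≤ _ := csInf_le hbdt hyt
      _ ≤ Y := le_max_right _ _
  -- |x| ≤ R
  have hxR : |x| ≤ R := by
    have hc2 : c / 2 ∉ St := by
      intro hmem
      have : f ≤ c / 2 := by rw [hfS]; exact csInf_le hbdt hmem
      linarith
    have hFc2 : 1 / (t - 1) < Fi ρ x (c / 2) := by
      by_contra h
      push_neg at h
      exact hc2 ⟨by positivity, h⟩
    have hFle := F_le hM (show (0:ℝ) < c / 2 by positivity) (x := x)
    rw [← hBdef] at hFle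
    have hden : (0:ℝ) < (max (|x| - M) 0) ^ 2 + (c / 2) ^ 2 := by positivity
    have hlt := (div_lt_div_iff₀ ht1 hden).mp (lt_of_lt_of_le hFc2 hFle)
    have hmax : max (|x| - M) 0 < Real.sqrt ((t - 1) * B) := by
      rw [Real.lt_sqrt (le_max_right _ _)]
      nlinarith
    have h4 := le_max_left (|x| - M) 0
    rw [hRdef]; linarith
  -- key estimate
  have hεf : (0:ℝ) < (1 + ε) * f := by positivity
  have hKey : Fi ρ x ((1 + ε) * f) ≤ κ * (1 / (t - 1)) := by
    rw [← hFf]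
    have hda : Fi ρ x ((1 + ε) * f) =
        ∫ s, (s ^ 2 + 1) / ((x - s) ^ 2 + ((1 + ε) * f) ^ 2) ∂ρ := rfl
    have hdb : κ * Fi ρ x f = ∫ s, κ * ((s ^ 2 + 1) / ((x - s) ^ 2 + f ^ 2)) ∂ρ := by
      rw [Fi, integral_const_mul]
    rw [hda, hdb]
    refine integral_mono_ae (integrand_integrable hM hεf)
      ((integrand_integrable hM hf0).const_mul κ) ?_
    filter_upwards [hM] with s hs
    have hAD : (x - s) ^ 2 ≤ D ^ 2 := by
      have h1 : |x - s| ≤ D := by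
        calc |x - s| ≤ |x| + |s| := abs_sub x s
          _ ≤ R + M := add_le_add hxR hs
      calc (x - s) ^ 2 = |x - s| ^ 2 := (sq_abs _).symm
        _ ≤ D ^ 2 := pow_le_pow_left₀ (abs_nonneg _) h1 2
    have hcore := core_ineq (A := (x - s) ^ 2) hε hc (sq_nonneg _) hAD hcf hfY
    rw [← hκdef] at hcore
    have hd1 : (0:ℝ) < (x - s) ^ 2 + ((1 + ε) * f) ^ 2 := by positivity
    have hd2 : (0:ℝ) < (x - s) ^ 2 + f ^ 2 := by positivity
    rw [show κ * ((s ^ 2 + 1) / ((x - s) ^ 2 + f ^ 2)) =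
        κ * (s ^ 2 + 1) / ((x - s) ^ 2 + f ^ 2) from (mul_div_assoc _ _ _).symm,
      div_le_div_iff₀ hd1 hd2]
    nlinarith [mul_le_mul_of_nonneg_left hcore (show (0:ℝ) ≤ s ^ 2 + 1 by positivity)]
  -- membership
  have hmemr : (1 + ε) * f ∈ Sr := by
    refine ⟨hεf, hKey.trans ?_⟩
    rw [mul_one_div, div_le_div_iff₀ ht1 hr1]
    have he7 : t + (t - 1) * (1 / κ - 1) = 1 + (t - 1) / κ := by
      field_simp
      ring
    have h7 : r - 1 < (t - 1) / κ := by rw [he7] at hrδ; linarith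
    have h8 := mul_lt_mul_of_pos_right h7 hκ0
    rw [div_mul_cancel₀ _ hκ0.ne'] at h8
    linarith
  have hfr_le : fFn ρ r x ≤ (1 + ε) * f := by
    calc fFn ρ r x = sInf Sr := hfSr
      _ ≤ (1 + ε) * f := csInf_le hbdr hmemr
  have hf_le_fr : f ≤ fFn ρ r x := by
    calc f = sInf St := hfS
      _ ≤ sInf Sr := csInf_le_csInf hbdt hner hsub
      _ = fFn ρ r x := hfSr.symm
  have hfr0 : 0 < fFn ρ r x := lt_of_lt_of_le hf0 hf_le_fr
  have hFfr : Fi ρ x (fFn ρ r x) = 1 / (r - 1) := by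
    have h := F_inf_eq hM (x := x) har (by rw [← hSrdef, ← hfSr]; exact hfr0)
    rw [← hSrdef, ← hfSr] at h
    exact h
  refine ⟨lt_of_le_of_ne hf_le_fr (fun heq => ?_), hfr_le⟩
  rw [← heq, hFf] at hFfr
  linarith
end

section
/- For every t > 1, c > 0 and ε ∈ (0,1) there exists δ > 0 with δ < t − 1 such that for every r with t − δ < r < t and every x ∈ ℝ with f_t(x) ≥ c, one has (1−ε) f_t(x) ≤ f_r(x) < f_t(x). -/
open MeasureTheory

noncomputable def Faux (ρ : Measure ℝ) (x y : ℝ) : ℝ :=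
  ∫ s, (s ^ 2 + 1) / ((x - s) ^ 2 + y ^ 2) ∂ρ

lemma g_nonneg (x y s : ℝ) : 0 ≤ (s ^ 2 + 1) / ((x - s) ^ 2 + y ^ 2) := by positivity

lemma Faux_nonneg (ρ : Measure ℝ) (x y : ℝ) : 0 ≤ Faux ρ x y :=
  integral_nonneg fun s => g_nonneg x y s

lemma g_cont (x y : ℝ) (hy : 0 < y) :
    Continuous (fun s : ℝ => (s ^ 2 + 1) / ((x - s) ^ 2 + y ^ 2)) := by
  apply Continuous.div (by continuity) (by continuity)
  intro s
  have : 0 < (x - s) ^ 2 + y ^ 2 := by positivity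
  exact this.ne'

lemma integrable_g (ρ : Measure ℝ) [IsFiniteMeasure ρ] (x y : ℝ) (hy : 0 < y) :
    Integrable (fun s : ℝ => (s ^ 2 + 1) / ((x - s) ^ 2 + y ^ 2)) ρ := by
  refine Integrable.mono' (integrable_const (2 + (2 * x ^ 2 + 1) / y ^ 2))
    ((g_cont x y hy).aestronglyMeasurable) (Filter.Eventually.of_forall fun s => ?_)
  rw [Real.norm_eq_abs, abs_of_nonneg (g_nonneg x y s)]
  have hd : 0 < (x - s) ^ 2 + y ^ 2 := by positivity
  rw [div_le_iff₀ hd]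
  have hy2 : (0:ℝ) < y ^ 2 := by positivity
  have hc : (2 * x ^ 2 + 1) / y ^ 2 * y ^ 2 = 2 * x ^ 2 + 1 := div_mul_cancel₀ _ hy2.ne'
  have hc0 : 0 ≤ (2 * x ^ 2 + 1) / y ^ 2 := by positivity
  nlinarith [sq_nonneg (2 * x - s), mul_nonneg hc0 (sq_nonneg (x - s))]

lemma Faux_anti (ρ : Measure ℝ) [IsFiniteMeasure ρ] (x y y' : ℝ) (hy : 0 < y) (h : y ≤ y') :
    Faux ρ x y' ≤ Faux ρ x y := by
  refine integral_mono (integrable_g ρ x y' (hy.trans_le h)) (integrable_g ρ x y hy) fun s => ?_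
  have hd : 0 < (x - s) ^ 2 + y ^ 2 := by positivity
  have : y ^ 2 ≤ y' ^ 2 := by nlinarith
  exact div_le_div_of_nonneg_left (by positivity) hd (by nlinarith) |>.trans_eq rfl

lemma Faux_scale (ρ : Measure ℝ) [IsFiniteMeasure ρ] (x y l : ℝ) (hy : 0 < y)
    (hl0 : 0 < l) (hl1 : l ≤ 1) : Faux ρ x (l * y) ≤ Faux ρ x y / l ^ 2 := by
  have h1 : Faux ρ x (l * y) ≤ ∫ s, ((s ^ 2 + 1) / ((x - s) ^ 2 + y ^ 2)) / l ^ 2 ∂ρ := by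
    refine integral_mono (integrable_g ρ x (l * y) (by positivity))
      ((integrable_g ρ x y hy).div_const _) fun s => ?_
    have hd : 0 < (x - s) ^ 2 + (l * y) ^ 2 := by positivity
    have hd2 : 0 < l ^ 2 * ((x - s) ^ 2 + y ^ 2) := by positivity
    rw [div_div, div_le_div_iff₀ hd (by positivity)]
    have hll : l ^ 2 ≤ 1 := by nlinarith
    have h2 : l ^ 2 * ((x - s) ^ 2 + y ^ 2) ≤ (x - s) ^ 2 + (l * y) ^ 2 := by
      nlinarith [mul_le_mul_of_nonneg_right hll (sq_nonneg (x - s))]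
    nlinarith [sq_nonneg s, mul_le_mul_of_nonneg_left h2 (by positivity : (0:ℝ) ≤ s ^ 2 + 1)]
  simpa [integral_div, Faux] using h1

lemma inf_mem_eq (ρ : Measure ℝ) [IsFiniteMeasure ρ] (x t : ℝ) (ht : 1 < t)
    (hne : {y : ℝ | 0 < y ∧ Faux ρ x y ≤ 1 / (t - 1)}.Nonempty)
    (h0 : 0 < sInf {y : ℝ | 0 < y ∧ Faux ρ x y ≤ 1 / (t - 1)}) :
    Faux ρ x (sInf {y : ℝ | 0 < y ∧ Faux ρ x y ≤ 1 / (t - 1)}) = 1 / (t - 1) := by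
  have ht1 : 0 < t - 1 := by linarith
  set S := {y : ℝ | 0 < y ∧ Faux ρ x y ≤ 1 / (t - 1)} with hS
  set y₀ := sInf S with hy₀
  have hbdd : BddBelow S := ⟨0, fun z hz => hz.1.le⟩
  have hle : Faux ρ x y₀ ≤ 1 / (t - 1) := by
    by_contra hlt
    push_neg at hlt
    have hF1 : 1 < Faux ρ x y₀ * (t - 1) := (div_lt_iff₀ ht1).mp hlt
    set q := (Faux ρ x y₀ * (t - 1) + 1) / 2 with hq
    have hq1 : 1 < q := by linarith
    have hqF : q < Faux ρ x y₀ * (t - 1) := by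
      simp only [hq]; linarith
    have hsq1 : 1 < Real.sqrt q := by
      rw [show (1:ℝ) = Real.sqrt 1 by simp]
      exact Real.sqrt_lt_sqrt (by norm_num) hq1
    have hy : y₀ < Real.sqrt q * y₀ := by nlinarith
    obtain ⟨z, hz, hzlt⟩ := exists_lt_of_csInf_lt hne hy
    have hy0z : y₀ ≤ z := csInf_le hbdd hz
    have hz0 : 0 < z := hz.1
    have hscale := Faux_scale ρ x z (y₀ / z) hz0 (by positivity)
      (by rw [div_le_one hz0]; exact hy0z)
    rw [div_mul_cancel₀ _ hz0.ne'] at hscale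
    rw [div_pow, div_div_eq_mul_div] at hscale
    -- hscale : Faux ρ x y₀ ≤ Faux ρ x z * z ^ 2 / y₀ ^ 2
    have hqpos : 0 < q := by linarith
    have hz2 : z ^ 2 < q * y₀ ^ 2 := by
      nlinarith [Real.sq_sqrt hqpos.le, Real.sqrt_nonneg q, hz0, h0]
    have h5 : Faux ρ x y₀ * y₀ ^ 2 ≤ Faux ρ x z * z ^ 2 := by
      calc Faux ρ x y₀ * y₀ ^ 2 ≤ (Faux ρ x z * z ^ 2 / y₀ ^ 2) * y₀ ^ 2 :=
            mul_le_mul_of_nonneg_right hscale (sq_nonneg _)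
        _ = Faux ρ x z * z ^ 2 := div_mul_cancel₀ _ (pow_pos h0 2).ne'
    have h6 : Faux ρ x z * z ^ 2 < (1 / (t - 1)) * (q * y₀ ^ 2) := by
      calc Faux ρ x z * z ^ 2 ≤ (1 / (t - 1)) * z ^ 2 :=
            mul_le_mul_of_nonneg_right hz.2 (sq_nonneg _)
        _ < (1 / (t - 1)) * (q * y₀ ^ 2) :=
            mul_lt_mul_of_pos_left hz2 (by positivity)
    have h7 : (1 / (t - 1)) * (q * y₀ ^ 2) < Faux ρ x y₀ * y₀ ^ 2 := by
      have hqq : (1 / (t - 1)) * q < Faux ρ x y₀ := by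
        rw [one_div_mul_eq_div, div_lt_iff₀ ht1]
        exact hqF
      calc (1 / (t - 1)) * (q * y₀ ^ 2) = ((1 / (t - 1)) * q) * y₀ ^ 2 := by ring
        _ < Faux ρ x y₀ * y₀ ^ 2 := mul_lt_mul_of_pos_right hqq (pow_pos h0 2)
    linarith
  have hge : 1 / (t - 1) ≤ Faux ρ x y₀ := by
    by_contra hlt
    push_neg at hlt
    set a := (t - 1) * Faux ρ x y₀ with ha
    have ha0 : 0 ≤ a := mul_nonneg ht1.le (Faux_nonneg ρ x y₀)
    have ha1 : a < 1 := by
      have := (lt_div_iff₀ ht1).mp hlt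
      simp only [ha]; nlinarith
    set l := Real.sqrt ((a + 1) / 2) with hl
    have hl0 : 0 < l := Real.sqrt_pos.mpr (by linarith)
    have hl2 : l ^ 2 = (a + 1) / 2 := Real.sq_sqrt (by linarith)
    have hl1 : l < 1 := by
      rw [show (1:ℝ) = Real.sqrt 1 by simp]
      exact Real.sqrt_lt_sqrt (by linarith) (by linarith)
    have hmem : l * y₀ ∈ S := by
      refine ⟨by positivity, ?_⟩
      have h1 := Faux_scale ρ x y₀ l h0 hl0 hl1.le
      refine h1.trans ?_
      rw [hl2, div_le_div_iff₀ (by linarith) ht1]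
      have : Faux ρ x y₀ * (t - 1) = a := by rw [ha]; ring
      rw [this]
      linarith
    have := csInf_le hbdd hmem
    nlinarith
  linarith

lemma fFn_eq (ρ : Measure ℝ) (t x : ℝ) :
    fFn ρ t x = sInf {y : ℝ | 0 < y ∧ Faux ρ x y ≤ 1 / (t - 1)} := rfl

set_option maxHeartbeats 1000000 in
/-- left continuity in `t`, uniformly on `{f_t ≥ c}`. -/
theorem f_left_continuity (ρ : Measure ℝ) [IsFiniteMeasure ρ] (hρ : ρ ≠ 0)
    (K : Set ℝ) (hK : IsCompact K) (hρK : ρ Kᶜ = 0)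
    (t : ℝ) (ht : 1 < t) (c : ℝ) (hc : 0 < c) (ε : ℝ) (hε0 : 0 < ε) (hε1 : ε < 1) :
    ∃ δ : ℝ, 0 < δ ∧ δ < t - 1 ∧ ∀ r : ℝ, t - δ < r → r < t → ∀ x : ℝ, c ≤ fFn ρ t x →
      (1 - ε) * fFn ρ t x ≤ fFn ρ r x ∧ fFn ρ r x < fFn ρ t x := by
  have ht1 : 0 < t - 1 := by linarith
  obtain ⟨C, hC⟩ := hK.isBounded.subset_closedBall 0
  have hKne : K.Nonempty := by
    by_contra h
    rw [Set.not_nonempty_iff_eq_empty] at h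
    exact hρ (Measure.measure_univ_eq_zero.mp (by simpa [h] using hρK))
  obtain ⟨s₁, hs₁⟩ := hKne
  have hC0 : 0 ≤ C := le_trans dist_nonneg (hC hs₁)
  have haeK : ∀ᵐ s ∂ρ, s ∈ K := by
    rw [MeasureTheory.ae_iff]
    exact hρK
  have hpoly : Integrable (fun s : ℝ => s ^ 2 + 1) ρ := by
    refine Integrable.mono' (integrable_const (C ^ 2 + 1)) ((by continuity : Continuous fun s : ℝ => s ^ 2 + 1).aestronglyMeasurable) ?_
    filter_upwards [haeK] with s hs
    have h1 : |s| ≤ C := by simpa [Real.dist_eq] using hC hs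
    rw [Real.norm_eq_abs, abs_of_nonneg (by positivity)]
    nlinarith [abs_nonneg s, sq_abs s]
  set M := ∫ s, (s ^ 2 + 1) ∂ρ with hM
  have hM0 : 0 < M := by
    have h1 : (0:ℝ) < (ρ Set.univ).toReal := by
      refine ENNReal.toReal_pos ?_ (measure_ne_top ρ _)
      simpa [Measure.measure_univ_eq_zero] using hρ
    refine h1.trans_le ?_
    have h2 : (ρ Set.univ).toReal = ∫ _s, (1:ℝ) ∂ρ := by simp [measureReal_def]
    rw [h2]
    exact integral_mono (integrable_const 1) hpoly (fun s => by nlinarith [sq_nonneg s])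
  set Y := Real.sqrt (M * (t - 1)) with hYdef
  have hY0 : 0 < Y := Real.sqrt_pos.mpr (by positivity)
  have hY2 : Y ^ 2 = M * (t - 1) := Real.sq_sqrt (by positivity)
  have hFle : ∀ x y : ℝ, 0 < y → Faux ρ x y ≤ M / y ^ 2 := by
    intro x y hy
    have h1 : Faux ρ x y ≤ ∫ s, (s ^ 2 + 1) / y ^ 2 ∂ρ := by
      refine integral_mono (integrable_g ρ x y hy) (hpoly.div_const _) fun s => ?_
      exact div_le_div_of_nonneg_left (by positivity) (by positivity)
        (by nlinarith [sq_nonneg (x - s)])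
    simpa [integral_div] using h1
  have hYmem : ∀ x : ℝ, Faux ρ x Y ≤ 1 / (t - 1) := by
    intro x
    have h1 := hFle x Y hY0
    rw [hY2] at h1
    refine h1.trans_eq ?_
    rw [eq_div_iff ht1.ne']
    field_simp
  set U := (Real.sqrt (M * (t - 1) + 1) + 2 * C) ^ 2 with hUdef
  have hU0 : 0 < U + Y ^ 2 := add_pos_of_nonneg_of_pos (sq_nonneg _) (pow_pos hY0 2)
  have hεsq : 0 < 1 - (1 - ε) ^ 2 := by nlinarith
  set η := c ^ 2 * (1 - (1 - ε) ^ 2) / (U + Y ^ 2) with hηdef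
  have hη0 : 0 < η := div_pos (mul_pos (pow_pos hc 2) hεsq) hU0
  have h1η : 0 < 1 + η := by linarith
  refine ⟨(t - 1) * η / (1 + η), div_pos (mul_pos ht1 hη0) h1η, ?_, ?_⟩
  · rw [div_lt_iff₀ h1η]
    nlinarith
  intro r hr1 hr2 x hx
  have hrt : (t - 1) / (1 + η) < r - 1 := by
    rw [div_lt_iff₀ h1η]
    have h2 : (t - 1) * η / (1 + η) * (1 + η) = (t - 1) * η := div_mul_cancel₀ _ h1η.ne'
    nlinarith
  have hrt1 : 0 < r - 1 := lt_trans (div_pos ht1 h1η) hrt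
  have hrtlt : 1 / (r - 1) < (1 + η) / (t - 1) := by
    rw [div_lt_div_iff₀ hrt1 ht1]
    nlinarith [mul_lt_mul_of_pos_left hrt h1η, div_mul_cancel₀ (t - 1) h1η.ne']
  set y₀ := fFn ρ t x with hy₀def
  have hy₀0 : 0 < y₀ := lt_of_lt_of_le hc hx
  have hSt_ne : ({y : ℝ | 0 < y ∧ Faux ρ x y ≤ 1 / (t - 1)}).Nonempty := ⟨Y, hY0, hYmem x⟩
  have hFeq : Faux ρ x y₀ = 1 / (t - 1) := by
    rw [hy₀def, fFn_eq]
    exact inf_mem_eq ρ x t ht hSt_ne (by rw [← fFn_eq]; exact hy₀0)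
  have hbddt : BddBelow {y : ℝ | 0 < y ∧ Faux ρ x y ≤ 1 / (t - 1)} :=
    ⟨0, fun z hz => hz.1.le⟩
  have hy₀Y : y₀ ≤ Y := by
    rw [hy₀def, fFn_eq]
    exact csInf_le hbddt ⟨hY0, hYmem x⟩
  -- location of x relative to K
  have hUx : ∀ s ∈ K, (x - s) ^ 2 ≤ U := by
    have hex : ∃ s₀ ∈ K, (x - s₀) ^ 2 ≤ M * (t - 1) + 1 := by
      by_contra hcon
      push_neg at hcon
      have hMt1 : 0 < M * (t - 1) + 1 := by positivity
      have hb : Faux ρ x y₀ ≤ ∫ s, (s ^ 2 + 1) / (M * (t - 1) + 1) ∂ρ := by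
        refine integral_mono_ae (integrable_g ρ x y₀ hy₀0) (hpoly.div_const _) ?_
        filter_upwards [haeK] with s hs
        have h2 := hcon s hs
        exact div_le_div_of_nonneg_left (by positivity) hMt1
          (by nlinarith [sq_nonneg y₀])
      rw [hFeq] at hb
      rw [show (∫ s, (s ^ 2 + 1) / (M * (t - 1) + 1) ∂ρ) = M / (M * (t - 1) + 1) by
        rw [integral_div]] at hb
      rw [div_le_div_iff₀ ht1 hMt1] at hb
      nlinarith
    obtain ⟨s₀, hs₀K, hs₀⟩ := hex
    intro s hs
    have h1 : |x - s₀| ≤ Real.sqrt (M * (t - 1) + 1) := by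
      rw [← Real.sqrt_sq_eq_abs]
      exact Real.sqrt_le_sqrt hs₀
    have h2 : |s₀| ≤ C := by simpa [Real.dist_eq] using hC hs₀K
    have h3 : |s| ≤ C := by simpa [Real.dist_eq] using hC hs
    have h4 : |x - s| ≤ Real.sqrt (M * (t - 1) + 1) + 2 * C := by
      have h5 : |x - s| ≤ |x - s₀| + |s₀ - s| := by
        calc |x - s| = |(x - s₀) + (s₀ - s)| := by ring_nf
          _ ≤ |x - s₀| + |s₀ - s| := abs_add_le _ _
      have h6 : |s₀ - s| ≤ |s₀| + |s| := by
        calc |s₀ - s| = |s₀ + (-s)| := by ring_nf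
          _ ≤ |s₀| + |(-s)| := abs_add_le _ _
          _ = |s₀| + |s| := by rw [abs_neg]
      linarith
    calc (x - s) ^ 2 = |x - s| ^ 2 := (sq_abs _).symm
      _ ≤ (Real.sqrt (M * (t - 1) + 1) + 2 * C) ^ 2 :=
          pow_le_pow_left₀ (abs_nonneg _) h4 2
  -- key lower estimate
  have h1ε : 0 < 1 - ε := by linarith
  have hkey : (1 + η) / (t - 1) ≤ Faux ρ x ((1 - ε) * y₀) := by
    have h1 : ∫ s, (1 + η) * ((s ^ 2 + 1) / ((x - s) ^ 2 + y₀ ^ 2)) ∂ρ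
        ≤ Faux ρ x ((1 - ε) * y₀) := by
      refine integral_mono_ae ((integrable_g ρ x y₀ hy₀0).const_mul _)
        (integrable_g ρ x ((1 - ε) * y₀) (mul_pos h1ε hy₀0)) ?_
      filter_upwards [haeK] with s hs
      have hU := hUx s hs
      have hd1 : 0 < (x - s) ^ 2 + y₀ ^ 2 :=
        add_pos_of_nonneg_of_pos (sq_nonneg _) (pow_pos hy₀0 2)
      have hd2 : 0 < (x - s) ^ 2 + ((1 - ε) * y₀) ^ 2 :=
        add_pos_of_nonneg_of_pos (sq_nonneg _) (pow_pos (mul_pos h1ε hy₀0) 2)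
      rw [← mul_div_assoc, div_le_div_iff₀ hd1 hd2]
      have hmain : (1 + η) * ((x - s) ^ 2 + ((1 - ε) * y₀) ^ 2) ≤ (x - s) ^ 2 + y₀ ^ 2 := by
        have hd2U : (x - s) ^ 2 + ((1 - ε) * y₀) ^ 2 ≤ U + Y ^ 2 := by
          nlinarith [hy₀Y, hy₀0.le, hε0, hε1, hU]
        have hηd : η * (U + Y ^ 2) = c ^ 2 * (1 - (1 - ε) ^ 2) :=
          div_mul_cancel₀ _ hU0.ne'
        have hcy : c ^ 2 ≤ y₀ ^ 2 := by nlinarith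
        nlinarith [mul_le_mul_of_nonneg_left hd2U hη0.le,
          mul_le_mul_of_nonneg_right hcy hεsq.le]
      nlinarith [mul_le_mul_of_nonneg_left hmain (by positivity : (0:ℝ) ≤ s ^ 2 + 1)]
    rw [integral_const_mul] at h1
    have h2 : (∫ s, (s ^ 2 + 1) / ((x - s) ^ 2 + y₀ ^ 2) ∂ρ) = Faux ρ x y₀ := rfl
    rw [h2, hFeq, mul_one_div] at h1
    exact h1
  have hSr_ne : ({y : ℝ | 0 < y ∧ Faux ρ x y ≤ 1 / (r - 1)}).Nonempty := by
    refine ⟨Y, hY0, (hYmem x).trans ?_⟩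
    exact one_div_le_one_div_of_le hrt1 (by linarith)
  have hbddr : BddBelow {y : ℝ | 0 < y ∧ Faux ρ x y ≤ 1 / (r - 1)} :=
    ⟨0, fun z hz => hz.1.le⟩
  constructor
  · rw [fFn_eq]
    refine le_csInf hSr_ne fun z hz => ?_
    by_contra hzc
    push_neg at hzc
    have hmono := Faux_anti ρ x z ((1 - ε) * y₀) hz.1 hzc.le
    linarith [hz.2, hkey, hrtlt]
  · set l := Real.sqrt ((r - 1) / (t - 1)) with hldef
    have hl2 : l ^ 2 = (r - 1) / (t - 1) := Real.sq_sqrt (div_nonneg hrt1.le ht1.le)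
    have hl0 : 0 < l := Real.sqrt_pos.mpr (div_pos hrt1 ht1)
    have hl1 : l < 1 := by
      rw [show (1:ℝ) = Real.sqrt 1 by simp]
      exact Real.sqrt_lt_sqrt (div_nonneg hrt1.le ht1.le) ((div_lt_one ht1).mpr (by linarith))
    have hmem : l * y₀ ∈ {y : ℝ | 0 < y ∧ Faux ρ x y ≤ 1 / (r - 1)} := by
      refine ⟨mul_pos hl0 hy₀0, ?_⟩
      refine (Faux_scale ρ x y₀ l hy₀0 hl0 hl1.le).trans ?_
      rw [hFeq, hl2]
      have heq : (1:ℝ) / (t - 1) / ((r - 1) / (t - 1)) = 1 / (r - 1) := by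
        rw [div_div_eq_mul_div, div_mul_eq_mul_div, mul_comm,
          mul_one, div_self ht1.ne']
      rw [heq]
    have h1 : fFn ρ r x ≤ l * y₀ := by
      rw [fFn_eq]
      exact csInf_le hbddr hmem
    have h2 : l * y₀ < y₀ := by nlinarith
    linarith
end

section
/- Tail estimate: let t > 1, x ∈ ℝ, and suppose 0 < f_t(x) ≤ y. Then ∫_{{s ∈ ℝ : (x−s)² ≥ y}} (s²+1) · [ 1/((x−s)² + f_t(x)²) − 1/((x−s)² + y²) ] dρ(s) ≤ √(y² − f_t(x)²) / (t−1). -/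
set_option maxHeartbeats 1000000


open MeasureTheory Filter Topology

/-- tail estimate. -/
theorem tail_estimate (ρ : Measure ℝ) [IsFiniteMeasure ρ] (hρ : ρ ≠ 0)
    (K : Set ℝ) (hK : IsCompact K) (hρK : ρ Kᶜ = 0)
    (t : ℝ) (ht : 1 < t) (x : ℝ) (y : ℝ)
    (hf : 0 < fFn ρ t x) (hy : fFn ρ t x ≤ y) :
    (∫ s in {s : ℝ | y ≤ (x - s) ^ 2},
        (s ^ 2 + 1) * (1 / ((x - s) ^ 2 + (fFn ρ t x) ^ 2) - 1 / ((x - s) ^ 2 + y ^ 2)) ∂ρ)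
      ≤ Real.sqrt (y ^ 2 - (fFn ρ t x) ^ 2) / (t - 1) := by
  set a := fFn ρ t x with ha
  set g : ℝ → ℝ → ℝ := fun c s => (s ^ 2 + 1) / ((x - s) ^ 2 + c ^ 2) with hg
  have hy0 : 0 < y := lt_of_lt_of_le hf hy
  have hdenpos : ∀ c : ℝ, c ≠ 0 → ∀ s : ℝ, 0 < (x - s) ^ 2 + c ^ 2 := by
    intro c hc s; positivity
  have hcont : ∀ c : ℝ, c ≠ 0 → Continuous (g c) := by
    intro c hc
    apply Continuous.div (by continuity) (by continuity)
    intro s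
    exact ne_of_gt (hdenpos c hc s)
  have hint : ∀ c : ℝ, c ≠ 0 → Integrable (g c) ρ := by
    intro c hc
    have h1 : IntegrableOn (g c) K ρ :=
      ((hcont c hc).continuousOn).integrableOn_compact hK
    have h2 : IntegrableOn (g c) Kᶜ ρ := by
      rw [IntegrableOn, Measure.restrict_eq_zero.mpr hρK]
      exact integrable_zero_measure
    have h3 := h1.union h2
    rwa [Set.union_compl_self, integrableOn_univ] at h3
  have hnonneg : ∀ c s : ℝ, 0 ≤ g c s := by
    intro c s
    apply div_nonneg (by positivity) (by positivity)
  have hmono : ∀ c d : ℝ, 0 < c → c ≤ d → ∀ s, g d s ≤ g c s := by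
    intro c d hc hcd s
    have h1 : (x - s) ^ 2 + c ^ 2 ≤ (x - s) ^ 2 + d ^ 2 := by nlinarith
    exact div_le_div_of_nonneg_left (by positivity) (by positivity) h1
  -- Key: the integral at a = fFn itself is ≤ 1/(t-1)
  set S := {z : ℝ | 0 < z ∧ (∫ s, (s ^ 2 + 1) / ((x - s) ^ 2 + z ^ 2) ∂ρ) ≤ 1 / (t - 1)}
    with hSdef
  have hS : a = sInf S := by rw [ha, fFn]
  have hbdd : BddBelow S := ⟨0, fun z hz => le_of_lt hz.1⟩
  have hne : S.Nonempty := by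
    by_contra h
    rw [Set.not_nonempty_iff_eq_empty] at h
    rw [hS, h, Real.sInf_empty] at hf
    exact lt_irrefl 0 hf
  have hseq : ∀ n : ℕ, (∫ s, g (a + 1 / (n + 1)) s ∂ρ) ≤ 1 / (t - 1) := by
    intro n
    have hpos : (0:ℝ) < 1 / ((n:ℝ) + 1) := by positivity
    have hlt : sInf S < a + 1 / ((n:ℝ) + 1) := by rw [← hS]; linarith
    obtain ⟨z, hzS, hz⟩ := (csInf_lt_iff hbdd hne).mp hlt
    have hza : a ≤ z := hS ▸ csInf_le hbdd hzS
    have h1 : (∫ s, g (a + 1 / (n + 1)) s ∂ρ) ≤ ∫ s, g z s ∂ρ := by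
      apply integral_mono (hint _ (by positivity)) (hint _ (ne_of_gt hzS.1))
      intro s
      exact hmono z _ hzS.1 (le_of_lt hz) s
    exact h1.trans hzS.2
  have htend : Tendsto (fun n : ℕ => ∫ s, g (a + 1 / (n + 1)) s ∂ρ) atTop
      (𝓝 (∫ s, g a s ∂ρ)) := by
    apply tendsto_integral_of_dominated_convergence (g a)
      (fun n => ((hcont _ (by positivity)).aestronglyMeasurable)) (hint a (ne_of_gt hf))
    · intro n
      filter_upwards with s
      rw [Real.norm_eq_abs, abs_of_nonneg (hnonneg _ s)]
      exact hmono a _ hf (le_add_of_nonneg_right (by positivity)) s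
    · filter_upwards with s
      have h1 : Tendsto (fun n : ℕ => a + 1 / ((n:ℝ) + 1)) atTop (𝓝 a) := by
        have : Tendsto (fun n : ℕ => 1 / ((n : ℝ) + 1)) atTop (𝓝 0) :=
          tendsto_one_div_add_atTop_nhds_zero_nat
        have h2 := this.const_add a
        simpa using h2
      have h3 : ContinuousAt (fun c : ℝ => (s ^ 2 + 1) / ((x - s) ^ 2 + c ^ 2)) a := by
        apply ContinuousAt.div (by fun_prop) (by fun_prop)
        exact ne_of_gt (hdenpos a (ne_of_gt hf) s)
      exact h3.tendsto.comp h1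
  have key : (∫ s, g a s ∂ρ) ≤ 1 / (t - 1) :=
    le_of_tendsto htend (Filter.Eventually.of_forall hseq)
  -- Now the main estimate
  set r := Real.sqrt (y ^ 2 - a ^ 2) with hr
  have hr0 : 0 ≤ r := Real.sqrt_nonneg _
  have hya : 0 ≤ y ^ 2 - a ^ 2 := by nlinarith
  have hr2 : r ^ 2 = y ^ 2 - a ^ 2 := Real.sq_sqrt hya
  have hry : r ≤ y := by
    rw [hr]
    calc Real.sqrt (y ^ 2 - a ^ 2) ≤ Real.sqrt (y ^ 2) := Real.sqrt_le_sqrt (by nlinarith)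
    _ = y := Real.sqrt_sq (le_of_lt hy0)
  have hEmeas : MeasurableSet {s : ℝ | y ≤ (x - s) ^ 2} :=
    (isClosed_le continuous_const (by continuity)).measurableSet
  -- pointwise bound on the region
  have hpt : ∀ s ∈ {s : ℝ | y ≤ (x - s) ^ 2},
      (s ^ 2 + 1) * (1 / ((x - s) ^ 2 + a ^ 2) - 1 / ((x - s) ^ 2 + y ^ 2))
        ≤ r * g a s := by
    intro s hs
    have hsE : y ≤ (x - s) ^ 2 := hs
    have hA : 0 < (x - s) ^ 2 + a ^ 2 := hdenpos a (ne_of_gt hf) s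
    have hB : 0 < (x - s) ^ 2 + y ^ 2 := hdenpos y (ne_of_gt hy0) s
    have hrB : r ≤ (x - s) ^ 2 + y ^ 2 := by nlinarith
    have h1 : (1:ℝ) / ((x - s) ^ 2 + a ^ 2) - 1 / ((x - s) ^ 2 + y ^ 2)
        = (y ^ 2 - a ^ 2) / (((x - s) ^ 2 + a ^ 2) * ((x - s) ^ 2 + y ^ 2)) := by
      field_simp
      ring
    rw [h1]
    have h2 : (y ^ 2 - a ^ 2) / ((x - s) ^ 2 + y ^ 2) ≤ r := by
      rw [div_le_iff₀ hB]
      calc y ^ 2 - a ^ 2 = r * r := by rw [← hr2]; ring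
        _ ≤ r * ((x - s) ^ 2 + y ^ 2) := mul_le_mul_of_nonneg_left hrB hr0
    have h3 : (s ^ 2 + 1) * ((y ^ 2 - a ^ 2) /
        (((x - s) ^ 2 + a ^ 2) * ((x - s) ^ 2 + y ^ 2)))
        = g a s * ((y ^ 2 - a ^ 2) / ((x - s) ^ 2 + y ^ 2)) := by
      rw [hg]
      field_simp
    rw [h3]
    calc g a s * ((y ^ 2 - a ^ 2) / ((x - s) ^ 2 + y ^ 2))
        ≤ g a s * r := mul_le_mul_of_nonneg_left h2 (hnonneg a s)
      _ = r * g a s := mul_comm _ _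
  -- integrability facts
  have hinth : Integrable (fun s => (s ^ 2 + 1) *
      (1 / ((x - s) ^ 2 + a ^ 2) - 1 / ((x - s) ^ 2 + y ^ 2))) ρ := by
    have heq : (fun s => (s ^ 2 + 1) *
        (1 / ((x - s) ^ 2 + a ^ 2) - 1 / ((x - s) ^ 2 + y ^ 2)))
        = fun s => g a s - g y s := by
      funext s
      rw [hg]
      simp only [mul_sub, mul_one_div]
    rw [heq]
    exact (hint a (ne_of_gt hf)).sub (hint y (ne_of_gt hy0))
  have hintr : Integrable (fun s => r * g a s) ρ := (hint a (ne_of_gt hf)).const_mul r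
  calc (∫ s in {s : ℝ | y ≤ (x - s) ^ 2},
        (s ^ 2 + 1) * (1 / ((x - s) ^ 2 + a ^ 2) - 1 / ((x - s) ^ 2 + y ^ 2)) ∂ρ)
      ≤ ∫ s in {s : ℝ | y ≤ (x - s) ^ 2}, r * g a s ∂ρ := by
        apply setIntegral_mono_on hinth.integrableOn hintr.integrableOn hEmeas hpt
    _ ≤ ∫ s, r * g a s ∂ρ := by
        apply setIntegral_le_integral hintr
        filter_upwards with s
        exact mul_nonneg hr0 (hnonneg a s)
    _ = r * ∫ s, g a s ∂ρ := integral_const_mul r _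
    _ ≤ r * (1 / (t - 1)) := mul_le_mul_of_nonneg_left key hr0
    _ = r / (t - 1) := by rw [mul_one_div]
end

section
/- Hausdorff continuity of the graphs of f_t: assume in addition that ρ has only finitely many atoms. For t > 1 let Γ_t = { (x, f_t(x)) : x ∈ V_t⁺ } ⊆ ℝ². Then for every t > 1 and every ε > 0 there exists δ > 0 such that for all r > 1 with |r − t| < δ, Γ_r is contained in the open ε-thickening { p ∈ ℝ² : ∃ q ∈ Γ_t, ‖p − q‖ < ε } of Γ_t (with respect to the Euclidean norm on ℝ²), and Γ_t is contained in the open ε-thickening of Γ_r. -/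
open MeasureTheory Filter Topology Set

set_option maxHeartbeats 2000000
set_option linter.unusedSectionVars false
set_option linter.unusedVariables false
set_option linter.unreachableTactic false
set_option linter.unusedTactic false
set_option linter.unnecessarySimpa false

/-- The graph `Γ_t = { (x, f_t(x)) : x ∈ V_t⁺ } ⊆ ℝ²`. -/
noncomputable def graphF (ρ : Measure ℝ) (t : ℝ) : Set (ℝ × ℝ) :=
  {p : ℝ × ℝ | p.1 ∈ Vplus ρ t ∧ p.2 = fFn ρ t p.1}

/-- The open `ε`-thickening of a subset of `ℝ²`, with respect to the Euclidean norm. -/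
def thick2 (ε : ℝ) (A : Set (ℝ × ℝ)) : Set (ℝ × ℝ) :=
  {p : ℝ × ℝ | ∃ q ∈ A, Real.sqrt ((p.1 - q.1) ^ 2 + (p.2 - q.2) ^ 2) < ε}

noncomputable def FF (ρ : Measure ℝ) (x y : ℝ) : ℝ :=
  ∫ s, (s ^ 2 + 1) / ((x - s) ^ 2 + y ^ 2) ∂ρ

section proofs
variable {ρ : Measure ℝ} [IsFiniteMeasure ρ] {R : ℝ}

lemma ker_cont (x y : ℝ) (hy : y ≠ 0) :
    Continuous (fun s : ℝ => (s ^ 2 + 1) / ((x - s) ^ 2 + y ^ 2)) := by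
  apply Continuous.div (by continuity) (by continuity)
  intro s
  have h1 : (0:ℝ) ≤ (x - s)^2 := sq_nonneg _
  have h2 : (0:ℝ) < y^2 := by positivity
  nlinarith

lemma ker_pos (x y s : ℝ) (hy : y ≠ 0) : 0 < (s ^ 2 + 1) / ((x - s) ^ 2 + y ^ 2) := by
  have h1 : (0:ℝ) ≤ (x - s)^2 := sq_nonneg _
  have h2 : (0:ℝ) < y^2 := by positivity
  positivity

lemma integrable_ker (hae : ∀ᵐ s ∂ρ, |s| ≤ R) (x y : ℝ) (hy : y ≠ 0) :
    Integrable (fun s : ℝ => (s ^ 2 + 1) / ((x - s) ^ 2 + y ^ 2)) ρ := by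
  refine (integrable_const ((R ^ 2 + 1) / y ^ 2)).mono'
    (ker_cont x y hy).aestronglyMeasurable ?_
  filter_upwards [hae] with s hs
  have h2 : (0:ℝ) < y^2 := by positivity
  have h1 : (0:ℝ) ≤ (x - s)^2 := sq_nonneg _
  have hs2 : s^2 ≤ R^2 := by
    have := abs_nonneg s
    nlinarith [neg_abs_le s, le_abs_self s]
  rw [Real.norm_eq_abs, abs_of_pos (ker_pos x y s hy)]
  apply div_le_div₀ (by positivity) (by nlinarith) h2 (by nlinarith)

lemma FF_nonneg (x y : ℝ) : 0 ≤ FF ρ x y := by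
  apply integral_nonneg
  intro s
  have h1 : (0:ℝ) ≤ (x - s)^2 := sq_nonneg _
  positivity

/-- upper bound `FF ≤ C·m/y²`. -/
lemma FF_le (hae : ∀ᵐ s ∂ρ, |s| ≤ R) (x y : ℝ) (hy : y ≠ 0) :
    FF ρ x y ≤ (R ^ 2 + 1) / y ^ 2 * (ρ univ).toReal := by
  have := integral_mono_ae (integrable_ker hae x y hy) (integrable_const ((R^2+1)/y^2)) ?_
  · simpa [integral_const, smul_eq_mul, mul_comm, measureReal_def, FF] using this
  · filter_upwards [hae] with s hs
    have h2 : (0:ℝ) < y^2 := by positivity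
    have h1 : (0:ℝ) ≤ (x - s)^2 := sq_nonneg _
    have hs2 : s^2 ≤ R^2 := by nlinarith [neg_abs_le s, le_abs_self s, abs_nonneg s]
    apply div_le_div₀ (by positivity) (by nlinarith) h2 (by nlinarith)

/-- lower bound: `FF ≥ m/((|x|+R)²+y²)`. -/
lemma FF_ge (hae : ∀ᵐ s ∂ρ, |s| ≤ R) (hR : 0 ≤ R) (x y : ℝ) (hy : y ≠ 0) :
    (ρ univ).toReal / ((|x| + R) ^ 2 + y ^ 2) ≤ FF ρ x y := by
  have hD : (0:ℝ) < (|x| + R)^2 + y^2 := by positivity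
  have h0 : ∫ _s, (((|x| + R) ^ 2 + y ^ 2)⁻¹ : ℝ) ∂ρ
      = (ρ univ).toReal / ((|x| + R) ^ 2 + y ^ 2) := by
    rw [integral_const]; rw [smul_eq_mul, div_eq_mul_inv]; rfl
  have := integral_mono_ae (integrable_const (((|x| + R) ^ 2 + y ^ 2)⁻¹))
    (integrable_ker hae x y hy) ?_
  · rw [h0] at this; exact this
  · filter_upwards [hae] with s hs
    have h1 : (0:ℝ) ≤ (x - s)^2 := sq_nonneg _
    have hxs : (x - s)^2 ≤ (|x| + R)^2 := by
      have : |x - s| ≤ |x| + R := (abs_sub _ _).trans (by nlinarith [abs_nonneg x])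
      nlinarith [abs_nonneg (x - s), le_abs_self (x-s), neg_abs_le (x-s)]
    rw [inv_eq_one_div]
    apply div_le_div₀ (by positivity) (by nlinarith) (by positivity) (by nlinarith)

/-- monotone (non-strict) in `y`. -/
lemma FF_anti (hae : ∀ᵐ s ∂ρ, |s| ≤ R) (x : ℝ) {y₁ y₂ : ℝ} (h1 : 0 < y₁) (h12 : y₁ ≤ y₂) :
    FF ρ x y₂ ≤ FF ρ x y₁ := by
  have h2 : 0 < y₂ := lt_of_lt_of_le h1 h12
  apply integral_mono_ae (integrable_ker hae x y₂ h2.ne') (integrable_ker hae x y₁ h1.ne')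
  filter_upwards with s
  have h1' : (0:ℝ) ≤ (x - s)^2 := sq_nonneg _
  apply div_le_div₀ (by positivity) le_rfl (by positivity) (by nlinarith)

/-- far-field upper bound. -/
lemma FF_far (hae : ∀ᵐ s ∂ρ, |s| ≤ R) {x : ℝ} (y : ℝ) (hy : y ≠ 0) (hx : R < |x|) :
    FF ρ x y ≤ (R ^ 2 + 1) / (|x| - R) ^ 2 * (ρ univ).toReal := by
  have hxR : (0:ℝ) < |x| - R := by linarith
  have := integral_mono_ae (integrable_ker hae x y hy)
    (integrable_const ((R ^ 2 + 1) / (|x| - R) ^ 2)) ?_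
  · rw [integral_const, smul_eq_mul, mul_comm] at this; exact this
  · filter_upwards [hae] with s hs
    have h1 : (0:ℝ) ≤ (x - s)^2 := sq_nonneg _
    have hs2 : s^2 ≤ R^2 := by nlinarith [neg_abs_le s, le_abs_self s, abs_nonneg s]
    have habs : |x| - R ≤ |x - s| := by
      have : |x| - |s| ≤ |x - s| := abs_sub_abs_le_abs_sub x s
      have := hs; linarith [abs_nonneg s]
    have hd : (|x| - R)^2 ≤ (x - s)^2 := by
      nlinarith [sq_abs (x - s), mul_self_le_mul_self hxR.le habs]
    have h2 : (0:ℝ) < y^2 := by positivity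
    apply div_le_div₀ (by positivity) (by nlinarith) (by positivity) (by nlinarith)

/-- ratio bound giving strictness. -/
lemma FF_ratio (hae : ∀ᵐ s ∂ρ, |s| ≤ R) (hR : 0 ≤ R) (x : ℝ) {y₁ y₂ : ℝ}
    (h1 : 0 < y₁) (h12 : y₁ < y₂) :
    (1 + (y₂ ^ 2 - y₁ ^ 2) / ((|x| + R) ^ 2 + y₂ ^ 2)) * FF ρ x y₂ ≤ FF ρ x y₁ := by
  set θ : ℝ := (y₂ ^ 2 - y₁ ^ 2) / ((|x| + R) ^ 2 + y₂ ^ 2) with hθ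
  have h2 : 0 < y₂ := h1.trans h12
  have hD : (0:ℝ) < (|x| + R)^2 + y₂^2 := by nlinarith [sq_nonneg (|x| + R)]
  have hθpos : 0 < θ := by
    apply div_pos _ hD
    nlinarith
  have hint : Integrable (fun s : ℝ => (1 + θ) * ((s ^ 2 + 1) / ((x - s) ^ 2 + y₂ ^ 2))) ρ :=
    (integrable_ker hae x y₂ h2.ne').const_mul _
  have := integral_mono_ae hint (integrable_ker hae x y₁ h1.ne') ?_
  · rw [integral_const_mul] at this
    exact this
  · filter_upwards [hae] with s hs
    have h1' : (0:ℝ) ≤ (x - s)^2 := sq_nonneg _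
    have hxs : (x - s)^2 ≤ (|x| + R)^2 := by
      have h' : |x - s| ≤ |x| + R := (abs_sub x s).trans (by nlinarith [abs_nonneg x])
      nlinarith [abs_nonneg (x - s), le_abs_self (x-s), neg_abs_le (x-s)]
    -- (1+θ) * (w/(d+y₂²)) ≤ w/(d+y₁²)  ⟺  (1+θ)(d+y₁²) ≤ d+y₂²
    rw [mul_div_assoc', div_le_div_iff₀ (by nlinarith) (by nlinarith)]
    have key : θ * ((x-s)^2 + y₁^2) ≤ y₂^2 - y₁^2 := by
      rw [hθ, div_mul_eq_mul_div, div_le_iff₀ hD]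
      have hq : (x-s)^2 + y₁^2 ≤ (|x|+R)^2 + y₂^2 := by nlinarith
      nlinarith [mul_le_mul_of_nonneg_left hq (by nlinarith : (0:ℝ) ≤ y₂^2 - y₁^2)]
    nlinarith [mul_le_mul_of_nonneg_left key (by positivity : (0:ℝ) ≤ s^2+1)]

lemma ker_meas (x y : ℝ) :
    Measurable (fun s : ℝ => ENNReal.ofReal (s ^ 2 + 1) / ENNReal.ofReal ((x - s) ^ 2 + y ^ 2)) := by
  apply Measurable.div
  · exact (measurable_id.pow_const 2 |>.add_const 1).ennreal_ofReal
  · exact (((measurable_const.sub measurable_id).pow_const 2).add_const (y^2)).ennreal_ofReal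

/-- lintegral form equals ofReal of FF for y ≠ 0 -/
lemma lint_eq_FF (hae : ∀ᵐ s ∂ρ, |s| ≤ R) (x y : ℝ) (hy : y ≠ 0) :
    (∫⁻ s, ENNReal.ofReal (s ^ 2 + 1) / ENNReal.ofReal ((x - s) ^ 2 + y ^ 2) ∂ρ)
      = ENNReal.ofReal (FF ρ x y) := by
  rw [FF, ofReal_integral_eq_lintegral_ofReal (integrable_ker hae x y hy) ?_]
  · apply lintegral_congr fun s => ?_
    rw [ENNReal.ofReal_div_of_pos]
    have h1 : (0:ℝ) ≤ (x - s)^2 := sq_nonneg _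
    positivity
  · filter_upwards with s
    have h1 : (0:ℝ) ≤ (x - s)^2 := sq_nonneg _
    positivity

/-- key comparison: `gFn ≥ ofReal ((1+θ)·FF x y)` with `θ = y²/(|x|+R)²`. -/
lemma gFn_ge (hae : ∀ᵐ s ∂ρ, |s| ≤ R) (hR : 0 < R) (x : ℝ) {y : ℝ} (hy : 0 < y) :
    ENNReal.ofReal ((1 + y ^ 2 / (|x| + R) ^ 2) * FF ρ x y) ≤ gFn ρ x := by
  set θ : ℝ := y ^ 2 / (|x| + R) ^ 2 with hθ
  have hDpos : (0:ℝ) < (|x| + R)^2 := by positivity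
  have hint : Integrable (fun s : ℝ => (1 + θ) * ((s ^ 2 + 1) / ((x - s) ^ 2 + y ^ 2))) ρ :=
    (integrable_ker hae x y hy.ne').const_mul _
  have h0 : ENNReal.ofReal ((1 + θ) * FF ρ x y)
      = ∫⁻ s, ENNReal.ofReal ((1 + θ) * ((s ^ 2 + 1) / ((x - s) ^ 2 + y ^ 2))) ∂ρ := by
    rw [FF, ← integral_const_mul]
    apply ofReal_integral_eq_lintegral_ofReal hint
    filter_upwards with s
    have h1 : (0:ℝ) ≤ (x - s)^2 := sq_nonneg _
    have : (0:ℝ) ≤ θ := by positivity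
    positivity
  rw [h0, gFn]
  apply lintegral_mono_ae
  filter_upwards [hae] with s hs
  have h1 : (0:ℝ) ≤ (x - s)^2 := sq_nonneg _
  have hw : (0:ℝ) < s^2 + 1 := by positivity
  rcases eq_or_lt_of_le h1 with hd0 | hd0
  · rw [← hd0]
    rw [ENNReal.ofReal_zero, ENNReal.div_zero (by simp [hw, hw.le] : ENNReal.ofReal (s^2+1) ≠ 0)]
    exact le_top
  · rw [← ENNReal.ofReal_div_of_pos hd0]
    apply ENNReal.ofReal_le_ofReal
    have hxs : (x - s)^2 ≤ (|x| + R)^2 := by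
      have h' : |x - s| ≤ |x| + R := (abs_sub x s).trans (by nlinarith [abs_nonneg x])
      nlinarith [abs_nonneg (x - s), le_abs_self (x-s), neg_abs_le (x-s)]
    rw [mul_div_assoc', div_le_div_iff₀ (by nlinarith) hd0]
    have key : θ * (x - s)^2 ≤ y^2 := by
      rw [hθ, div_mul_eq_mul_div, div_le_iff₀ hDpos]
      nlinarith
    nlinarith [mul_le_mul_of_nonneg_left key (by positivity : (0:ℝ) ≤ s^2+1)]

lemma gFn_gt (hae : ∀ᵐ s ∂ρ, |s| ≤ R) (hR : 0 < R) (x : ℝ) {y c'' : ℝ} (hy : 0 < y)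
    (hc : 0 < c'') (hFF : c'' ≤ FF ρ x y) : ENNReal.ofReal c'' < gFn ρ x := by
  have hθ : (0:ℝ) < y ^ 2 / (|x| + R) ^ 2 := by positivity
  calc ENNReal.ofReal c'' < ENNReal.ofReal ((1 + y ^ 2 / (|x| + R) ^ 2) * FF ρ x y) := by
        rw [ENNReal.ofReal_lt_ofReal_iff_of_nonneg hc.le]
        nlinarith
    _ ≤ gFn ρ x := gFn_ge hae hR x hy

/-- Monotone convergence: from `gFn x > ofReal c'` produce `y > 0` with `FF x y > c'`. -/
lemma exists_y_gt (hae : ∀ᵐ s ∂ρ, |s| ≤ R) (x : ℝ) {c' : ℝ} (hc : 0 ≤ c')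
    (h : ENNReal.ofReal c' < gFn ρ x) : ∃ y : ℝ, 0 < y ∧ c' < FF ρ x y := by
  set f : ℕ → ℝ → ENNReal := fun n s =>
    ENNReal.ofReal (s ^ 2 + 1) / ENNReal.ofReal ((x - s) ^ 2 + (1/(n+1:ℝ)) ^ 2) with hf
  have hyn : ∀ n : ℕ, (0:ℝ) < 1/(n+1:ℝ) := by intro n; positivity
  have hmono : Monotone f := by
    intro a b hab s
    apply ENNReal.div_le_div le_rfl
    apply ENNReal.ofReal_le_ofReal
    have : (1/(b+1:ℝ)) ≤ 1/(a+1:ℝ) := by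
      apply one_div_le_one_div_of_le (by positivity)
      exact_mod_cast by omega
    nlinarith [hyn a, hyn b]
  have hsup : ∀ s : ℝ, (⨆ n, f n s) = ENNReal.ofReal (s^2+1) / ENNReal.ofReal ((x - s)^2) := by
    intro s
    set b : ℕ → ENNReal := fun n => ENNReal.ofReal ((x - s) ^ 2 + (1/(n+1:ℝ)) ^ 2) with hb
    have htend : Tendsto b atTop (𝓝 (ENNReal.ofReal ((x - s)^2))) := by
      apply (ENNReal.continuous_ofReal.tendsto _).comp
      have h1 : Tendsto (fun n : ℕ => 1/(n+1:ℝ)) atTop (𝓝 0) := tendsto_one_div_add_atTop_nhds_zero_nat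
      have h2 := (h1.pow 2)
      simpa using tendsto_const_nhds.add h2
    have hanti : Antitone b := by
      intro a b' hab
      apply ENNReal.ofReal_le_ofReal
      have : (1/(b'+1:ℝ)) ≤ 1/(a+1:ℝ) := by
        apply one_div_le_one_div_of_le (by positivity)
        exact_mod_cast by omega
      nlinarith [hyn a, hyn b']
    have hinf : (⨅ n, b n) = ENNReal.ofReal ((x - s)^2) :=
      tendsto_nhds_unique (tendsto_atTop_iInf hanti) htend
    calc (⨆ n, f n s) = ENNReal.ofReal (s^2+1) * ⨆ n, (b n)⁻¹ := by
          rw [ENNReal.mul_iSup]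
          simp only [hf, hb, div_eq_mul_inv]
      _ = _ := by rw [← ENNReal.inv_iInf, hinf, div_eq_mul_inv]
  have hMCT := lintegral_iSup (μ := ρ) (f := f) (fun n => ker_meas x _) hmono
  have hg : gFn ρ x = ⨆ n, ∫⁻ s, f n s ∂ρ := by
    rw [gFn, ← hMCT]
    apply lintegral_congr fun s => (hsup s).symm
  rw [hg] at h
  obtain ⟨n, hn⟩ := lt_iSup_iff.mp h
  refine ⟨1/(n+1:ℝ), hyn n, ?_⟩
  rw [hf] at hn
  simp only at hn
  rw [lint_eq_FF hae x _ (hyn n).ne'] at hn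
  exact (ENNReal.ofReal_lt_ofReal_iff_of_nonneg hc).mp hn

lemma FF_contAt (hae : ∀ᵐ s ∂ρ, |s| ≤ R) (p₀ : ℝ × ℝ) (hy : p₀.2 ≠ 0) :
    ContinuousAt (fun p : ℝ × ℝ => FF ρ p.1 p.2) p₀ := by
  have hy2 : 0 < p₀.2 ^ 2 := by positivity
  unfold ContinuousAt
  apply tendsto_integral_filter_of_dominated_convergence
    (bound := fun _s : ℝ => (R ^ 2 + 1) / (p₀.2 ^ 2 / 2))
  · -- eventually aestronglymeasurable
    have hev : ∀ᶠ p : ℝ × ℝ in 𝓝 p₀, p.2 ≠ 0 := by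
      have : IsOpen {p : ℝ × ℝ | p.2 ≠ 0} := isOpen_ne.preimage continuous_snd
      exact this.mem_nhds hy
    filter_upwards [hev] with p hp
    have : Continuous (fun s : ℝ => (s ^ 2 + 1) / ((p.1 - s) ^ 2 + p.2 ^ 2)) := by
      apply Continuous.div (by continuity) (by continuity)
      intro s
      have h1 : (0:ℝ) ≤ (p.1 - s)^2 := sq_nonneg _
      have h2 : (0:ℝ) < p.2^2 := by positivity
      nlinarith
    exact this.aestronglyMeasurable
  · -- eventual bound
    have hev : ∀ᶠ p : ℝ × ℝ in 𝓝 p₀, p₀.2 ^ 2 / 2 < p.2 ^ 2 := by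
      have hc : Continuous (fun p : ℝ × ℝ => p.2 ^ 2) := by continuity
      have hop : IsOpen {p : ℝ × ℝ | p₀.2 ^ 2 / 2 < p.2 ^ 2} := isOpen_lt continuous_const hc
      exact hop.mem_nhds (by simp only [mem_setOf_eq]; linarith)
    filter_upwards [hev] with p hp
    filter_upwards [hae] with s hs
    have h1 : (0:ℝ) ≤ (p.1 - s)^2 := sq_nonneg _
    have hs2 : s^2 ≤ R^2 := by nlinarith [neg_abs_le s, le_abs_self s, abs_nonneg s]
    have hpos : (0:ℝ) < (p.1 - s) ^ 2 + p.2 ^ 2 := by nlinarith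
    rw [Real.norm_eq_abs, abs_of_nonneg (by positivity)]
    apply div_le_div₀ (by positivity) (by nlinarith) (by nlinarith) (by nlinarith)
  · exact integrable_const _
  · filter_upwards with s
    apply Tendsto.div
    · exact tendsto_const_nhds
    · have : Continuous (fun p : ℝ × ℝ => (p.1 - s) ^ 2 + p.2 ^ 2) := by continuity
      exact this.continuousAt
    · have h1 : (0:ℝ) ≤ (p₀.1 - s)^2 := sq_nonneg _
      nlinarith

lemma mpos (hρ : ρ ≠ 0) : 0 < (ρ univ).toReal :=
  ENNReal.toReal_pos (Measure.measure_univ_pos.mpr hρ).ne' (measure_ne_top ρ univ)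

lemma FF_pos (hae : ∀ᵐ s ∂ρ, |s| ≤ R) (hR : 0 ≤ R) (hρ : ρ ≠ 0) (x : ℝ) {y : ℝ}
    (hy : y ≠ 0) : 0 < FF ρ x y := by
  have := FF_ge hae hR x y hy
  have hm := mpos hρ
  have hD : (0:ℝ) < (|x| + R)^2 + y^2 := by positivity
  have : (0:ℝ) < (ρ univ).toReal / ((|x| + R) ^ 2 + y ^ 2) := by positivity
  linarith [FF_ge hae hR x y hy]

lemma FF_strict (hae : ∀ᵐ s ∂ρ, |s| ≤ R) (hR : 0 ≤ R) (hρ : ρ ≠ 0) (x : ℝ) {y₁ y₂ : ℝ}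
    (h1 : 0 < y₁) (h12 : y₁ < y₂) : FF ρ x y₂ < FF ρ x y₁ := by
  have h2 : 0 < y₂ := h1.trans h12
  have hD : (0:ℝ) < (|x| + R)^2 + y₂^2 := by positivity
  have hθ : 0 < (y₂ ^ 2 - y₁ ^ 2) / ((|x| + R) ^ 2 + y₂ ^ 2) := by
    apply div_pos (by nlinarith) hD
  have hP := FF_pos hae hR hρ x h2.ne'
  nlinarith [FF_ratio hae hR x h1 h12]

lemma contY (hae : ∀ᵐ s ∂ρ, |s| ≤ R) (x : ℝ) {y : ℝ} (hy : y ≠ 0) :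
    ContinuousAt (fun y' => FF ρ x y') y := by
  have h := FF_contAt hae (x, y) hy
  exact h.comp ((continuous_const.prodMk continuous_id).continuousAt)

/-- The characterization of the graph as a level set. -/
lemma graphF_char (hae : ∀ᵐ s ∂ρ, |s| ≤ R) (hR : 0 < R) (hρ : ρ ≠ 0) {t : ℝ} (ht : 1 < t)
    (p : ℝ × ℝ) : p ∈ graphF ρ t ↔ 0 < p.2 ∧ FF ρ p.1 p.2 = 1 / (t - 1) := by
  obtain ⟨x, y⟩ := p
  set c : ℝ := 1 / (t - 1) with hc
  have hcpos : 0 < c := by rw [hc]; exact one_div_pos.mpr (by linarith)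
  have hSdef : fFn ρ t x = sInf {y' : ℝ | 0 < y' ∧ FF ρ x y' ≤ c} := rfl
  constructor
  · rintro ⟨hx, hfy⟩
    simp only at hx hfy
    obtain ⟨y₀, hy₀, hFFy₀⟩ := exists_y_gt hae x hcpos.le hx
    set S := {y' : ℝ | 0 < y' ∧ FF ρ x y' ≤ c} with hS
    have hlb : ∀ y' ∈ S, y₀ ≤ y' := by
      rintro y' ⟨hy', hle⟩
      by_contra hlt
      push_neg at hlt
      have := FF_anti hae x hy' hlt.le
      linarith
    have hbdd : BddBelow S := ⟨y₀, hlb⟩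
    set A : ℝ := (R ^ 2 + 1) * (ρ univ).toReal / c with hA
    have hAnn : 0 ≤ A := by
      have := mpos hρ |>.le
      rw [hA]; positivity
    set y₁ : ℝ := Real.sqrt A + 1 with hy₁
    have hy₁pos : 0 < y₁ := by have := Real.sqrt_nonneg A; rw [hy₁]; linarith
    have hy₁S : y₁ ∈ S := by
      refine ⟨hy₁pos, ?_⟩
      have hsq : A ≤ y₁ ^ 2 := by
        have h1 := Real.sq_sqrt hAnn
        have h2 := Real.sqrt_nonneg A
        nlinarith
      have := FF_le hae x y₁ hy₁pos.ne'
      have hy12 : 0 < y₁ ^ 2 := by positivity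
      have : (R ^ 2 + 1) / y₁ ^ 2 * (ρ univ).toReal ≤ c := by
        rw [div_mul_eq_mul_div, div_le_iff₀ hy12]
        calc (R ^ 2 + 1) * (ρ univ).toReal = c * A := by
              rw [hA]; field_simp
          _ ≤ c * y₁ ^ 2 := by nlinarith
      linarith
    have hSne : S.Nonempty := ⟨y₁, hy₁S⟩
    set f : ℝ := sInf S with hf
    have hfy₀ : y₀ ≤ f := le_csInf hSne hlb
    have hfpos : 0 < f := lt_of_lt_of_le hy₀ hfy₀
    have hcont : ContinuousAt (fun y' => FF ρ x y') f := contY hae x hfpos.ne'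
    -- FF x f ≤ c
    have hle : FF ρ x f ≤ c := by
      have hz : ∀ k : ℕ, ∃ z ∈ S, z < f + 1/(k+1:ℝ) := by
        intro k
        apply exists_lt_of_csInf_lt hSne
        rw [← hf]; have : (0:ℝ) < 1/(k+1:ℝ) := by positivity
        linarith
      choose z hzS hzlt using hz
      have hzf : ∀ k, f ≤ z k := fun k => csInf_le hbdd (hzS k)
      have htz : Tendsto z atTop (𝓝 f) := by
        apply tendsto_of_tendsto_of_tendsto_of_le_of_le (g := fun _ => f)
          (h := fun k : ℕ => f + 1/(k+1:ℝ)) tendsto_const_nhds ?_ hzf (fun k => (hzlt k).le)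
        have h1 : Tendsto (fun k : ℕ => 1/(k+1:ℝ)) atTop (𝓝 0) :=
          tendsto_one_div_add_atTop_nhds_zero_nat
        simpa using tendsto_const_nhds.add h1
      have := (hcont.tendsto.comp htz)
      exact le_of_tendsto this (Eventually.of_forall fun k => (hzS k).2)
    have hge : c ≤ FF ρ x f := by
      set w : ℕ → ℝ := fun k => f - f/(k+2:ℝ) with hw
      have hwpos : ∀ k, 0 < w k := by
        intro k
        rw [hw]
        have h2 : (2:ℝ) ≤ (k+2:ℝ) := by exact_mod_cast by omega
        have : f/(k+2:ℝ) < f := by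
          rw [div_lt_iff₀ (by linarith)]
          nlinarith
        simpa using this
      have hwlt : ∀ k, w k < f := by
        intro k
        have : 0 < f/(k+2:ℝ) := by positivity
        rw [hw]; simpa using this
      have hwnot : ∀ k, c < FF ρ x (w k) := by
        intro k
        have := notMem_of_lt_csInf (hwlt k) hbdd
        rw [hS] at this
        simp only [mem_setOf_eq, not_and, not_le] at this
        exact this (hwpos k)
      have htw : Tendsto w atTop (𝓝 f) := by
        rw [hw]
        have h1 : Tendsto (fun k : ℕ => f/(k+2:ℝ)) atTop (𝓝 0) := by
          apply Tendsto.div_atTop tendsto_const_nhds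
          apply tendsto_atTop_add_const_right
          exact tendsto_natCast_atTop_atTop
        simpa using tendsto_const_nhds.sub h1
      exact ge_of_tendsto (hcont.tendsto.comp htw) (Eventually.of_forall fun k => (hwnot k).le)
    refine ⟨?_, ?_⟩
    · rw [hfy, hSdef]; exact hfpos
    · rw [hfy, hSdef]; show FF ρ x f = c; linarith
  · rintro ⟨hy, hFF⟩
    simp only at hy hFF
    constructor
    · exact gFn_gt hae hR x hy hcpos hFF.ge
    · simp only [hSdef]
      have : {y' : ℝ | 0 < y' ∧ FF ρ x y' ≤ c} = Ici y := by
        ext y'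
        simp only [mem_setOf_eq, mem_Ici]
        constructor
        · rintro ⟨hy', hle⟩
          by_contra hlt
          push_neg at hlt
          have hD : (0:ℝ) < (|x| + R)^2 + y^2 := by positivity
          have hθ : 0 < (y ^ 2 - y' ^ 2) / ((|x| + R) ^ 2 + y ^ 2) :=
            div_pos (by nlinarith) hD
          have h2 := FF_ratio hae hR.le x hy' hlt
          rw [hFF] at h2
          nlinarith
        · intro h
          exact ⟨lt_of_lt_of_le hy h, by
            have := FF_anti hae x hy h
            rw [hFF] at this; exact this⟩
      rw [this, csInf_Ici]

lemma kerg_meas : Measurable (Function.uncurry fun x s : ℝ =>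
    ENNReal.ofReal (s ^ 2 + 1) / ENNReal.ofReal ((x - s) ^ 2)) := by
  apply Measurable.div
  · exact ((measurable_snd.pow_const 2).add_const 1).ennreal_ofReal
  · exact (((measurable_fst.sub measurable_snd)).pow_const 2).ennreal_ofReal

lemma gFn_meas : Measurable (gFn ρ) := by
  apply Measurable.lintegral_prod_right' (f := fun p : ℝ × ℝ =>
    ENNReal.ofReal (p.2 ^ 2 + 1) / ENNReal.ofReal ((p.1 - p.2) ^ 2))
  exact kerg_meas

/-- divergence of the inner integral at interior mass points -/
lemma inner_div {a δ : ℝ} (hδ : 0 < δ) {s : ℝ} (hs : s ∈ Ioo (a - δ/2) (a + δ/2)) :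
    ∫⁻ x in Ioo (a - δ) (a + δ), ENNReal.ofReal (s ^ 2 + 1) / ENNReal.ofReal ((x - s) ^ 2) = ⊤ := by
  apply ENNReal.eq_top_of_forall_nnreal_le
  intro r
  obtain ⟨n, hn⟩ := exists_nat_ge (max (r : ℝ) (2/δ))
  have hn2 : 2/δ ≤ n := le_trans (le_max_right _ _) hn
  have hnr : (r:ℝ) ≤ n := le_trans (le_max_left _ _) hn
  have hnpos : 0 < (n:ℝ) := lt_of_lt_of_le (by positivity) hn2
  have hsub : Ioo (s - 1/n) (s + 1/n) ⊆ Ioo (a - δ) (a + δ) := by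
    intro x hx
    obtain ⟨h1, h2⟩ := hx
    obtain ⟨h3, h4⟩ := hs
    have h5 : 1/(n:ℝ) ≤ δ/2 := by
      rw [div_le_div_iff₀ hnpos (by norm_num)]
      rw [div_le_iff₀ hδ] at hn2
      linarith
    constructor <;> nlinarith
  calc (r : ENNReal) ≤ ENNReal.ofReal ((n:ℝ)) := by
        rw [ENNReal.le_ofReal_iff_toReal_le (by simp) (by positivity)]
        simpa using hnr
    _ ≤ ENNReal.ofReal ((n:ℝ)^2 * (2/n)) := by
        apply ENNReal.ofReal_le_ofReal
        have he : (n:ℝ)^2 * (2/n) = 2*n := by field_simp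
        rw [he]; linarith
    _ = ENNReal.ofReal ((n:ℝ)^2) * volume (Ioo (s - 1/n) (s + 1/n)) := by
        rw [Real.volume_Ioo, ← ENNReal.ofReal_mul (by positivity)]
        ring_nf
    _ = ∫⁻ _x in Ioo (s - 1/n) (s + 1/n), ENNReal.ofReal ((n:ℝ)^2) := by
        rw [setLIntegral_const]
    _ ≤ ∫⁻ x in Ioo (s - 1/n) (s + 1/n),
          ENNReal.ofReal (s ^ 2 + 1) / ENNReal.ofReal ((x - s) ^ 2) := by
        apply setLIntegral_mono' measurableSet_Ioo
        intro x hx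
        obtain ⟨h1, h2⟩ := hx
        have hxs : (x - s)^2 ≤ 1/(n:ℝ)^2 := by
          have : |x - s| ≤ 1/n := by
            rw [abs_le]; constructor <;> linarith
          calc (x-s)^2 = |x-s|^2 := (sq_abs _).symm
            _ ≤ (1/(n:ℝ))^2 := by nlinarith [abs_nonneg (x-s)]
            _ = 1/(n:ℝ)^2 := by ring
        rcases eq_or_lt_of_le (sq_nonneg (x - s)) with h0 | h0
        · rw [← h0, ENNReal.ofReal_zero, ENNReal.div_zero (by
            simp only [ne_eq, ENNReal.ofReal_eq_zero, not_le]; positivity)]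
          exact le_top
        · calc ENNReal.ofReal ((n:ℝ)^2) = ENNReal.ofReal (1/(1/(n:ℝ)^2)) := by
                rw [one_div_one_div]
            _ ≤ ENNReal.ofReal (1/(x-s)^2) := by
                apply ENNReal.ofReal_le_ofReal
                apply one_div_le_one_div_of_le h0 hxs
            _ = ENNReal.ofReal 1 / ENNReal.ofReal ((x-s)^2) := ENNReal.ofReal_div_of_pos h0
            _ ≤ ENNReal.ofReal (s^2+1) / ENNReal.ofReal ((x-s)^2) := by
                apply ENNReal.div_le_div _ le_rfl
                apply ENNReal.ofReal_le_ofReal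
                nlinarith [sq_nonneg s]
    _ ≤ ∫⁻ x in Ioo (a - δ) (a + δ),
          ENNReal.ofReal (s ^ 2 + 1) / ENNReal.ofReal ((x - s) ^ 2) :=
        lintegral_mono_set hsub

/-- Case 1: mass near `a` forces unboundedness of `gFn` near `a`. -/
lemma gFn_unbounded {a δ c : ℝ} (hδ : 0 < δ) (hq : ρ (Ioo (a - δ/2) (a + δ/2)) ≠ 0) :
    ∃ x', |x' - a| < δ ∧ ENNReal.ofReal c < gFn ρ x' := by
  by_contra hall
  push_neg at hall
  have hall' : ∀ x' ∈ Ioo (a - δ) (a + δ), gFn ρ x' ≤ ENNReal.ofReal c := by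
    intro x' hx'
    apply hall
    obtain ⟨h1, h2⟩ := hx'
    rw [abs_sub_lt_iff]; constructor <;> linarith
  have hup : ∫⁻ x in Ioo (a - δ) (a + δ), gFn ρ x ≤ ENNReal.ofReal c * ENNReal.ofReal (2*δ) := by
    calc ∫⁻ x in Ioo (a - δ) (a + δ), gFn ρ x
        ≤ ∫⁻ _x in Ioo (a - δ) (a + δ), ENNReal.ofReal c := by
          apply setLIntegral_mono' measurableSet_Ioo hall'
      _ = ENNReal.ofReal c * volume (Ioo (a - δ) (a + δ)) := setLIntegral_const _ _
      _ = ENNReal.ofReal c * ENNReal.ofReal (2*δ) := by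
          rw [Real.volume_Ioo]; ring_nf
  have hswap : ∫⁻ x in Ioo (a - δ) (a + δ), gFn ρ x
      = ∫⁻ s, (∫⁻ x in Ioo (a - δ) (a + δ),
          ENNReal.ofReal (s ^ 2 + 1) / ENNReal.ofReal ((x - s) ^ 2)) ∂ρ := by
    exact lintegral_lintegral_swap kerg_meas.aemeasurable
  have hlow : (⊤ : ENNReal) ≤ ∫⁻ x in Ioo (a - δ) (a + δ), gFn ρ x := by
    rw [hswap]
    calc (⊤ : ENNReal) = ⊤ * ρ (Ioo (a - δ/2) (a + δ/2)) := by
          rw [ENNReal.top_mul hq]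
      _ = ∫⁻ _s in Ioo (a - δ/2) (a + δ/2), (⊤ : ENNReal) ∂ρ := (setLIntegral_const _ _).symm
      _ ≤ ∫⁻ s in Ioo (a - δ/2) (a + δ/2), (∫⁻ x in Ioo (a - δ) (a + δ),
            ENNReal.ofReal (s ^ 2 + 1) / ENNReal.ofReal ((x - s) ^ 2)) ∂ρ := by
          apply setLIntegral_mono' measurableSet_Ioo
          intro s hs
          rw [inner_div hδ hs]
      _ ≤ _ := setLIntegral_le_lintegral _ _
  have : (⊤:ENNReal) ≤ ENNReal.ofReal c * ENNReal.ofReal (2*δ) := le_trans hlow hup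
  exact absurd (le_antisymm le_top this) (by
    apply ENNReal.mul_ne_top <;> simp [ENNReal.mul_eq_top])

lemma conv_ineq {W u h U : ℝ} (hW : 0 < W) (hh : 0 < h) (hu : h < |u|) (hU : |u| ≤ U) :
    (1 + 2*h^2/U^2) * (2*(W/u^2)) ≤ W/((u+h)^2) + W/((u-h)^2) := by
  have hU0 : 0 < U := lt_of_lt_of_le (lt_of_le_of_lt hh.le hu) hU
  have ha : h^2 < u^2 := by nlinarith [sq_abs u, abs_nonneg u]
  have haC : u^2 ≤ U^2 := by nlinarith [sq_abs u, abs_nonneg u]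
  have hd : 0 < u^2 - h^2 := by linarith
  have hu2 : 0 < u^2 := by nlinarith
  have hp1 : 0 < (u+h)^2 := by nlinarith [sq_nonneg (u+h)]
  have hp2 : 0 < (u-h)^2 := by nlinarith [sq_nonneg (u-h)]
  have e1 : W/((u+h)^2) + W/((u-h)^2) = W*(2*u^2+2*h^2)/((u^2-h^2)^2) := by
    rw [div_add_div _ _ hp1.ne' hp2.ne', div_eq_div_iff (mul_pos hp1 hp2).ne' (pow_pos hd 2).ne']
    ring
  have e2 : (1 + 2*h^2/U^2)*(2*(W/u^2)) = W*(2*(U^2+2*h^2))/(U^2*u^2) := by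
    field_simp
  rw [e1, e2, div_le_div_iff₀ (by positivity) (by positivity)]
  have hkey : 0 ≤ h^2 * (3*U^2*u^2 - U^2*h^2 - 2*(u^2-h^2)^2) := by
    apply mul_nonneg (sq_nonneg h)
    nlinarith [sq_nonneg (u^2-h^2)]
  nlinarith [mul_pos hW hu2, hW.le]

lemma ker0_aesm (x : ℝ) :
    AEStronglyMeasurable (fun s : ℝ => (s ^ 2 + 1) / ((x - s) ^ 2 + 0 ^ 2)) ρ := by
  apply Measurable.aestronglyMeasurable
  apply Measurable.div
  · exact (measurable_id.pow_const 2).add_const 1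
  · exact ((measurable_const.sub measurable_id).pow_const 2).add_const _

/-- Key local lemma: boundary points at level `c` have points of `{gFn > c}` nearby. -/
lemma lemL (hae : ∀ᵐ s ∂ρ, |s| ≤ R) (hR : 0 < R) {c xstar : ℝ} (hc : 0 < c)
    (xs ys : ℕ → ℝ) (hy : ∀ n, 0 < ys n)
    (hxs : Tendsto xs atTop (𝓝 xstar)) (hys : Tendsto ys atTop (𝓝 0))
    (hFFs : Tendsto (fun n => FF ρ (xs n) (ys n)) atTop (𝓝 c)) :
    ∀ δ : ℝ, 0 < δ → ∃ x', |x' - xstar| < δ ∧ ENNReal.ofReal c < gFn ρ x' := by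
  intro δ hδ
  by_cases hcase : ρ (Ioo (xstar - δ/2) (xstar + δ/2)) = 0
  swap
  · exact gFn_unbounded hδ hcase
  -- Case 2: no mass within δ/2 of xstar
  have haway : ∀ᵐ s ∂ρ, δ/2 ≤ |s - xstar| := by
    have h0 : ∀ᵐ s ∂ρ, s ∉ Ioo (xstar - δ/2) (xstar + δ/2) :=
      (ae_iff.mpr (by simpa only [not_not, setOf_mem_eq] using hcase))
    filter_upwards [h0] with s hs
    simp only [mem_Ioo, not_and, not_lt] at hs
    rcases le_or_gt s (xstar - δ/2) with h | h
    · rw [abs_sub_comm, abs_of_nonneg (by linarith)]; linarith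
    · have := hs h; rw [abs_of_nonneg (by linarith)]; linarith
  -- integrability of the y = 0 kernel near xstar
  have hInt0 : ∀ x : ℝ, |x - xstar| ≤ δ/4 →
      Integrable (fun s : ℝ => (s ^ 2 + 1) / ((x - s) ^ 2 + 0 ^ 2)) ρ := by
    intro x hx
    refine (integrable_const ((R ^ 2 + 1) / ((δ/4) ^ 2))).mono' (ker0_aesm x) ?_
    filter_upwards [hae, haway] with s hs1 hs2
    have hdist : δ/4 ≤ |x - s| := by
      have h1 : |s - xstar| - |x - xstar| ≤ |x - s| := by
        have := abs_sub_abs_le_abs_sub (s - xstar) (x - xstar)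
        rw [show s - xstar - (x - xstar) = s - x by ring] at this
        rw [abs_sub_comm x s]; linarith
      linarith
    have hd2 : (δ/4)^2 ≤ (x - s)^2 := by
      nlinarith [sq_abs (x - s), abs_nonneg (x - s)]
    have hs2' : s^2 ≤ R^2 := by nlinarith [neg_abs_le s, le_abs_self s, abs_nonneg s]
    have hdd : (0:ℝ) < (δ/4)^2 := by positivity
    rw [Real.norm_eq_abs, abs_of_nonneg (by positivity)]
    apply div_le_div₀ (by positivity) (by nlinarith) hdd (by nlinarith)
  -- FF x y ≤ FF x 0 near xstar
  have hmono0 : ∀ x : ℝ, |x - xstar| ≤ δ/4 → ∀ y : ℝ, 0 < y → FF ρ x y ≤ FF ρ x 0 := by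
    intro x hx y hy'
    apply integral_mono_ae (integrable_ker hae x y hy'.ne') (hInt0 x hx)
    filter_upwards [haway] with s hs2
    have hdist : δ/4 ≤ |x - s| := by
      have h1 : |s - xstar| - |x - xstar| ≤ |x - s| := by
        have := abs_sub_abs_le_abs_sub (s - xstar) (x - xstar)
        rw [show s - xstar - (x - xstar) = s - x by ring] at this
        rw [abs_sub_comm x s]; linarith
      linarith
    have hd2 : (0:ℝ) < (x - s)^2 := by nlinarith [sq_abs (x - s), abs_nonneg (x - s)]
    apply div_le_div₀ (by positivity) le_rfl (by nlinarith) (by nlinarith)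
  -- continuity along a truncated sequence
  set u : ℕ → ℝ := fun n => if |xs n - xstar| ≤ δ/8 then xs n else xstar with hu
  have hu_close : ∀ n, |u n - xstar| ≤ δ/8 := by
    intro n
    rw [hu]
    by_cases hcc : |xs n - xstar| ≤ δ/8
    · simpa [hcc] using hcc
    · simp [hcc]; positivity
  have hu_ev : ∀ᶠ n in atTop, u n = xs n := by
    have : ∀ᶠ n in atTop, |xs n - xstar| ≤ δ/8 := by
      have := Metric.tendsto_atTop.mp hxs (δ/8) (by positivity)
      obtain ⟨N, hN⟩ := this
      apply eventually_atTop.mpr ⟨N, fun n hn => ?_⟩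
      have := hN n hn
      rw [Real.dist_eq] at this
      linarith
    filter_upwards [this] with n hn
    rw [hu]; simp [hn]
  have hcont0 : Tendsto (fun n => FF ρ (u n) 0) atTop (𝓝 (FF ρ xstar 0)) := by
    apply tendsto_integral_of_dominated_convergence
      (bound := fun _s : ℝ => (R ^ 2 + 1) / ((δ/4) ^ 2))
    · exact fun n => ker0_aesm (u n)
    · exact integrable_const _
    · intro n
      filter_upwards [hae, haway] with s hs1 hs2
      have hx := hu_close n
      have hdist : δ/4 ≤ |u n - s| := by
        have h1 : |s - xstar| - |u n - xstar| ≤ |u n - s| := by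
          have := abs_sub_abs_le_abs_sub (s - xstar) (u n - xstar)
          rw [show s - xstar - (u n - xstar) = s - u n by ring] at this
          rw [abs_sub_comm (u n) s]; linarith
        linarith
      have hd2 : (δ/4)^2 ≤ (u n - s)^2 := by
        nlinarith [sq_abs (u n - s), abs_nonneg (u n - s)]
      have hs2' : s^2 ≤ R^2 := by nlinarith [neg_abs_le s, le_abs_self s, abs_nonneg s]
      have hdd : (0:ℝ) < (δ/4)^2 := by positivity
      rw [Real.norm_eq_abs, abs_of_nonneg (by positivity)]
      apply div_le_div₀ (by positivity) (by nlinarith) hdd (by nlinarith)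
    · filter_upwards [haway] with s hs2
      have hutend : Tendsto u atTop (𝓝 xstar) := Tendsto.congr' (hu_ev.mono fun _ hn => hn.symm) hxs
      apply Tendsto.div tendsto_const_nhds
      · have : Continuous (fun x : ℝ => (x - s)^2 + (0:ℝ)^2) := by continuity
        exact (this.continuousAt.tendsto).comp hutend
      · have : (0:ℝ) < (xstar - s)^2 := by
          have h05 : (0:ℝ) < δ/2 := by positivity
          have : δ/2 ≤ |xstar - s| := by rw [abs_sub_comm]; exact hs2
          nlinarith [sq_abs (xstar - s), abs_nonneg (xstar - s)]
        intro hcontra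
        nlinarith [this]
  -- c ≤ FF xstar 0
  have hcle : c ≤ FF ρ xstar 0 := by
    apply le_of_tendsto_of_tendsto hFFs hcont0
    filter_upwards [hu_ev] with n hn
    have hclose : |xs n - xstar| ≤ δ/4 := by
      have h9 := hu_close n
      rw [hn] at h9
      linarith
    calc FF ρ (xs n) (ys n) ≤ FF ρ (xs n) 0 := hmono0 (xs n) hclose (ys n) (hy n)
      _ = FF ρ (u n) 0 := by rw [hn]
  -- convexity step
  set h : ℝ := δ/8 with hh
  set U : ℝ := |xstar| + R with hUdef
  have hUpos : 0 < U := by have := abs_nonneg xstar; rw [hUdef]; linarith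
  set κ : ℝ := 2*h^2/U^2 with hκ
  have hκpos : 0 < κ := by rw [hκ, hh]; positivity
  have hconv : (1 + κ) * (2 * FF ρ xstar 0) ≤ FF ρ (xstar + h) 0 + FF ρ (xstar - h) 0 := by
    have hxp : |xstar + h - xstar| ≤ δ/4 := by
      rw [show xstar + h - xstar = h by ring, hh, abs_of_nonneg (by positivity)]; linarith
    have hxm : |xstar - h - xstar| ≤ δ/4 := by
      rw [show xstar - h - xstar = -h by ring, abs_neg, hh, abs_of_nonneg (by positivity)]
      linarith
    have hint_p := hInt0 _ hxp
    have hint_m := hInt0 _ hxm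
    have hint0 := hInt0 xstar (by rw [sub_self, abs_zero]; positivity)
    calc (1 + κ) * (2 * FF ρ xstar 0)
        = ∫ s, (1 + κ) * (2 * ((s ^ 2 + 1) / ((xstar - s) ^ 2 + 0 ^ 2))) ∂ρ := by
          rw [FF, ← integral_const_mul, ← integral_const_mul]
      _ ≤ ∫ s, ((s ^ 2 + 1) / ((xstar + h - s) ^ 2 + 0 ^ 2)
            + (s ^ 2 + 1) / ((xstar - h - s) ^ 2 + 0 ^ 2)) ∂ρ := by
          apply integral_mono_ae ((hint0.const_mul 2).const_mul (1+κ)) (hint_p.add hint_m)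
          filter_upwards [hae, haway] with s hs1 hs2
          have hW : (0:ℝ) < s^2+1 := by positivity
          have hus : h < |xstar - s| := by
            rw [abs_sub_comm]; rw [hh]; linarith
          have hUs : |xstar - s| ≤ U := by
            rw [hUdef]
            calc |xstar - s| ≤ |xstar| + |s| := abs_sub xstar s
              _ ≤ |xstar| + R := by linarith
          have := conv_ineq hW (by rw [hh]; positivity) hus hUs
          simp only [Pi.add_apply]
          rw [show xstar + h - s = (xstar - s) + h by ring,
              show xstar - h - s = (xstar - s) - h by ring]
          calc (1 + κ) * (2 * ((s ^ 2 + 1) / ((xstar - s) ^ 2 + 0 ^ 2)))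
              = (1 + 2*h^2/U^2) * (2*((s^2+1)/((xstar - s)^2)))  := by
                rw [hκ]; ring_nf
            _ ≤ (s^2+1)/(((xstar - s) + h)^2) + (s^2+1)/(((xstar - s) - h)^2) := this
            _ = (s ^ 2 + 1) / (((xstar - s) + h) ^ 2 + 0 ^ 2)
                + (s ^ 2 + 1) / (((xstar - s) - h) ^ 2 + 0 ^ 2) := by ring_nf
      _ = FF ρ (xstar + h) 0 + FF ρ (xstar - h) 0 := by
          rw [FF, FF, ← integral_add hint_p hint_m]
  -- pick the bigger side
  have hbig : c < FF ρ (xstar + h) 0 ∨ c < FF ρ (xstar - h) 0 := by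
    by_contra hcon
    push_neg at hcon
    obtain ⟨h1, h2⟩ := hcon
    nlinarith [hconv, hcle, hκpos, hc]
  -- convert to gFn
  have hgFn_eq : ∀ x : ℝ, |x - xstar| ≤ δ/4 → gFn ρ x = ENNReal.ofReal (FF ρ x 0) := by
    intro x hx
    rw [FF, ofReal_integral_eq_lintegral_ofReal (hInt0 x hx) ?_]
    · rw [gFn]
      apply lintegral_congr_ae
      filter_upwards [haway] with s hs2
      have hdist : δ/4 ≤ |x - s| := by
        have h1 : |s - xstar| - |x - xstar| ≤ |x - s| := by
          have := abs_sub_abs_le_abs_sub (s - xstar) (x - xstar)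
          rw [show s - xstar - (x - xstar) = s - x by ring] at this
          rw [abs_sub_comm x s]; linarith
        linarith
      have hd2 : (0:ℝ) < (x - s)^2 := by nlinarith [sq_abs (x - s), abs_nonneg (x - s)]
      rw [show (x - s)^2 + 0^2 = (x - s)^2 by ring] at *
      rw [ENNReal.ofReal_div_of_pos hd2]
    · filter_upwards with s
      have h1 : (0:ℝ) ≤ (x - s)^2 + 0^2 := by positivity
      rcases eq_or_lt_of_le h1 with h0 | h0
      · rw [div_eq_mul_inv, ← h0]; simp
      · positivity
  rcases hbig with hb | hb
  · refine ⟨xstar + h, ?_, ?_⟩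
    · rw [show xstar + h - xstar = h by ring, hh, abs_of_nonneg (by positivity)]
      linarith
    · rw [hgFn_eq _ (by rw [show xstar + h - xstar = h by ring, hh,
        abs_of_nonneg (by positivity : (0:ℝ) ≤ δ/8)]; linarith)]
      exact (ENNReal.ofReal_lt_ofReal_iff_of_nonneg hc.le).mpr hb
  · refine ⟨xstar - h, ?_, ?_⟩
    · rw [show xstar - h - xstar = -h by ring, abs_neg, hh, abs_of_nonneg (by positivity)]
      linarith
    · rw [hgFn_eq _ (by rw [show xstar - h - xstar = -h by ring, abs_neg, hh,
        abs_of_nonneg (by positivity : (0:ℝ) ≤ δ/8)]; linarith)]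
      exact (ENNReal.ofReal_lt_ofReal_iff_of_nonneg hc.le).mpr hb

lemma mem_thick2_of {ε : ℝ} {A : Set (ℝ × ℝ)} {p q : ℝ × ℝ} (hq : q ∈ A)
    (h : |p.1 - q.1| + |p.2 - q.2| < ε) : p ∈ thick2 ε A := by
  refine ⟨q, hq, lt_of_le_of_lt ?_ h⟩
  rw [show (p.1 - q.1)^2 + (p.2 - q.2)^2 = |p.1 - q.1|^2 + |p.2 - q.2|^2 by
    rw [sq_abs, sq_abs]]
  calc Real.sqrt (|p.1 - q.1|^2 + |p.2 - q.2|^2)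
      ≤ Real.sqrt ((|p.1 - q.1| + |p.2 - q.2|)^2) := by
        apply Real.sqrt_le_sqrt
        nlinarith [abs_nonneg (p.1 - q.1), abs_nonneg (p.2 - q.2)]
    _ = |p.1 - q.1| + |p.2 - q.2| := Real.sqrt_sq (by positivity)

lemma uIcc_abs {a b x : ℝ} (h : x ∈ uIcc a b) : |x - a| ≤ |b - a| := by
  rw [Set.mem_uIcc] at h
  rcases h with ⟨h1, h2⟩ | ⟨h1, h2⟩ <;>
    rcases abs_cases (x - a) with ⟨e, _⟩ | ⟨e, _⟩ <;>
    rcases abs_cases (b - a) with ⟨f, _⟩ | ⟨f, _⟩ <;> linarith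

end proofs

/-- Hausdorff continuity of the graphs of `f_t`, assuming `ρ` has only
finitely many atoms. -/
theorem graphs_hausdorff_continuous (ρ : Measure ℝ) [IsFiniteMeasure ρ] (hρ : ρ ≠ 0)
    (K : Set ℝ) (hK : IsCompact K) (hρK : ρ Kᶜ = 0)
    (hatoms : {a : ℝ | 0 < ρ {a}}.Finite) :
    ∀ t : ℝ, 1 < t → ∀ ε : ℝ, 0 < ε → ∃ δ : ℝ, 0 < δ ∧
      ∀ r : ℝ, 1 < r → |r - t| < δ →
        graphF ρ r ⊆ thick2 ε (graphF ρ t) ∧ graphF ρ t ⊆ thick2 ε (graphF ρ r) := by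
  intro t ht ε hε
  -- support bound
  obtain ⟨R', hR'⟩ := hK.isBounded.subset_closedBall 0
  set R : ℝ := max R' 1 with hRdef
  have hR : 0 < R := lt_of_lt_of_le one_pos (le_max_right _ _)
  have hae : ∀ᵐ s ∂ρ, |s| ≤ R := by
    rw [ae_iff]
    apply measure_mono_null _ hρK
    intro s hs
    simp only [mem_setOf_eq, not_le] at hs
    intro hsK
    have := hR' hsK
    rw [Metric.mem_closedBall, Real.dist_eq, sub_zero] at this
    have : |s| ≤ R := le_trans this (le_max_left _ _)
    linarith
  set c : ℝ := 1 / (t - 1) with hcdef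
  have ht1 : 0 < t - 1 := by linarith
  have hc : 0 < c := by rw [hcdef]; positivity
  set δ₀ : ℝ := (t - 1) / 2 with hδ₀
  have hδ₀pos : 0 < δ₀ := by rw [hδ₀]; positivity
  by_contra hcon
  push_neg at hcon
  have hbad : ∀ n : ℕ, ∃ r : ℝ, (1 < r ∧ |r - t| < min δ₀ (1/(n+1))) ∧
      ∃ p : ℝ × ℝ, (p ∈ graphF ρ r ∧ p ∉ thick2 ε (graphF ρ t)) ∨
                   (p ∈ graphF ρ t ∧ p ∉ thick2 ε (graphF ρ r)) := by
    intro n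
    obtain ⟨r, hr1, hr2, hr3⟩ := hcon (min δ₀ (1/(n+1))) (lt_min hδ₀pos (by positivity))
    refine ⟨r, ⟨hr1, hr2⟩, ?_⟩
    by_cases h1 : graphF ρ r ⊆ thick2 ε (graphF ρ t)
    · have h2 : ¬ graphF ρ t ⊆ thick2 ε (graphF ρ r) := fun h2 => hr3 h1 h2
      obtain ⟨p, hp1, hp2⟩ := Set.not_subset.mp h2
      exact ⟨p, Or.inr ⟨hp1, hp2⟩⟩
    · obtain ⟨p, hp1, hp2⟩ := Set.not_subset.mp h1
      exact ⟨p, Or.inl ⟨hp1, hp2⟩⟩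
  choose r hr p hp using hbad
  have hr1 : ∀ n, 1 < r n := fun n => (hr n).1
  have hr2 : ∀ n, |r n - t| < min δ₀ (1/(n+1)) := fun n => (hr n).2
  set cr : ℕ → ℝ := fun n => 1 / (r n - 1) with hcrdef
  have hrt : Tendsto r atTop (𝓝 t) := by
    rw [Metric.tendsto_atTop]
    intro η hη
    obtain ⟨N, hN⟩ := exists_nat_gt (1/η)
    refine ⟨N, fun n hn => ?_⟩
    rw [Real.dist_eq]
    have h2 := lt_of_lt_of_le (hr2 n) (min_le_right _ _)
    have hNn : (N:ℝ) ≤ n := by exact_mod_cast hn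
    have h3 : 1/(n+1:ℝ) < η := by
      rw [div_lt_iff₀ (by positivity)]
      rw [div_lt_iff₀ hη] at hN
      nlinarith
    linarith
  have hcr_t : Tendsto cr atTop (𝓝 c) := by
    rw [hcdef, hcrdef]
    have h1 : ContinuousAt (fun z : ℝ => 1 / (z - 1)) t := by
      apply ContinuousAt.div continuousAt_const (by fun_prop)
      intro h0; rw [sub_eq_zero] at h0; linarith [ht]
    exact h1.tendsto.comp hrt
  have hcrpos : ∀ n, 0 < cr n := by
    intro n
    exact one_div_pos.mpr (by linarith [hr1 n])
  have hcrlb : ∀ n, 2/3 * c ≤ cr n := by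
    intro n
    have h2 := lt_of_lt_of_le (hr2 n) (min_le_left _ _)
    have h3 : r n - 1 < 3/2 * (t-1) := by
      rw [abs_lt] at h2; rw [hδ₀] at h2; obtain ⟨_, h2⟩ := h2; linarith
    have h4 : 0 < r n - 1 := by linarith [hr1 n]
    show 2/3 * (1/(t-1)) ≤ 1 / (r n - 1)
    rw [mul_one_div, div_le_div_iff₀ (by linarith) h4]
    nlinarith
  -- characterization of the bad points
  have hpchar : ∀ n, 0 < (p n).2 ∧
      (FF ρ (p n).1 (p n).2 = cr n ∨ FF ρ (p n).1 (p n).2 = c) := by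
    intro n
    rcases hp n with ⟨hmem, _⟩ | ⟨hmem, _⟩
    · have := (graphF_char hae hR hρ (hr1 n) (p n)).mp hmem
      exact ⟨this.1, Or.inl this.2⟩
    · have := (graphF_char hae hR hρ ht (p n)).mp hmem
      exact ⟨this.1, Or.inr this.2⟩
  set ℓ : ℕ → ℝ := fun n => FF ρ (p n).1 (p n).2 with hℓdef
  have hℓ_t : Tendsto ℓ atTop (𝓝 c) := by
    apply tendsto_of_tendsto_of_tendsto_of_le_of_le (g := fun n => min (cr n) c)
      (h := fun n => max (cr n) c)
    · have := hcr_t.min (tendsto_const_nhds (x := c)); simpa using this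
    · have := hcr_t.max (tendsto_const_nhds (x := c)); simpa using this
    · intro n
      rcases (hpchar n).2 with h | h
      · show min (cr n) c ≤ ℓ n
        rw [show ℓ n = cr n from h]; exact min_le_left _ _
      · show min (cr n) c ≤ ℓ n
        rw [show ℓ n = c from h]; exact min_le_right _ _
    · intro n
      rcases (hpchar n).2 with h | h
      · show ℓ n ≤ max (cr n) c
        rw [show ℓ n = cr n from h]; exact le_max_left _ _
      · show ℓ n ≤ max (cr n) c
        rw [show ℓ n = c from h]; exact le_max_right _ _
  have hℓlb : ∀ n, c/2 ≤ ℓ n := by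
    intro n
    rcases (hpchar n).2 with h | h
    · rw [show ℓ n = cr n from h]; linarith [hcrlb n]
    · rw [show ℓ n = c from h]; linarith
  -- boundedness of the bad points
  set m : ℝ := (ρ univ).toReal with hm
  have hmp : 0 < m := mpos hρ
  set Y : ℝ := Real.sqrt (2 * ((R^2+1) * m) / c) with hY
  set X : ℝ := R + Y with hX
  have hYpos : 0 < Y := by rw [hY]; apply Real.sqrt_pos.mpr; positivity
  have hYsq : Y^2 = 2 * ((R^2+1) * m) / c := by rw [hY, Real.sq_sqrt (by positivity)]
  have hbound : ∀ n, |(p n).1| ≤ X ∧ (p n).2 ≤ Y := by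
    intro n
    have hy := (hpchar n).1
    have hF : c/2 ≤ FF ρ (p n).1 (p n).2 := hℓlb n
    constructor
    · by_contra hcontra
      push_neg at hcontra
      have hxR : R < |(p n).1| := by rw [hX] at hcontra; linarith
      have h5 := FF_far hae (p n).2 hy.ne' hxR
      have h6 : Y < |(p n).1| - R := by rw [hX] at hcontra; linarith
      have h7 : Y^2 < (|(p n).1| - R)^2 := by nlinarith
      have h8 : (R^2+1) / (|(p n).1| - R)^2 * m < c/2 := by
        rw [div_mul_eq_mul_div, div_lt_iff₀ (by nlinarith)]
        rw [hYsq] at h7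
        have h9 : 2 * ((R^2+1) * m) / c * (c/2) = (R^2+1) * m := by
          first
          | (field_simp; ring)
          | field_simp
        nlinarith
      linarith
    · by_contra hcontra
      push_neg at hcontra
      have h5 := FF_le hae (p n).1 (p n).2 hy.ne'
      have h7 : Y^2 < (p n).2^2 := by nlinarith
      have h8 : (R^2+1) / (p n).2^2 * m < c/2 := by
        rw [div_mul_eq_mul_div, div_lt_iff₀ (by nlinarith)]
        rw [hYsq] at h7
        have h9 : c/2 * (2 * ((R^2+1) * m) / c) = (R^2+1) * m := by
          first
          | (field_simp; ring)
          | field_simp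
        nlinarith [mul_lt_mul_of_pos_left h7 (by positivity : (0:ℝ) < c/2)]
      linarith
  -- extract a convergent subsequence
  have hpbox : ∀ n, p n ∈ Icc ((-X, 0) : ℝ × ℝ) ((X, Y) : ℝ × ℝ) := by
    intro n
    obtain ⟨h1, h2⟩ := hbound n
    rw [abs_le] at h1
    exact ⟨⟨h1.1, ((hpchar n).1).le⟩, ⟨h1.2, h2⟩⟩
  obtain ⟨q, hqbox, φ, hφ, hconv⟩ := isCompact_Icc.tendsto_subseq hpbox
  have hystar0 : 0 ≤ q.2 := hqbox.1.2
  have hXt : Tendsto (fun n => (p (φ n)).1) atTop (𝓝 q.1) :=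
    (continuous_fst.tendsto q).comp hconv
  have hYt : Tendsto (fun n => (p (φ n)).2) atTop (𝓝 q.2) :=
    (continuous_snd.tendsto q).comp hconv
  have hφt : Tendsto φ atTop atTop := hφ.tendsto_atTop
  have hcrφ : Tendsto (fun n => cr (φ n)) atTop (𝓝 c) := hcr_t.comp hφt
  have hℓφ : Tendsto (fun n => ℓ (φ n)) atTop (𝓝 c) := hℓ_t.comp hφt
  have habs_ev : ∀ κ : ℝ, 0 < κ → (∀ᶠ n in atTop, |(p (φ n)).1 - q.1| < κ) ∧
      (∀ᶠ n in atTop, |(p (φ n)).2 - q.2| < κ) := by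
    intro κ hκ
    constructor
    · obtain ⟨N, hN⟩ := Metric.tendsto_atTop.mp hXt κ hκ
      rw [eventually_atTop]
      exact ⟨N, fun n hn => by have := hN n hn; rwa [Real.dist_eq] at this⟩
    · obtain ⟨N, hN⟩ := Metric.tendsto_atTop.mp hYt κ hκ
      rw [eventually_atTop]
      exact ⟨N, fun n hn => by have := hN n hn; rwa [Real.dist_eq] at this⟩
  have main : ∀ᶠ n in atTop, p (φ n) ∈ thick2 ε (graphF ρ t) ∧
      p (φ n) ∈ thick2 ε (graphF ρ (r (φ n))) := by
    rcases eq_or_lt_of_le hystar0 with hy0 | hy0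
    · -- boundary case : q.2 = 0
      have hq2 : q.2 = 0 := hy0.symm
      have hY0 : Tendsto (fun n => (p (φ n)).2) atTop (𝓝 0) := hq2 ▸ hYt
      have hppos : ∀ n, 0 < (p (φ n)).2 := fun n => (hpchar (φ n)).1
      have hε2 : (0:ℝ) < ε/2 := by positivity
      have hcont2 := FF_contAt hae (q.1, ε/2) (by show (ε/2:ℝ) ≠ 0; positivity)
      have htend2 : Tendsto (fun n => FF ρ (p (φ n)).1 (ε/2)) atTop
          (𝓝 (FF ρ q.1 (ε/2))) := by
        have h1 : Tendsto (fun n => (((p (φ n)).1, ε/2) : ℝ × ℝ)) atTop (𝓝 ((q.1, ε/2) : ℝ × ℝ)) :=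
          hXt.prodMk_nhds tendsto_const_nhds
        exact hcont2.tendsto.comp h1
      have hF2 : FF ρ q.1 (ε/2) ≤ c := by
        apply le_of_tendsto_of_tendsto htend2 hℓφ
        filter_upwards [hY0.eventually (eventually_lt_nhds hε2)] with n hn
        exact FF_anti hae ((p (φ n)).1) (hppos n) hn.le
      obtain ⟨x', hx'd, hx'g⟩ := lemL hae hR hc (fun n => (p (φ n)).1)
        (fun n => (p (φ n)).2) hppos hXt hY0 hℓφ (ε/8) (by positivity)
      obtain ⟨z, hz1, hz2⟩ := exists_between hx'g
      have hzt : z ≠ ⊤ := hz2.ne_top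
      have hc'gt : c < z.toReal := by
        rw [← ENNReal.ofReal_toReal hzt] at hz1
        exact (ENNReal.ofReal_lt_ofReal_iff_of_nonneg hc.le).mp hz1
      have hc'lt : ENNReal.ofReal z.toReal < gFn ρ x' := by
        rw [ENNReal.ofReal_toReal hzt]; exact hz2
      obtain ⟨y₀, hy₀pos, hy₀F⟩ := exists_y_gt hae x' (le_trans hc.le hc'gt.le) hc'lt
      set y₁ : ℝ := min y₀ (ε/2) with hy₁def
      have hy₁pos : 0 < y₁ := lt_min hy₀pos hε2
      have hy₁le : y₁ ≤ ε/2 := min_le_right _ _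
      have hy₁F : z.toReal < FF ρ x' y₁ :=
        lt_of_lt_of_le hy₀F (FF_anti hae x' hy₁pos (min_le_left _ _))
      -- key construction of level points near (q.1, 0)
      have key : ∀ L : ℝ, FF ρ q.1 (3*ε/4) < L → L < z.toReal → ∃ q' : ℝ × ℝ,
          (0 < q'.2 ∧ FF ρ q'.1 q'.2 = L) ∧ |q'.1 - q.1| ≤ ε/8 ∧ q'.2 ≤ 3*ε/4 := by
        intro L hL1 hL2
        by_cases hcol : L ≤ FF ρ q.1 (ε/2)
        · have hcontOn : ContinuousOn (fun y => FF ρ q.1 y) (Icc (ε/2) (3*ε/4)) := by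
            intro y hy'
            have hy'' : 0 < y := by have := hy'.1; linarith
            exact (contY hae q.1 hy''.ne').continuousWithinAt
          obtain ⟨y'', hm, heq⟩ :=
            intermediate_value_Icc' (by linarith : ε/2 ≤ 3*ε/4) hcontOn ⟨hL1.le, hcol⟩
          refine ⟨(q.1, y''), ⟨?_, heq⟩, ?_, hm.2⟩
          · show 0 < y''
            have := hm.1; linarith
          · show |q.1 - q.1| ≤ ε/8
            rw [sub_self, abs_zero]; positivity
        · push_neg at hcol
          by_cases hcol2 : FF ρ x' (ε/2) < L
          · have hcontOn : ContinuousOn (fun y => FF ρ x' y) (Icc y₁ (ε/2)) := by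
              intro y hy'
              have hy'' : 0 < y := by have := hy'.1; linarith
              exact (contY hae x' hy''.ne').continuousWithinAt
            obtain ⟨y'', hm, heq⟩ := intermediate_value_Icc' hy₁le hcontOn
              ⟨hcol2.le, le_of_lt (hL2.trans hy₁F)⟩
            refine ⟨(x', y''), ⟨?_, heq⟩, hx'd.le, ?_⟩
            · show 0 < y''
              have := hm.1; linarith
            · show y'' ≤ 3*ε/4
              have := hm.2; linarith
          · push_neg at hcol2
            have hcontOn : ContinuousOn (fun w => FF ρ w (ε/2)) (uIcc q.1 x') := by
              intro w _
              have h1 : ContinuousAt (fun w : ℝ => ((w, ε/2) : ℝ × ℝ)) w :=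
                (continuous_id.prodMk continuous_const).continuousAt
              have hca : ContinuousAt ((fun p : ℝ × ℝ => FF ρ p.1 p.2) ∘
                  (fun w : ℝ => ((w, ε/2) : ℝ × ℝ))) w :=
                ContinuousAt.comp (FF_contAt hae (w, ε/2)
                  (by show (ε/2:ℝ) ≠ 0; positivity)) h1
              exact hca.continuousWithinAt
            have hmemL : L ∈ uIcc (FF ρ q.1 (ε/2)) (FF ρ x' (ε/2)) :=
              mem_uIcc.mpr (Or.inl ⟨hcol.le, hcol2⟩)
            obtain ⟨x'', hm, heq⟩ := intermediate_value_uIcc hcontOn hmemL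
            refine ⟨(x'', ε/2), ⟨hε2, heq⟩, (uIcc_abs hm).trans hx'd.le, by linarith⟩
      -- eventualities and conclusion
      have hb' : FF ρ q.1 (3*ε/4) < c :=
        lt_of_lt_of_le (FF_strict hae hR.le hρ q.1 hε2 (by linarith)) hF2
      have hev1 : ∀ᶠ n in atTop, FF ρ q.1 (3*ε/4) < cr (φ n) :=
        hcrφ.eventually (eventually_gt_nhds hb')
      have hev2 : ∀ᶠ n in atTop, cr (φ n) < z.toReal :=
        hcrφ.eventually (eventually_lt_nhds hc'gt)
      have hev3 := (habs_ev (ε/32) (by positivity)).1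
      have hev4 : ∀ᶠ n in atTop, (p (φ n)).2 < ε/32 := by
        filter_upwards [(habs_ev (ε/32) (by positivity)).2] with n hn
        rw [hq2, sub_zero, abs_of_pos (hppos n)] at hn
        exact hn
      obtain ⟨qt, hqt1, hqt2, hqt3⟩ := key c hb' hc'gt
      have hqtΓ : qt ∈ graphF ρ t := by
        rw [graphF_char hae hR hρ ht]
        exact hqt1
      filter_upwards [hev1, hev2, hev3, hev4] with n h1 h2 h3 h4
      have hdist : ∀ q' : ℝ × ℝ, |q'.1 - q.1| ≤ ε/8 → 0 < q'.2 → q'.2 ≤ 3*ε/4 →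
          |(p (φ n)).1 - q'.1| + |(p (φ n)).2 - q'.2| < ε := by
        intro q' hq'1 hq'2 hq'3
        have e1 : |(p (φ n)).1 - q'.1| ≤ |(p (φ n)).1 - q.1| + |q.1 - q'.1| :=
          abs_sub_le _ _ _
        have e2 : |q.1 - q'.1| = |q'.1 - q.1| := abs_sub_comm _ _
        have e3 : |(p (φ n)).2 - q'.2| ≤ |(p (φ n)).2| + |q'.2| := abs_sub _ _
        rw [abs_of_pos (hppos n), abs_of_pos hq'2] at e3
        linarith
      constructor
      · exact mem_thick2_of hqtΓ (hdist qt hqt2 hqt1.1 hqt3)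
      · obtain ⟨qr, hqr1, hqr2, hqr3⟩ := key (cr (φ n)) h1 h2
        have hqrΓ : qr ∈ graphF ρ (r (φ n)) := by
          rw [graphF_char hae hR hρ (hr1 (φ n))]
          exact hqr1
        exact mem_thick2_of hqrΓ (hdist qr hqr2 hqr1.1 hqr3)
    · -- interior case : q.2 > 0
      have hcontq := FF_contAt hae q (ne_of_gt hy0)
      have hFq : Tendsto (fun n => ℓ (φ n)) atTop (𝓝 (FF ρ q.1 q.2)) :=
        hcontq.tendsto.comp hconv
      have hFeq : FF ρ q.1 q.2 = c := tendsto_nhds_unique hFq hℓφ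
      have hqΓ : (q.1, q.2) ∈ graphF ρ t :=
        (graphF_char hae hR hρ ht _).mpr ⟨hy0, hFeq⟩
      set η : ℝ := min (q.2/2) (ε/4) with hη
      have hηpos : 0 < η := lt_min (by positivity) (by positivity)
      have hηy : η ≤ q.2/2 := min_le_left _ _
      have hηε : η ≤ ε/4 := min_le_right _ _
      have ha : c < FF ρ q.1 (q.2 - η) := by
        rw [← hFeq]
        exact FF_strict hae hR.le hρ q.1 (by linarith) (by linarith)
      have hb : FF ρ q.1 (q.2 + η) < c := by
        rw [← hFeq]
        exact FF_strict hae hR.le hρ q.1 (by linarith) (by linarith)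
      have hev1 : ∀ᶠ n in atTop, FF ρ q.1 (q.2 + η) < cr (φ n) :=
        hcrφ.eventually (eventually_gt_nhds hb)
      have hev2 : ∀ᶠ n in atTop, cr (φ n) < FF ρ q.1 (q.2 - η) :=
        hcrφ.eventually (eventually_lt_nhds ha)
      have hev3 := (habs_ev (ε/4) (by positivity)).1
      have hev4 := (habs_ev (ε/4) (by positivity)).2
      filter_upwards [hev1, hev2, hev3, hev4] with n h1 h2 h3 h4
      constructor
      · apply mem_thick2_of hqΓ
        simp only
        linarith
      · have hcontOn : ContinuousOn (fun y => FF ρ q.1 y) (Icc (q.2 - η) (q.2 + η)) := by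
          intro y hy'
          have : 0 < y := by have := hy'.1; linarith
          exact (contY hae q.1 this.ne').continuousWithinAt
        have hIvt := intermediate_value_Icc' (by linarith : q.2 - η ≤ q.2 + η) hcontOn
        have hmem : cr (φ n) ∈ Icc (FF ρ q.1 (q.2+η)) (FF ρ q.1 (q.2-η)) := ⟨h1.le, h2.le⟩
        obtain ⟨y'', hy''m, hy''eq⟩ := hIvt hmem
        have hy''pos : 0 < y'' := by have := hy''m.1; linarith
        have hmem2 : (q.1, y'') ∈ graphF ρ (r (φ n)) :=
          (graphF_char hae hR hρ (hr1 (φ n)) _).mpr ⟨hy''pos, hy''eq⟩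
        apply mem_thick2_of hmem2
        simp only
        have hyd : |(p (φ n)).2 - y''| ≤ |(p (φ n)).2 - q.2| + |q.2 - y''| := by
          have := abs_sub_le ((p (φ n)).2) q.2 y''
          linarith
        have : |q.2 - y''| ≤ η := by
          rw [abs_le]; constructor
          · have := hy''m.2; linarith
          · have := hy''m.1; linarith
        linarith
  obtain ⟨n, hn⟩ := main.exists
  rcases hp (φ n) with ⟨_, hfar⟩ | ⟨_, hfar⟩
  · exact hfar hn.1
  · exact hfar hn.2
end

section
/- If t > 1 and x ∈ ℝ satisfies g(x) = 1/(t−1), then f_t(x) = 0 and x belongs to the closure of V_t⁺. -/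
open MeasureTheory Set

lemma gFn_meas_s17 (x' : ℝ) :
    Measurable fun s : ℝ => ENNReal.ofReal (s ^ 2 + 1) / ENNReal.ofReal ((x' - s) ^ 2) := by
  apply Measurable.div <;> apply Measurable.ennreal_ofReal <;> fun_prop

lemma fFn_eq_zero (ρ : Measure ℝ) [IsFiniteMeasure ρ] (t x : ℝ) (ht : 1 < t)
    (hx : gFn ρ x = ENNReal.ofReal (1 / (t - 1))) : fFn ρ t x = 0 := by
  have ht0 : 0 < t - 1 := by linarith
  have ht1 : 0 < 1 / (t - 1) := by positivity
  have hall : ∀ y : ℝ, 0 < y → (∫ s, (s ^ 2 + 1) / ((x - s) ^ 2 + y ^ 2) ∂ρ) ≤ 1 / (t - 1) := by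
    intro y hy
    set F : ℝ → ℝ := fun s => (s ^ 2 + 1) / ((x - s) ^ 2 + y ^ 2) with hF
    have hFc : Continuous F := by
      apply Continuous.div (by fun_prop) (by fun_prop)
      intro s; positivity
    have hFnn : ∀ s, 0 ≤ F s := fun s => by rw [hF]; positivity
    have hle : ∫⁻ s, ENNReal.ofReal (F s) ∂ρ ≤ gFn ρ x := by
      apply lintegral_mono
      intro s
      dsimp only
      by_cases hxs : (x - s) ^ 2 = 0
      · rw [hxs, ENNReal.ofReal_zero,
          ENNReal.div_zero ((ENNReal.ofReal_pos.mpr (by positivity : (0:ℝ) < s ^ 2 + 1)).ne')]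
        exact le_top
      · have hpos : 0 < (x - s) ^ 2 := lt_of_le_of_ne (sq_nonneg _) (Ne.symm hxs)
        rw [ENNReal.ofReal_div_of_pos (by positivity)]
        exact ENNReal.div_le_div (le_refl _)
          (ENNReal.ofReal_le_ofReal (by nlinarith [sq_nonneg y]))
    rw [integral_eq_lintegral_of_nonneg_ae (Filter.Eventually.of_forall hFnn)
      hFc.aestronglyMeasurable]
    calc (∫⁻ s, ENNReal.ofReal (F s) ∂ρ).toReal
        ≤ (ENNReal.ofReal (1 / (t - 1))).toReal :=
          ENNReal.toReal_mono (by simp) (hx ▸ hle)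
      _ = 1 / (t - 1) := ENNReal.toReal_ofReal ht1.le
  have hset : {y : ℝ | 0 < y ∧ (∫ s, (s ^ 2 + 1) / ((x - s) ^ 2 + y ^ 2) ∂ρ) ≤ 1 / (t - 1)}
      = Ioi 0 := by
    ext y
    simp only [mem_setOf_eq, mem_Ioi]
    exact ⟨fun h => h.1, fun h => ⟨h, hall y h⟩⟩
  unfold fFn
  rw [hset, csInf_Ioi]

-- real inequality for case 2
lemma real_ineq_s17 (S h a R : ℝ) (hS : 0 ≤ S) (hh : 0 < h) (hha : h < |a|) (haR : |a| ≤ R) :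
    2 * (1 + h ^ 2 / R ^ 2) * ((S + 1) / a ^ 2) ≤ (S + 1) / (a + h) ^ 2 + (S + 1) / (a - h) ^ 2 := by
  have hR : 0 < R := lt_of_lt_of_le (lt_of_lt_of_le hh hha.le) haR
  have hh2 : h ^ 2 < a ^ 2 := by
    have := sq_abs a
    nlinarith [abs_nonneg a]
  have ha2R : a ^ 2 ≤ R ^ 2 := by
    have := sq_abs a
    nlinarith [abs_nonneg a]
  have e1 : (0:ℝ) < (a + h) ^ 2 * ((a - h) ^ 2) := by nlinarith
  have e1a : (0:ℝ) < (a + h) ^ 2 := by nlinarith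
  have e1b : (0:ℝ) < (a - h) ^ 2 := by nlinarith
  have e3 : (0:ℝ) < a ^ 2 := by nlinarith
  have e4 : (0:ℝ) < R ^ 2 := by positivity
  rw [div_add_div _ _ e1a.ne' e1b.ne']
  rw [show 2 * (1 + h ^ 2 / R ^ 2) * ((S + 1) / a ^ 2)
      = (2 * (R ^ 2 + h ^ 2) * (S + 1)) / (R ^ 2 * a ^ 2) by field_simp]
  rw [div_le_div_iff₀ (by positivity) e1]
  have k1 : (0:ℝ) ≤ a ^ 2 - h ^ 2 := by nlinarith
  have c1 : (R ^ 2 + h ^ 2) * ((a ^ 2 - h ^ 2) ^ 2) ≤ (a ^ 2 + h ^ 2) * R ^ 2 * a ^ 2 := by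
    have t1 : (a ^ 2 - h ^ 2) ^ 2 ≤ (a ^ 2 - h ^ 2) * a ^ 2 := by nlinarith
    have t2 : (R ^ 2 + h ^ 2) * (a ^ 2 - h ^ 2) ≤ (a ^ 2 + h ^ 2) * R ^ 2 := by nlinarith
    calc (R ^ 2 + h ^ 2) * ((a ^ 2 - h ^ 2) ^ 2)
        ≤ (R ^ 2 + h ^ 2) * ((a ^ 2 - h ^ 2) * a ^ 2) := by nlinarith
      _ = ((R ^ 2 + h ^ 2) * (a ^ 2 - h ^ 2)) * a ^ 2 := by ring
      _ ≤ (a ^ 2 + h ^ 2) * R ^ 2 * a ^ 2 := by nlinarith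
  nlinarith [mul_le_mul_of_nonneg_left c1 (by positivity : (0:ℝ) ≤ 2 * (S + 1))]

lemma bisect (ρ : Measure ℝ) [IsFiniteMeasure ρ] (a b : ℝ) (hab : a ≤ b) (k : ℕ) :
    ∃ a', a ≤ a' ∧ a' + (b - a) / 2 ^ k ≤ b ∧
      ρ (Icc a b) / 2 ^ k ≤ ρ (Icc a' (a' + (b - a) / 2 ^ k)) := by
  induction k with
  | zero =>
    exact ⟨a, le_refl a, by simp, by simp⟩
  | succ k ih =>
    obtain ⟨a', h1, h2, h3⟩ := ih
    set L : ℝ := (b - a) / 2 ^ k with hL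
    have hL0 : 0 ≤ L := div_nonneg (by linarith) (by positivity)
    have hhalf : (b - a) / 2 ^ (k + 1) = L / 2 := by rw [hL]; ring
    have hmid : a' ≤ a' + L / 2 := by linarith
    have hmid2 : a' + L / 2 ≤ a' + L := by linarith
    have hsplit : Icc a' (a' + L) = Icc a' (a' + L / 2) ∪ Icc (a' + L / 2) (a' + L) :=
      (Icc_union_Icc_eq_Icc hmid hmid2).symm
    have hsum : ρ (Icc a' (a' + L)) ≤ ρ (Icc a' (a' + L / 2)) + ρ (Icc (a' + L / 2) (a' + L)) := by
      rw [hsplit]; exact measure_union_le _ _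
    have hkey : ρ (Icc a b) / 2 ^ k / 2 ≤ ρ (Icc a' (a' + L / 2)) ∨
        ρ (Icc a b) / 2 ^ k / 2 ≤ ρ (Icc (a' + L / 2) (a' + L)) := by
      by_contra hcon
      push_neg at hcon
      have hlt := ENNReal.add_lt_add hcon.1 hcon.2
      rw [ENNReal.add_halves] at hlt
      exact absurd (h3.trans hsum) (not_le.mpr hlt)
    have hdiv : ρ (Icc a b) / 2 ^ (k + 1) = ρ (Icc a b) / 2 ^ k / 2 := by
      rw [pow_succ, div_eq_mul_inv, div_eq_mul_inv, div_eq_mul_inv,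
        ENNReal.mul_inv (Or.inl (by simp)) (Or.inl (by simp)), mul_assoc]
    rcases hkey with h | h
    · exact ⟨a', h1, by rw [hhalf]; linarith, by rw [hhalf, hdiv]; exact h⟩
    · refine ⟨a' + L / 2, by linarith, ?_, ?_⟩
      · rw [hhalf]; linarith
      · rw [hhalf, hdiv]
        have : a' + L / 2 + L / 2 = a' + L := by ring
        rw [this]; exact h

lemma exists_large (ρ : Measure ℝ) [IsFiniteMeasure ρ] (x ε : ℝ) (hε : 0 < ε)
    (hm : ρ (Icc (x - ε) (x + ε)) ≠ 0) (C : ℝ) (hC : 0 < C) :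
    ∃ x', |x - x'| ≤ ε ∧ ENNReal.ofReal C < gFn ρ x' := by
  have hab : x - ε ≤ x + ε := by linarith
  set m := ρ (Icc (x - ε) (x + ε)) with hmdef
  have hmtop : m ≠ ⊤ := measure_ne_top ρ _
  set mr := m.toReal with hmr
  have hmr0 : 0 < mr := ENNReal.toReal_pos hm hmtop
  obtain ⟨n, hn⟩ := exists_nat_gt (C * (2 * ε) ^ 2 / mr)
  have h2n : (n : ℝ) < 2 ^ n := by exact_mod_cast Nat.lt_two_pow_self
  have hn' : C * (2 * ε) ^ 2 / mr < 2 ^ n := hn.trans h2n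
  obtain ⟨a', h1, h2, h3⟩ := bisect ρ (x - ε) (x + ε) hab n
  have hsub : x + ε - (x - ε) = 2 * ε := by ring
  rw [hsub] at h2 h3
  set L : ℝ := 2 * ε / 2 ^ n with hL
  have hL0 : 0 < L := by positivity
  refine ⟨a', by rw [abs_le]; constructor <;> linarith, ?_⟩
  -- pointwise bound on the small interval
  have hpt : ∀ s ∈ Icc a' (a' + L),
      (ENNReal.ofReal (L ^ 2))⁻¹ ≤ ENNReal.ofReal (s ^ 2 + 1) / ENNReal.ofReal ((a' - s) ^ 2) := by
    intro s hs
    rw [mem_Icc] at hs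
    have : (ENNReal.ofReal (L ^ 2))⁻¹ = ENNReal.ofReal 1 / ENNReal.ofReal (L ^ 2) := by
      rw [ENNReal.ofReal_one, one_div]
    rw [this]
    exact ENNReal.div_le_div (ENNReal.ofReal_le_ofReal (by nlinarith))
      (ENNReal.ofReal_le_ofReal (by nlinarith [hs.1, hs.2]))
  have hchain : (ENNReal.ofReal (L ^ 2))⁻¹ * (m / 2 ^ n) ≤ gFn ρ a' := by
    calc (ENNReal.ofReal (L ^ 2))⁻¹ * (m / 2 ^ n)
        ≤ (ENNReal.ofReal (L ^ 2))⁻¹ * ρ (Icc a' (a' + L)) := by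
          exact mul_le_mul_right h3 _
      _ = ∫⁻ _ in Icc a' (a' + L), (ENNReal.ofReal (L ^ 2))⁻¹ ∂ρ := by
          rw [setLIntegral_const]
      _ ≤ ∫⁻ s in Icc a' (a' + L),
            ENNReal.ofReal (s ^ 2 + 1) / ENNReal.ofReal ((a' - s) ^ 2) ∂ρ := by
          apply setLIntegral_mono (gFn_meas_s17 a') hpt
      _ ≤ gFn ρ a' := setLIntegral_le_lintegral _ _
  refine lt_of_lt_of_le ?_ hchain
  have e1 : (ENNReal.ofReal (L ^ 2))⁻¹ = ENNReal.ofReal ((L ^ 2)⁻¹) :=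
    (ENNReal.ofReal_inv_of_pos (by positivity)).symm
  have e2 : m / 2 ^ n = ENNReal.ofReal (mr / 2 ^ n) := by
    rw [ENNReal.ofReal_div_of_pos (by positivity), ENNReal.ofReal_toReal hmtop]
    congr 1
    rw [ENNReal.ofReal_pow (by norm_num)]
    norm_num
  rw [e1, e2, ← ENNReal.ofReal_mul (by positivity)]
  rw [ENNReal.ofReal_lt_ofReal_iff (by positivity)]
  rw [hL]
  rw [show ((2 * ε / 2 ^ n) ^ 2)⁻¹ * (mr / 2 ^ n) = mr * 2 ^ n / (2 * ε) ^ 2 by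
    field_simp]
  rw [lt_div_iff₀ (by positivity)]
  rw [div_lt_iff₀ hmr0] at hn'
  nlinarith

lemma exists_near (ρ : Measure ℝ) [IsFiniteMeasure ρ]
    (K : Set ℝ) (hK : IsCompact K) (hρK : ρ Kᶜ = 0)
    (x ε₀ : ℝ) (hε₀ : 0 < ε₀) (h0 : ρ (Icc (x - ε₀) (x + ε₀)) = 0)
    (t : ℝ) (ht : 1 < t) (hx : gFn ρ x = ENNReal.ofReal (1 / (t - 1)))
    (ε : ℝ) (hε : 0 < ε) :
    ∃ x', |x - x'| < ε ∧ ENNReal.ofReal (1 / (t - 1)) < gFn ρ x' := by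
  have ht0 : 0 < t - 1 := by linarith
  obtain ⟨R₀, hR₀⟩ := hK.isBounded.subset_closedBall 0
  set R : ℝ := |x| + |R₀| + 1 with hRdef
  have hR : 0 < R := by positivity
  set h : ℝ := min ε ε₀ / 2 with hhdef
  have hh0 : 0 < h := by rw [hhdef]; positivity
  have hhε : h < ε := by
    have : min ε ε₀ ≤ ε := min_le_left _ _
    rw [hhdef]; linarith
  have hhε₀ : h < ε₀ := by
    have : min ε ε₀ ≤ ε₀ := min_le_right _ _
    rw [hhdef]; linarith
  have haeK : ∀ᵐ s ∂ρ, s ∈ K := by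
    rw [ae_iff]; exact hρK
  have hae0 : ∀ᵐ s ∂ρ, s ∉ Icc (x - ε₀) (x + ε₀) := by
    have e : {a : ℝ | ¬ a ∉ Icc (x - ε₀) (x + ε₀)} = Icc (x - ε₀) (x + ε₀) := by
      ext a; simp
    rw [ae_iff, e]; exact h0
  have hptwise : ∀ᵐ s ∂ρ,
      ENNReal.ofReal (2 * (1 + h ^ 2 / R ^ 2)) *
        (ENNReal.ofReal (s ^ 2 + 1) / ENNReal.ofReal ((x - s) ^ 2)) ≤
      ENNReal.ofReal (s ^ 2 + 1) / ENNReal.ofReal ((x + h - s) ^ 2) +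
        ENNReal.ofReal (s ^ 2 + 1) / ENNReal.ofReal ((x - h - s) ^ 2) := by
    filter_upwards [haeK, hae0] with s hsK hs0
    have hsR : |s| ≤ |R₀| := by
      have hb := hR₀ hsK
      rw [Metric.mem_closedBall, Real.dist_eq] at hb
      simp only [sub_zero] at hb
      exact hb.trans (le_abs_self R₀)
    have habs : ε₀ < |x - s| := by
      rw [mem_Icc, not_and_or] at hs0
      rcases hs0 with hl | hr
      · push_neg at hl
        rw [lt_abs]; left; linarith
      · push_neg at hr
        rw [lt_abs]; right; linarith
    have haR : |x - s| ≤ R := by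
      have t1 := abs_sub_le x 0 s
      simp only [sub_zero, zero_sub, abs_neg] at t1
      rw [hRdef]; linarith
    have hha : h < |x - s| := lt_trans hhε₀ habs
    have hne : x - s ≠ 0 := by
      intro hc; rw [hc, abs_zero] at hha; linarith
    have hxs : 0 < (x - s) ^ 2 := by positivity
    have hne1 : x + h - s ≠ 0 := by
      intro hc
      have hc' : x - s = -h := by linarith
      rw [hc', abs_neg, abs_of_pos hh0] at hha
      linarith
    have hne2 : x - h - s ≠ 0 := by
      intro hc
      have hc' : x - s = h := by linarith
      rw [hc', abs_of_pos hh0] at hha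
      linarith
    have p1 : 0 < (x + h - s) ^ 2 := by positivity
    have p2 : 0 < (x - h - s) ^ 2 := by positivity
    rw [← ENNReal.ofReal_div_of_pos hxs, ← ENNReal.ofReal_div_of_pos p1,
      ← ENNReal.ofReal_div_of_pos p2, ← ENNReal.ofReal_mul (by positivity),
      ← ENNReal.ofReal_add (by positivity) (by positivity)]
    apply ENNReal.ofReal_le_ofReal
    have key := real_ineq_s17 (s ^ 2) h (x - s) R (sq_nonneg s) hh0 hha haR
    have e1 : x + h - s = (x - s) + h := by ring
    have e2 : x - h - s = (x - s) - h := by ring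
    rw [e1, e2]
    exact key
  have hkey : ENNReal.ofReal (2 * (1 + h ^ 2 / R ^ 2)) * gFn ρ x ≤
      gFn ρ (x + h) + gFn ρ (x - h) := by
    have hl := lintegral_mono_ae hptwise
    rwa [lintegral_const_mul _ (gFn_meas_s17 x), lintegral_add_left (gFn_meas_s17 (x + h))] at hl
  set C := ENNReal.ofReal (1 / (t - 1)) with hCdef
  have hC0 : C ≠ 0 := (ENNReal.ofReal_pos.mpr (by positivity)).ne'
  have hCt : C ≠ ⊤ := ENNReal.ofReal_ne_top
  have h2C : 2 * C < ENNReal.ofReal (2 * (1 + h ^ 2 / R ^ 2)) * C := by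
    apply (ENNReal.mul_lt_mul_iff_left hC0 hCt).mpr
    rw [show (2 : ENNReal) = ENNReal.ofReal 2 by norm_num]
    rw [ENNReal.ofReal_lt_ofReal_iff (by positivity)]
    have : 0 < h ^ 2 / R ^ 2 := by positivity
    linarith
  have hcases : C < gFn ρ (x + h) ∨ C < gFn ρ (x - h) := by
    by_contra hcon
    push_neg at hcon
    have hsum : gFn ρ (x + h) + gFn ρ (x - h) ≤ 2 * C := by
      rw [two_mul]; exact add_le_add hcon.1 hcon.2
    rw [hx] at hkey
    exact absurd (hkey.trans hsum) (not_le.mpr h2C)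
  rcases hcases with hc | hc
  · exact ⟨x + h, by rw [show x - (x + h) = -h by ring, abs_neg, abs_of_pos hh0]; exact hhε, hc⟩
  · exact ⟨x - h, by rw [show x - (x - h) = h by ring, abs_of_pos hh0]; exact hhε, hc⟩

/-- if `g(x) = 1/(t−1)` then `f_t(x) = 0` and `x` lies in the closure
of `V_t⁺`. -/
theorem boundary_point_in_closure (ρ : Measure ℝ) [IsFiniteMeasure ρ] (hρ : ρ ≠ 0)
    (K : Set ℝ) (hK : IsCompact K) (hρK : ρ Kᶜ = 0)
    (t : ℝ) (ht : 1 < t) (x : ℝ) (hx : gFn ρ x = ENNReal.ofReal (1 / (t - 1))) :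
    fFn ρ t x = 0 ∧ x ∈ closure (Vplus ρ t) := by
  constructor
  · exact fFn_eq_zero ρ t x ht hx
  · rw [Metric.mem_closure_iff]
    intro ε hε
    by_cases hmass : ρ (Set.Icc (x - ε / 2) (x + ε / 2)) = 0
    · obtain ⟨x', hd, hg⟩ := exists_near ρ K hK hρK x (ε / 2) (by positivity) hmass t ht hx ε hε
      exact ⟨x', hg, by rwa [Real.dist_eq]⟩
    · obtain ⟨x', hd, hg⟩ := exists_large ρ x (ε / 2) (by positivity) hmass (1 / (t - 1))
        (one_div_pos.mpr (by linarith))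
      refine ⟨x', hg, ?_⟩
      rw [Real.dist_eq]
      linarith
end
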